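/- arXiv:2302.03400 — 6 statements merged into one kernel-verified Lean document; each statement's English description precedes it below -/
import Mathlib

section
/- Let (X,B,μ) be a standard non-atomic probability space, T an invertible ergodic measure-preserving transformation of X, and f ∈ L¹(μ) with ∫ f dμ = 0. Fix any strictly increasing sequence (L_m) of positive integers. Then there exists a subsequence (L_{m_n}) such that for every sequence of integers (v_n), the moving averages M(v_n, L_{m_n})^T f(x) = (1/L_{m_n}) Σ_{i=v_n+1}^{v_n+L_{m_n}} f(T^i x) converge to 0 for μ-almost every x ∈ X. -/
open MeasureTheory Filter
open scoped ENNReal Topology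

/-- Moving average `M(v,L)^T f (x) = (1/L) ∑_{i=v+1}^{v+L} f(T^i x)`. -/
noncomputable def movAvg {X : Type*} (T : Equiv.Perm X) (f : X → ℝ) (v : ℤ) (L : ℕ)
    (x : X) : ℝ :=
  (L : ℝ)⁻¹ * ∑ i ∈ Finset.range L, f ((T ^ (v + 1 + (i : ℤ))) x)

set_option linter.unusedSectionVars false
set_option linter.unusedVariables false

section aux
variable {X : Type*} [MeasurableSpace X] {μ : Measure X}

variable {X : Type*} [MeasurableSpace X] {μ : Measure X}

/-- Powers (including negative) of an invertible m.p. transformation are m.p. -/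
lemma mp_zpow (T : Equiv.Perm X) (hT' : Measurable (⇑T.symm))
    (hTmp : MeasurePreserving (⇑T) μ μ) (c : ℤ) : MeasurePreserving (⇑(T ^ c)) μ μ := by
  have e : X ≃ᵐ X := ⟨T, hTmp.measurable, hT'⟩
  have hsymm : MeasurePreserving (⇑T.symm) μ μ :=
    (MeasurePreserving.symm (⟨T, hTmp.measurable, hT'⟩ : X ≃ᵐ X) hTmp)
  induction c using Int.induction_on with
  | zero => simpa using MeasurePreserving.id μ
  | succ i ih =>
      have : (T ^ ((i : ℤ) + 1)) = T ^ (i : ℤ) * T := by rw [zpow_add_one]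
      rw [this]
      simpa [Equiv.Perm.coe_mul] using ih.comp hTmp
  | pred i ih =>
      have : (T ^ (-(i : ℤ) - 1)) = T ^ (-(i : ℤ)) * T⁻¹ := by rw [zpow_sub_one]
      rw [this]
      have hinv : (⇑(T⁻¹ : Equiv.Perm X)) = ⇑T.symm := rfl
      simpa [Equiv.Perm.coe_mul, hinv] using ih.comp hsymm

lemma movAvg_eq_birkhoff (T : Equiv.Perm X) (f : X → ℝ) (v : ℤ) (L : ℕ) (x : X) :
    movAvg T f v L x = birkhoffAverage ℝ (⇑T) f L ((T ^ (v + 1)) x) := by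
  rw [movAvg, birkhoffAverage, birkhoffSum, smul_eq_mul]
  congr 1
  refine Finset.sum_congr rfl fun i _ => ?_
  congr 1
  rw [Equiv.Perm.iterate_eq_pow, ← Equiv.Perm.mul_apply, ← zpow_natCast, ← zpow_add]
  congr 1
  ring


variable {X : Type*} [MeasurableSpace X] {μ : Measure X} {p : ℝ≥0∞}

lemma coeFn_iterate (T : X → X) (hTmp : MeasurePreserving T μ μ)
    (Φ : Lp ℝ p μ → Lp ℝ p μ) (hΦ : ∀ G : Lp ℝ p μ, ⇑(Φ G) =ᵐ[μ] ⇑G ∘ T)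
    (F : Lp ℝ p μ) : ∀ n, ⇑(Φ^[n] F) =ᵐ[μ] ⇑F ∘ T^[n] := by
  intro n
  induction n with
  | zero => simp
  | succ n ih =>
      rw [Function.iterate_succ_apply' Φ n F]
      refine (hΦ _).trans ?_
      have h2 : (⇑(Φ^[n] F)) ∘ T =ᵐ[μ] (⇑F ∘ T^[n]) ∘ T :=
        hTmp.quasiMeasurePreserving.ae_eq_comp ih
      refine h2.trans ?_
      rw [Function.iterate_succ T n, Function.comp_assoc]

lemma coeFn_birkhoffSum (T : X → X) (hTmp : MeasurePreserving T μ μ)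
    (Φ : Lp ℝ p μ → Lp ℝ p μ) (hΦ : ∀ G : Lp ℝ p μ, ⇑(Φ G) =ᵐ[μ] ⇑G ∘ T)
    (F : Lp ℝ p μ) : ∀ n, ⇑(birkhoffSum Φ id n F) =ᵐ[μ] birkhoffSum T (⇑F) n := by
  intro n
  induction n with
  | zero => simpa [birkhoffSum] using Lp.coeFn_zero (E:=ℝ) (p:=p) (μ:=μ)
  | succ n ih =>
      have h1 : birkhoffSum Φ id (n+1) F = birkhoffSum Φ id n F + Φ^[n] F :=
        birkhoffSum_succ Φ id n F
      have h2 : birkhoffSum T (⇑F) (n+1) = birkhoffSum T (⇑F) n + ⇑F ∘ T^[n] := by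
        funext x; exact birkhoffSum_succ T (⇑F) n x
      rw [h1, h2]
      filter_upwards [Lp.coeFn_add (birkhoffSum Φ id n F) (Φ^[n] F), ih,
        coeFn_iterate T hTmp Φ hΦ F n] with x hx h1x h2x
      simp only [Pi.add_apply, Function.comp_apply] at *
      rw [hx, h1x, h2x]

lemma coeFn_birkhoffAverage [Fact (1 ≤ p)] (T : X → X) (hTmp : MeasurePreserving T μ μ)
    (Φ : Lp ℝ p μ → Lp ℝ p μ) (hΦ : ∀ G : Lp ℝ p μ, ⇑(Φ G) =ᵐ[μ] ⇑G ∘ T)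
    (F : Lp ℝ p μ) (n : ℕ) :
    ⇑(birkhoffAverage ℝ Φ id n F) =ᵐ[μ] birkhoffAverage ℝ T (⇑F) n := by
  rw [birkhoffAverage]
  filter_upwards [Lp.coeFn_smul ((n : ℝ)⁻¹) (birkhoffSum Φ id n F),
    coeFn_birkhoffSum T hTmp Φ hΦ F n] with x hx h1x
  simp only [Pi.smul_apply] at *
  rw [hx, h1x]; rfl

lemma birkhoffAverage_ae_congr (T : X → X) (hTmp : MeasurePreserving T μ μ)
    {g₁ g₂ : X → ℝ} (h : g₁ =ᵐ[μ] g₂) (n : ℕ) :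
    birkhoffAverage ℝ T g₁ n =ᵐ[μ] birkhoffAverage ℝ T g₂ n := by
  have hsum : ∀ m, birkhoffSum T g₁ m =ᵐ[μ] birkhoffSum T g₂ m := by
    intro m
    induction m with
    | zero => simp [birkhoffSum]
    | succ m ih =>
        have h2 : g₁ ∘ T^[m] =ᵐ[μ] g₂ ∘ T^[m] :=
          (hTmp.iterate m).quasiMeasurePreserving.ae_eq_comp h
        filter_upwards [ih, h2] with x hx h2x
        have e1 := birkhoffSum_succ T g₁ m x
        have e2 := birkhoffSum_succ T g₂ m x
        simp only [Function.comp_apply] at h2x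
        rw [e1, e2, hx, h2x]
  filter_upwards [hsum n] with x hx
  simp only [birkhoffAverage, hx]

lemma eLpNorm_coeFn_eq (G : Lp ℝ p μ) : eLpNorm (⇑G) p μ = ENNReal.ofReal ‖G‖ := by
  rw [Lp.norm_def, ENNReal.ofReal_toReal (Lp.eLpNorm_ne_top G)]


variable [IsProbabilityMeasure μ]

set_option synthInstance.maxHeartbeats 1000000 in
set_option maxHeartbeats 1000000 in
/-- Mean ergodic theorem in `L¹`: the `L¹` norms of the Birkhoff averages of a mean-zero
integrable function tend to zero. -/
lemma meanErgodicL1 (T : Equiv.Perm X) (hTerg : Ergodic (⇑T) μ)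
    (f : X → ℝ) (hf : Integrable f μ) (hf0 : ∫ x, f x ∂μ = 0) :
    Tendsto (fun n => eLpNorm (birkhoffAverage ℝ (⇑T) f n) 1 μ) atTop (𝓝 0) := by
  have hTmp : MeasurePreserving (⇑T) μ μ := hTerg.toMeasurePreserving
  set U₁ : Lp ℝ 1 μ →ₗᵢ[ℝ] Lp ℝ 1 μ := Lp.compMeasurePreservingₗᵢ ℝ (⇑T) hTmp with hU₁
  have hΦ₁ : ∀ G : Lp ℝ 1 μ, ⇑(U₁ G) =ᵐ[μ] ⇑G ∘ (⇑T) := fun G =>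
    Lp.coeFn_compMeasurePreserving G hTmp
  set S : Set (Lp ℝ 1 μ) :=
    {F | Tendsto (birkhoffAverage ℝ (⇑U₁) id · F) atTop (𝓝 0)} with hS
  have hSclosed : IsClosed S := by
    have := isClosed_setOf_tendsto_birkhoffAverage ℝ (f := ⇑U₁)
      (g := (id : Lp ℝ 1 μ → Lp ℝ 1 μ)) (l := fun _ => (0 : Lp ℝ 1 μ))
      U₁.lipschitz uniformContinuous_id continuous_const
    simpa using this
  -- L² mean-zero functions are in S
  have key2 : ∀ G : Lp ℝ 1 μ, (∃ g : X → ℝ, MemLp g 2 μ ∧ ⇑G =ᵐ[μ] g) →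
      ∫ x, G x ∂μ = 0 → G ∈ S := by
    rintro G ⟨g, hg2, hGg⟩ hG0
    have hg0 : ∫ x, g x ∂μ = 0 := by rw [← integral_congr_ae hGg, hG0]
    set W : Lp ℝ 2 μ := hg2.toLp g with hW
    set U₂ := (Lp.compMeasurePreservingₗᵢ ℝ (⇑T) hTmp :
        Lp ℝ 2 μ →ₗᵢ[ℝ] Lp ℝ 2 μ).toContinuousLinearMap with hU₂
    have hΦ₂ : ∀ G : Lp ℝ 2 μ, ⇑(U₂ G) =ᵐ[μ] ⇑G ∘ (⇑T) := fun G =>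
      Lp.coeFn_compMeasurePreserving G hTmp
    have htendW := U₂.tendsto_birkhoffAverage_orthogonalProjection
      (LinearIsometry.norm_toContinuousLinearMap_le _) W
    have hproj : Submodule.orthogonalProjectionOnto (U₂.eqLocus (1 : Lp ℝ 2 μ →L[ℝ] Lp ℝ 2 μ)) W = 0 := by
      apply Submodule.orthogonalProjectionOnto_apply_of_mem_orthogonal
      rw [Submodule.mem_orthogonal]
      intro u hu
      have huu : U₂ u = u := LinearMap.mem_eqLocus.mp hu
      have hinv : (⇑u) ∘ (⇑T) =ᵐ[μ] ⇑u := by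
        refine ((hΦ₂ u).symm.trans ?_)
        rw [huu]
      obtain ⟨c, hc⟩ := hTerg.ae_eq_const_of_ae_eq_comp₀
        ((Lp.aestronglyMeasurable u).aemeasurable.nullMeasurable) hinv
      have : (inner ℝ u W : ℝ) = ∫ x, u x * W x ∂μ := by
        rw [L2.inner_def]; simp [RCLike.inner_apply, mul_comm]
      rw [this]
      have heq : (fun x => u x * W x) =ᵐ[μ] fun x => c * g x := by
        filter_upwards [hc, (MemLp.coeFn_toLp hg2)] with x hx hWx
        rw [hx, hWx]; rfl
      rw [integral_congr_ae heq, integral_const_mul, hg0, mul_zero]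
    rw [hproj] at htendW
    have htendW0 : Tendsto (birkhoffAverage ℝ (⇑U₂) id · W) atTop (𝓝 0) := by
      simpa using htendW
    have hnorm2 : Tendsto (fun n => ‖birkhoffAverage ℝ (⇑U₂) id n W‖) atTop (𝓝 0) := by
      simpa using htendW0.norm
    -- compare norms
    have hle : ∀ n, ‖birkhoffAverage ℝ (⇑U₁) id n G‖ ≤ ‖birkhoffAverage ℝ (⇑U₂) id n W‖ := by
      intro n
      have e1 : eLpNorm (⇑(birkhoffAverage ℝ (⇑U₁) id n G)) 1 μ
          = eLpNorm (birkhoffAverage ℝ (⇑T) g n) 1 μ := by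
        refine eLpNorm_congr_ae (((coeFn_birkhoffAverage (⇑T) hTmp (⇑U₁) hΦ₁ G n)).trans ?_)
        exact birkhoffAverage_ae_congr (⇑T) hTmp hGg n
      have e2 : eLpNorm (⇑(birkhoffAverage ℝ (⇑U₂) id n W)) 2 μ
          = eLpNorm (birkhoffAverage ℝ (⇑T) g n) 2 μ := by
        refine eLpNorm_congr_ae (((coeFn_birkhoffAverage (⇑T) hTmp (⇑U₂) hΦ₂ W n)).trans ?_)
        exact birkhoffAverage_ae_congr (⇑T) hTmp (MemLp.coeFn_toLp hg2) n
      have hmeas : AEStronglyMeasurable (birkhoffAverage ℝ (⇑T) g n) μ := by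
        exact ((Lp.aestronglyMeasurable (birkhoffAverage ℝ (⇑U₂) id n W)).congr
          (((coeFn_birkhoffAverage (⇑T) hTmp (⇑U₂) hΦ₂ W n)).trans
            (birkhoffAverage_ae_congr (⇑T) hTmp (MemLp.coeFn_toLp hg2) n)))
      have hcomp : eLpNorm (birkhoffAverage ℝ (⇑T) g n) 1 μ
          ≤ eLpNorm (birkhoffAverage ℝ (⇑T) g n) 2 μ :=
        eLpNorm_le_eLpNorm_of_exponent_le (by norm_num) hmeas
      have : eLpNorm (⇑(birkhoffAverage ℝ (⇑U₁) id n G)) 1 μ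
          ≤ ENNReal.ofReal ‖birkhoffAverage ℝ (⇑U₂) id n W‖ := by
        rw [e1, ← eLpNorm_coeFn_eq (birkhoffAverage ℝ (⇑U₂) id n W), ← e2] at *
        exact hcomp
      calc ‖birkhoffAverage ℝ (⇑U₁) id n G‖
          = (eLpNorm (⇑(birkhoffAverage ℝ (⇑U₁) id n G)) 1 μ).toReal := Lp.norm_def _
        _ ≤ (ENNReal.ofReal ‖birkhoffAverage ℝ (⇑U₂) id n W‖).toReal :=
            ENNReal.toReal_mono ENNReal.ofReal_ne_top this
        _ = ‖birkhoffAverage ℝ (⇑U₂) id n W‖ := ENNReal.toReal_ofReal (norm_nonneg _)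
    have : Tendsto (fun n => ‖birkhoffAverage ℝ (⇑U₁) id n G‖) atTop (𝓝 0) :=
      squeeze_zero (fun n => norm_nonneg _) hle hnorm2
    exact tendsto_zero_iff_norm_tendsto_zero.mpr this
  -- density: every mean-zero element of L¹ lies in S
  have hZS : ∀ G : Lp ℝ 1 μ, ∫ x, G x ∂μ = 0 → G ∈ S := by
    intro G hG0
    set D : Set (Lp ℝ 1 μ) :=
      {G | (∃ g : X → ℝ, MemLp g 2 μ ∧ ⇑G =ᵐ[μ] g) ∧ ∫ x, G x ∂μ = 0} with hD
    have hDS : D ⊆ S := fun G hG => key2 G hG.1 hG.2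
    have hGclos : G ∈ closure D := by
      rw [Metric.mem_closure_iff]
      intro ε hε
      obtain ⟨s, hs⟩ := (Lp.simpleFunc.denseRange (p := 1) (μ := μ) (E := ℝ)
        ENNReal.one_ne_top).exists_dist_lt G (by positivity : (0:ℝ) < ε/2)
      set g₀ := Lp.simpleFunc.toSimpleFunc s with hg₀def
      have hg₀ : ⇑(s : Lp ℝ 1 μ) =ᵐ[μ] ⇑g₀ := (Lp.simpleFunc.toSimpleFunc_eq_toFun s).symm
      have hg₀1 : Integrable (⇑g₀) μ :=
        memLp_one_iff_integrable.mp (SimpleFunc.memLp_of_isFiniteMeasure g₀ 1 μ)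
      set c := ∫ x, g₀ x ∂μ with hc
      set b : Lp ℝ 1 μ := (s : Lp ℝ 1 μ) - Lp.const 1 μ c with hb
      have hbco : ⇑b =ᵐ[μ] fun x => g₀ x - c := by
        filter_upwards [Lp.coeFn_sub ((s : Lp ℝ 1 μ)) (Lp.const 1 μ c), hg₀,
          Lp.coeFn_const (p := 1) (μ := μ) (c := c)] with x h1 h2 h3
        simp only [Pi.sub_apply] at *
        rw [h1, h2, h3]; rfl
      have hbint : ∫ x, b x ∂μ = 0 := by
        rw [integral_congr_ae hbco, integral_sub hg₀1 (integrable_const c)]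
        simp [← hc]
      have hbD : b ∈ D := by
        refine ⟨⟨fun x => g₀ x - c, ?_, hbco⟩, hbint⟩
        exact (SimpleFunc.memLp_of_isFiniteMeasure g₀ 2 μ).sub (memLp_const c)
      refine ⟨b, hbD, ?_⟩
      have hcbound : |c| ≤ dist G (s : Lp ℝ 1 μ) := by
        have h1 : c = ∫ x, (⇑((s : Lp ℝ 1 μ) - G)) x ∂μ := by
          rw [integral_congr_ae (Lp.coeFn_sub ((s : Lp ℝ 1 μ)) G)]
          have : ∫ x, ((⇑(s : Lp ℝ 1 μ) - ⇑G) x) ∂μ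
              = ∫ x, (s : Lp ℝ 1 μ) x ∂μ - ∫ x, G x ∂μ :=
            integral_sub (L1.integrable_coeFn _) (L1.integrable_coeFn G)
          rw [this, hG0, sub_zero, integral_congr_ae hg₀]
        have h2 : |∫ x, (⇑((s : Lp ℝ 1 μ) - G)) x ∂μ| ≤ ‖(s : Lp ℝ 1 μ) - G‖ := by
          rw [← Real.norm_eq_abs, ← L1.integral_eq_integral]
          exact L1.norm_integral_le _
        rw [h1, dist_comm, dist_eq_norm]
        exact h2
      have hdist2 : dist (s : Lp ℝ 1 μ) b = |c| := by
        rw [dist_eq_norm]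
        have : (s : Lp ℝ 1 μ) - b = Lp.const 1 μ c := by rw [hb]; abel
        rw [this]
        have := Lp.norm_const (μ := μ) (p := 1) (c := c) one_ne_zero
        simpa [measure_univ] using this
      calc dist G b ≤ dist G (s : Lp ℝ 1 μ) + dist (s : Lp ℝ 1 μ) b := dist_triangle _ _ _
        _ ≤ dist G (s : Lp ℝ 1 μ) + dist G (s : Lp ℝ 1 μ) := by
            rw [hdist2]; exact add_le_add_right hcbound _
        _ < ε/2 + ε/2 := by exact add_lt_add hs hs
        _ = ε := by ring
    exact closure_minimal hDS hSclosed hGclos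
  -- conclude
  set F := hf.toL1 f with hF
  have hF0 : ∫ x, F x ∂μ = 0 := by
    rw [integral_congr_ae (Integrable.coeFn_toL1 hf), hf0]
  have hFS : Tendsto (birkhoffAverage ℝ (⇑U₁) id · F) atTop (𝓝 0) := hZS F hF0
  have heq : ∀ n, eLpNorm (birkhoffAverage ℝ (⇑T) f n) 1 μ
      = ENNReal.ofReal ‖birkhoffAverage ℝ (⇑U₁) id n F‖ := by
    intro n
    rw [← eLpNorm_coeFn_eq]
    exact (eLpNorm_congr_ae ((coeFn_birkhoffAverage (⇑T) hTmp (⇑U₁) hΦ₁ F n).trans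
      (birkhoffAverage_ae_congr (⇑T) hTmp (Integrable.coeFn_toL1 hf) n))).symm
  simp_rw [heq]
  have hnorm : Tendsto (fun n => ‖birkhoffAverage ℝ (⇑U₁) id n F‖) atTop (𝓝 0) := by
    simpa using hFS.norm
  simpa using ENNReal.tendsto_ofReal hnorm

end aux

/-- Given a fixed strictly increasing sequence `(L_m)` of positive integers, a mean-zero
`f ∈ L¹(μ)` and an invertible ergodic measure-preserving `T` on a standard non-atomic
probability space, there is a subsequence `(L_{m_n})` along which all moving averages
`M(v_n, L_{m_n})^T f` converge to `0` almost everywhere, for every choice of `(v_n)`. -/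
theorem stmt0
    {X : Type*} [MeasurableSpace X] [StandardBorelSpace X]
    (μ : Measure X) [IsProbabilityMeasure μ] [NullSingletonClass μ]
    (T : Equiv.Perm X) (hT : Measurable (⇑T)) (hT' : Measurable (⇑T.symm))
    (hTerg : Ergodic (⇑T) μ)
    (f : X → ℝ) (hf : Integrable f μ) (hf0 : ∫ x, f x ∂μ = 0)
    (L : ℕ → ℕ) (hLpos : ∀ m, 0 < L m) (hLmono : StrictMono L) :
    ∃ m : ℕ → ℕ, StrictMono m ∧
      ∀ v : ℕ → ℤ,
        ∀ᵐ x ∂μ, Tendsto (fun n => movAvg T f (v n) (L (m n)) x) atTop (nhds 0) := by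
  have hTmp : MeasurePreserving (⇑T) μ μ := hTerg.toMeasurePreserving
  have hmp : ∀ c : ℤ, MeasurePreserving (⇑(T ^ c)) μ μ := mp_zpow T hT' hTmp
  have hfae : AEStronglyMeasurable f μ := hf.1
  have hD : Tendsto (fun k => eLpNorm (birkhoffAverage ℝ (⇑T) f (L k)) 1 μ) atTop (𝓝 0) :=
    (meanErgodicL1 T hTerg f hf hf0).comp hLmono.tendsto_atTop
  have hP : ∀ n : ℕ, ∀ᶠ k in atTop,
      eLpNorm (birkhoffAverage ℝ (⇑T) f (L k)) 1 μ < (2 : ℝ≥0∞)⁻¹ ^ n := by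
    intro n
    refine hD.eventually_lt_const ?_
    have h2 : (0 : ℝ≥0∞) < 2⁻¹ := by simp
    exact ENNReal.pow_pos h2 n
  obtain ⟨m, hm, hmP⟩ := Filter.extraction_forall_of_eventually hP
  refine ⟨m, hm, ?_⟩
  intro v
  -- measurability
  have hmameas : ∀ (w : ℤ) (K : ℕ), AEStronglyMeasurable (movAvg T f w K) μ := by
    intro w K
    have h1 : ∀ i : ℕ, AEStronglyMeasurable (fun x => f ((T ^ (w + 1 + (i : ℤ))) x)) μ :=
      fun i => hfae.comp_quasiMeasurePreserving (hmp (w + 1 + i)).quasiMeasurePreserving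
    have h2 : AEStronglyMeasurable
        (fun x => ∑ i ∈ Finset.range K, f ((T ^ (w + 1 + (i : ℤ))) x)) μ :=
      Finset.aestronglyMeasurable_fun_sum _ (fun i _ => h1 i)
    exact h2.const_mul ((K : ℝ)⁻¹)
  have hbameas : ∀ K : ℕ, AEStronglyMeasurable (birkhoffAverage ℝ (⇑T) f K) μ := by
    intro K
    have hb : AEStronglyMeasurable (fun y => ∑ i ∈ Finset.range K, f (T^[i] y)) μ :=
      Finset.aestronglyMeasurable_fun_sum _
        (fun i _ => hfae.comp_quasiMeasurePreserving (hTmp.iterate i).quasiMeasurePreserving)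
    exact hb.const_smul ((K : ℝ)⁻¹)
  -- norm identity for moving averages
  have hnorm : ∀ (w : ℤ) (K : ℕ), ∫⁻ x, (‖movAvg T f w K x‖₊ : ℝ≥0∞) ∂μ
      = eLpNorm (birkhoffAverage ℝ (⇑T) f K) 1 μ := by
    intro w K
    have hbm : AEMeasurable (fun y => (‖birkhoffAverage ℝ (⇑T) f K y‖₊ : ℝ≥0∞)) μ :=
      (hbameas K).enorm
    calc ∫⁻ x, (‖movAvg T f w K x‖₊ : ℝ≥0∞) ∂μ
        = ∫⁻ x, (‖birkhoffAverage ℝ (⇑T) f K ((T ^ (w + 1)) x)‖₊ : ℝ≥0∞) ∂μ := by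
          simp_rw [movAvg_eq_birkhoff]
      _ = ∫⁻ y, (‖birkhoffAverage ℝ (⇑T) f K y‖₊ : ℝ≥0∞)
            ∂(Measure.map (⇑(T ^ (w + 1))) μ) :=
          (lintegral_map' (by rwa [(hmp (w + 1)).map_eq])
            (hmp (w + 1)).measurable.aemeasurable).symm
      _ = ∫⁻ y, (‖birkhoffAverage ℝ (⇑T) f K y‖₊ : ℝ≥0∞) ∂μ := by
          rw [(hmp (w + 1)).map_eq]
      _ = eLpNorm (birkhoffAverage ℝ (⇑T) f K) 1 μ := by rw [eLpNorm_one_eq_lintegral_enorm]; rfl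
  -- summability
  have hsum : ∫⁻ x, ∑' n, (‖movAvg T f (v n) (L (m n)) x‖₊ : ℝ≥0∞) ∂μ < ⊤ := by
    rw [lintegral_tsum (f := fun n x => (‖movAvg T f (v n) (L (m n)) x‖₊ : ℝ≥0∞)) (fun n => (hmameas (v n) (L (m n))).enorm)]
    calc ∑' n, ∫⁻ x, (‖movAvg T f (v n) (L (m n)) x‖₊ : ℝ≥0∞) ∂μ
        ≤ ∑' n : ℕ, (2 : ℝ≥0∞)⁻¹ ^ n :=
          ENNReal.tsum_le_tsum (fun n => by rw [hnorm]; exact (hmP n).le)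
      _ < ⊤ := by
          rw [ENNReal.tsum_geometric, ENNReal.one_sub_inv_two]
          simp
  have haem : AEMeasurable (fun x => ∑' n, (‖movAvg T f (v n) (L (m n)) x‖₊ : ℝ≥0∞)) μ :=
    AEMeasurable.ennreal_tsum (fun n => (hmameas (v n) (L (m n))).enorm)
  filter_upwards [ae_lt_top' haem hsum.ne] with x hx
  have htend : Tendsto (fun n => (‖movAvg T f (v n) (L (m n)) x‖₊ : ℝ≥0∞)) atTop (𝓝 0) :=
    ENNReal.tendsto_atTop_zero_of_tsum_ne_top hx.ne
  have h2 : Tendsto (fun n => ‖movAvg T f (v n) (L (m n)) x‖₊) atTop (𝓝 0) := by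
    rw [← ENNReal.tendsto_coe (f := atTop)]
    simpa using htend
  rw [tendsto_zero_iff_norm_tendsto_zero]
  simp_rw [← coe_nnnorm]
  exact NNReal.tendsto_coe.mpr h2
end

section
/- Let (X_k : k ≥ 0) be a sequence of independent, identically distributed real-valued random variables with E[X_0] = 0 and E[|X_0|^p] < ∞ for some 1 < p < 2. Let D > 0 satisfy D(p-1) > 1. Then for every sequence of nonnegative integers (v_n), the moving averages M(v_n, ⌊n^D⌋)X_0 = (1/⌊n^D⌋) Σ_{k=v_n+1}^{v_n+⌊n^D⌋} X_k converge to 0 almost surely. -/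
open MeasureTheory Filter ProbabilityTheory


-- subadditivity of rpow for exponent ≤ 1 on nonneg reals
lemma my_rpow_add_le {q a b : ℝ} (ha : 0 ≤ a) (hb : 0 ≤ b) (hq0 : 0 ≤ q) (hq1 : q ≤ 1) :
    (a + b) ^ q ≤ a ^ q + b ^ q := by
  have h := NNReal.rpow_add_le_add_rpow a.toNNReal b.toNNReal hq0 hq1
  have := NNReal.coe_le_coe.mpr h
  simpa [NNReal.coe_rpow, Real.coe_toNNReal a ha, Real.coe_toNNReal b hb,
    ← Real.toNNReal_add ha hb, Real.coe_toNNReal _ (add_nonneg ha hb)] using this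

lemma ga_of_nonneg {p : ℝ} (hp1 : 1 < p) {a : ℝ} (ha : 0 ≤ a) :
    |a| ^ (p - 2) * a = a ^ (p - 1) := by
  rcases ha.eq_or_lt with rfl | ha'
  · simp [Real.zero_rpow (by linarith : p - 1 ≠ 0)]
  · rw [abs_of_pos ha']
    rw [show p - 1 = (p - 2) + 1 by ring, Real.rpow_add ha', Real.rpow_one]

lemma g_neg (p : ℝ) (a : ℝ) : |(-a)| ^ (p - 2) * (-a) = -(|a| ^ (p - 2) * a) := by
  rw [abs_neg]; ring

lemma g_holder {p : ℝ} (hp1 : 1 < p) (hp2 : p < 2) (a b : ℝ) :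
    |(|a| ^ (p-2) * a) - (|b| ^ (p-2) * b)| ≤ 2 * |a - b| ^ (p - 1) := by
  set q := p - 1 with hq
  have hq0 : 0 < q := by simp [hq]; linarith
  have hq1 : q ≤ 1 := by simp [hq]; linarith
  -- case both nonneg
  have key : ∀ a b : ℝ, 0 ≤ b → b ≤ a → a ^ q - b ^ q ≤ (a - b) ^ q := by
    intro a b hb hba
    have h := my_rpow_add_le hb (by linarith : (0:ℝ) ≤ a - b) hq0.le hq1
    rw [show b + (a - b) = a by ring] at h
    linarith
  have habs : ∀ a b : ℝ, 0 ≤ b → 0 ≤ a → |a ^ q - b ^ q| ≤ |a - b| ^ q := by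
    intro a b hb ha
    rcases le_total b a with h | h
    · rw [abs_of_nonneg (by nlinarith [Real.rpow_le_rpow hb h hq0.le] : (0:ℝ) ≤ a ^ q - b ^ q),
        abs_of_nonneg (by linarith : (0:ℝ) ≤ a - b)]
      exact key a b hb h
    · rw [abs_sub_comm, abs_sub_comm a b,
        abs_of_nonneg (by nlinarith [Real.rpow_le_rpow ha h hq0.le] : (0:ℝ) ≤ b ^ q - a ^ q),
        abs_of_nonneg (by linarith : (0:ℝ) ≤ b - a)]
      exact key b a ha h
  -- mixed case
  have mixed : ∀ a b : ℝ, 0 ≤ a → b ≤ 0 →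
      |(|a| ^ (p-2) * a) - (|b| ^ (p-2) * b)| ≤ 2 * |a - b| ^ q := by
    intro a b ha hb
    have hb' : (0:ℝ) ≤ -b := by linarith
    have e1 : |a| ^ (p-2) * a = a ^ q := ga_of_nonneg hp1 ha
    have e2 : |b| ^ (p-2) * b = -((-b) ^ q) := by
      have := ga_of_nonneg hp1 hb'
      rw [abs_neg] at this
      nlinarith [this]
    rw [e1, e2, sub_neg_eq_add]
    have hab : 0 ≤ a - b := by linarith
    have h1 : a ^ q ≤ (a - b) ^ q := Real.rpow_le_rpow ha (by linarith) hq0.le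
    have h2 : (-b) ^ q ≤ (a - b) ^ q := Real.rpow_le_rpow hb' (by linarith) hq0.le
    have ha' : 0 ≤ a ^ q := Real.rpow_nonneg ha q
    have hb'' : 0 ≤ (-b) ^ q := Real.rpow_nonneg hb' q
    rw [abs_of_nonneg (by linarith), abs_of_nonneg hab]
    linarith
  have nn : ∀ a b : ℝ, 0 ≤ a → 0 ≤ b →
      |(|a| ^ (p-2) * a) - (|b| ^ (p-2) * b)| ≤ 2 * |a - b| ^ q := by
    intro a b ha hb
    rw [ga_of_nonneg hp1 ha, ga_of_nonneg hp1 hb]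
    calc |a ^ q - b ^ q| ≤ |a - b| ^ q := habs a b hb ha
    _ ≤ 2 * |a - b| ^ q := by nlinarith [Real.rpow_nonneg (abs_nonneg (a-b)) q]
  rcases le_total 0 a with ha | ha <;> rcases le_total 0 b with hb | hb
  · exact nn a b ha hb
  · exact mixed a b ha hb
  · rw [abs_sub_comm, abs_sub_comm a b]; exact mixed b a hb ha
  · have := nn (-a) (-b) (by linarith) (by linarith)
    rw [g_neg, g_neg, show (-a) - (-b) = -(a-b) by ring, abs_neg] at this
    calc |(|a| ^ (p-2) * a) - (|b| ^ (p-2) * b)|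
        = |(-(|a| ^ (p-2) * a)) - (-(|b| ^ (p-2) * b))| := by rw [← abs_neg]; ring_nf
      _ ≤ 2 * |a - b| ^ q := this



/-- key pointwise inequality -/
lemma key_ineq {p : ℝ} (hp1 : 1 < p) (hp2 : p < 2) (x y : ℝ) :
    |x + y| ^ p ≤ |x| ^ p + p * ((|x| ^ (p-2) * x) * y) + 2 * p * |y| ^ p := by
  rcases eq_or_ne y 0 with rfl | hy
  · simp [Real.zero_rpow (show p ≠ 0 by positivity), Real.rpow_nonneg]
  have hyp : 0 < |y| := abs_pos.mpr hy
  set g : ℝ → ℝ := fun t => |t| ^ (p-2) * t with hg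
  set C : ℝ := 2 * p * |y| ^ (p - 1) with hC
  set h : ℝ → ℝ := fun t => |t| ^ p - (p * g x) * t with hh
  set s : Set ℝ := Set.Icc (min x (x+y)) (max x (x+y)) with hs
  have hder : ∀ t ∈ s, HasDerivWithinAt h (p * g t - p * g x) s t := by
    intro t _
    exact ((hasDerivAt_abs_rpow t hp1).sub
      ((hasDerivAt_id t).const_mul (p * g x))).hasDerivWithinAt.congr_deriv (by
        simp [hg]; ring)
  have hbound : ∀ t ∈ s, ‖p * g t - p * g x‖ ≤ C := by
    intro t ht
    have htx : |t - x| ≤ |y| := by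
      rcases ht with ⟨h1, h2⟩
      have hlo : x - |y| ≤ min x (x+y) :=
        le_min (by linarith [abs_nonneg y]) (by linarith [neg_abs_le y])
      have hhi : max x (x+y) ≤ x + |y| :=
        max_le (by linarith [abs_nonneg y]) (by linarith [le_abs_self y])
      rw [abs_le]; constructor <;> linarith
    have h1 : |g t - g x| ≤ 2 * |t - x| ^ (p - 1) := g_holder hp1 hp2 t x
    have h2 : |t - x| ^ (p-1) ≤ |y| ^ (p-1) :=
      Real.rpow_le_rpow (abs_nonneg _) htx (by linarith)
    have : ‖p * g t - p * g x‖ = p * |g t - g x| := by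
      rw [Real.norm_eq_abs, ← mul_sub, abs_mul, abs_of_pos (by linarith : (0:ℝ) < p)]
    rw [this, hC]
    nlinarith
  have hmem1 : x ∈ s := ⟨min_le_left _ _, le_max_left _ _⟩
  have hmem2 : x + y ∈ s := ⟨min_le_right _ _, le_max_right _ _⟩
  have := Convex.norm_image_sub_le_of_norm_hasDerivWithin_le hder hbound
    (convex_Icc _ _) hmem1 hmem2
  rw [Real.norm_eq_abs, Real.norm_eq_abs] at this
  have hyy : C * |x + y - x| = 2 * p * |y| ^ p := by
    rw [show x + y - x = y by ring, hC]
    rw [show p = (p-1) + 1 by ring, Real.rpow_add hyp, Real.rpow_one]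
    ring_nf
  rw [hyy] at this
  have habs : h (x+y) - h x = |x+y|^p - |x|^p - p * (g x * y) := by
    simp only [hh]; ring
  have := (abs_le.mp this).2
  rw [habs] at this
  simp only [hg] at this
  linarith



/-- von Bahr–Esseen type moment bound -/
lemma moment_bound {Ω : Type*} [MeasurableSpace Ω] (μ : Measure Ω) [IsProbabilityMeasure μ]
    (X : ℕ → Ω → ℝ) (hmeas : ∀ k, Measurable (X k))
    (hindep : iIndepFun X μ)
    {p : ℝ} (hp1 : 1 < p) (hp2 : p < 2)
    (hLp : ∀ j, MemLp (X j) (ENNReal.ofReal p) μ)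
    (hmean : ∀ j, (∫ ω, X j ω ∂μ) = 0) (s : Finset ℕ) :
    ∫ ω, |∑ j ∈ s, X j ω| ^ p ∂μ ≤ 2 * p * ∑ j ∈ s, ∫ ω, |X j ω| ^ p ∂μ := by
  classical
  have hp0 : (0:ℝ) < p := by linarith
  have hqne : ENNReal.ofReal p ≠ 0 := by simp [ENNReal.ofReal_eq_zero]; linarith
  have hqtop : ENNReal.ofReal p ≠ ⊤ := ENNReal.ofReal_ne_top
  have hqto : (ENNReal.ofReal p).toReal = p := ENNReal.toReal_ofReal hp0.le
  -- integrability of |f|^p for f ∈ Lp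
  have intPow : ∀ f : Ω → ℝ, MemLp f (ENNReal.ofReal p) μ →
      Integrable (fun ω => |f ω| ^ p) μ := by
    intro f hf
    have := hf.integrable_norm_rpow hqne hqtop
    simpa [hqto, Real.norm_eq_abs] using this
  induction s using Finset.induction_on with
  | empty =>
    simp [Real.zero_rpow (show p ≠ 0 by positivity)]
  | insert i s hi ih =>
    have memS : MemLp (fun ω => ∑ j ∈ s, X j ω) (ENNReal.ofReal p) μ :=
      memLp_finset_sum s (fun j _ => hLp j)
    set S : Ω → ℝ := fun ω => ∑ j ∈ s, X j ω with hS
    have measS : Measurable S := by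
      apply Finset.measurable_sum; intro j _; exact hmeas j
    have intSp : Integrable (fun ω => |S ω| ^ p) μ := intPow S memS
    have intYp : Integrable (fun ω => |X i ω| ^ p) μ := intPow (X i) (hLp i)
    have intY : Integrable (X i) μ :=
      (hLp i).integrable (by simpa using ENNReal.one_le_ofReal.mpr hp1.le)
    -- g ∘ S
    set G : Ω → ℝ := fun ω => |S ω| ^ (p-2) * S ω with hG
    have measG : Measurable G := by
      have : Measurable fun t : ℝ => |t| ^ (p-2) * t := by fun_prop
      exact this.comp measS
    have absG : ∀ ω, |G ω| = |S ω| ^ (p - 1) := by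
      intro ω
      rw [hG]
      rcases eq_or_ne (S ω) 0 with h | h
      · simp [h, Real.zero_rpow (show p - 1 ≠ 0 by intro hc; linarith),
          Real.zero_rpow (show p - 2 ≠ 0 by intro hc; linarith)]
      · rw [abs_mul, abs_of_nonneg (Real.rpow_nonneg (abs_nonneg _) _),
          show p - 1 = (p - 2) + 1 by ring, Real.rpow_add (abs_pos.mpr h), Real.rpow_one]
    have intG : Integrable G μ := by
      refine ((integrable_const (1:ℝ)).add intSp).mono
        measG.aestronglyMeasurable (Filter.Eventually.of_forall fun ω => ?_)
      simp only [Pi.add_apply, Real.norm_eq_abs, absG ω]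
      have h1 : (0:ℝ) ≤ |S ω| ^ p := Real.rpow_nonneg (abs_nonneg _) _
      rw [abs_of_nonneg (by linarith : (0:ℝ) ≤ 1 + |S ω| ^ p)]
      rcases le_total (|S ω|) 1 with h | h
      · have := Real.rpow_le_one (abs_nonneg _) h (by linarith : (0:ℝ) ≤ p - 1)
        linarith
      · have := Real.rpow_le_rpow_of_exponent_le h (by linarith : p - 1 ≤ p)
        linarith
    -- independence of G and X i
    have hiF : IndepFun S (X i) μ := by
      have h := hindep.indepFun_finsetSum_of_notMem hmeas hi
      rwa [show (∑ j ∈ s, X j) = S by ext ω; simp [hS, Finset.sum_apply]] at h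
    have hGY : IndepFun G (X i) μ := by
      have : Measurable fun t : ℝ => |t| ^ (p-2) * t := by fun_prop
      exact hiF.comp this measurable_id
    have intGY : Integrable (fun ω => G ω * X i ω) μ := by
      have := hGY.integrable_mul intG intY
      exact this
    have intGYint : (∫ ω, G ω * X i ω ∂μ) = 0 := by
      have := hGY.integral_mul_eq_mul_integral intG.aestronglyMeasurable intY.aestronglyMeasurable
      simp only [Pi.mul_apply] at this
      rw [this, hmean i, mul_zero]
    -- pointwise bound
    have pw : ∀ ω, |X i ω + S ω| ^ p ≤
        |S ω| ^ p + p * (G ω * X i ω) + 2 * p * |X i ω| ^ p := by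
      intro ω
      have := key_ineq hp1 hp2 (S ω) (X i ω)
      rw [add_comm (S ω)] at this
      exact this
    have memSum : MemLp (fun ω => X i ω + S ω) (ENNReal.ofReal p) μ :=
      (hLp i).add memS
    have intLHS : Integrable (fun ω => |X i ω + S ω| ^ p) μ := intPow _ memSum
    have intRHS : Integrable
        (fun ω => |S ω| ^ p + p * (G ω * X i ω) + 2 * p * |X i ω| ^ p) μ :=
      (intSp.add (intGY.const_mul p)).add (intYp.const_mul (2*p))
    have step : (∫ ω, |X i ω + S ω| ^ p ∂μ) ≤
        ∫ ω, |S ω| ^ p + p * (G ω * X i ω) + 2 * p * |X i ω| ^ p ∂μ :=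
      integral_mono intLHS intRHS pw
    have split : (∫ ω, |S ω| ^ p + p * (G ω * X i ω) + 2 * p * |X i ω| ^ p ∂μ)
        = (∫ ω, |S ω| ^ p ∂μ) + p * (∫ ω, G ω * X i ω ∂μ)
          + 2 * p * ∫ ω, |X i ω| ^ p ∂μ := by
      have h1 := integral_add (μ := μ) (intSp.add (intGY.const_mul p)) (intYp.const_mul (2*p))
      have h2 := integral_add (μ := μ) intSp (intGY.const_mul p)
      simp only [Pi.add_apply] at h1 h2
      rw [h1, h2, integral_const_mul, integral_const_mul]
    rw [Finset.sum_insert hi]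
    calc ∫ ω, |∑ j ∈ insert i s, X j ω| ^ p ∂μ
        = ∫ ω, |X i ω + S ω| ^ p ∂μ := by
          congr 1; ext ω; rw [Finset.sum_insert hi]
      _ ≤ (∫ ω, |S ω| ^ p ∂μ) + p * (∫ ω, G ω * X i ω ∂μ)
          + 2 * p * ∫ ω, |X i ω| ^ p ∂μ := by rw [← split]; exact step
      _ = (∫ ω, |S ω| ^ p ∂μ) + 2 * p * ∫ ω, |X i ω| ^ p ∂μ := by
          rw [intGYint]; ring
      _ ≤ 2 * p * (∑ j ∈ s, ∫ ω, |X j ω| ^ p ∂μ) + 2 * p * ∫ ω, |X i ω| ^ p ∂μ := by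
          have := ih
          linarith [ih]
      _ = 2 * p * (∫ ω, |X i ω| ^ p ∂μ + ∑ j ∈ s, ∫ ω, |X j ω| ^ p ∂μ) := by ring

/-- For an i.i.d. sequence `(X_k : k ≥ 0)` of mean-zero real random variables with
`E[|X_0|^p] < ∞` for some `1 < p < 2`, and any `D > 0` with `D(p-1) > 1`, the moving
averages `M(v_n, ⌊n^D⌋) X_0` converge to `0` almost surely, for every sequence `(v_n)`
of nonnegative integers. -/
theorem stmt8
    {Ω : Type*} [MeasurableSpace Ω] (μ : Measure Ω) [IsProbabilityMeasure μ]
    (X : ℕ → Ω → ℝ) (hmeas : ∀ k, Measurable (X k))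
    (hindep : iIndepFun X μ)
    (hident : ∀ k, IdentDistrib (X k) (X 0) μ μ)
    (p : ℝ) (hp1 : 1 < p) (hp2 : p < 2)
    (hLp : MemLp (X 0) (ENNReal.ofReal p) μ)
    (hmean : (∫ ω, X 0 ω ∂μ) = 0)
    (D : ℝ) (hD0 : 0 < D) (hD : 1 < D * (p - 1)) :
    ∀ v : ℕ → ℕ,
      ∀ᵐ ω ∂μ, Tendsto
        (fun n : ℕ => ((⌊(n : ℝ) ^ D⌋₊ : ℝ))⁻¹ *
          ∑ k ∈ Finset.range ⌊(n : ℝ) ^ D⌋₊, X (v n + 1 + k) ω)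
        atTop (nhds 0) := by
  intro v
  have hp0 : (0:ℝ) < p := by linarith
  have hqne : ENNReal.ofReal p ≠ 0 := by simp [ENNReal.ofReal_eq_zero]; linarith
  have hqtop : ENNReal.ofReal p ≠ ⊤ := ENNReal.ofReal_ne_top
  have hqto : (ENNReal.ofReal p).toReal = p := ENNReal.toReal_ofReal hp0.le
  have intPow : ∀ f : Ω → ℝ, MemLp f (ENNReal.ofReal p) μ →
      Integrable (fun ω => |f ω| ^ p) μ := by
    intro f hf
    have := hf.integrable_norm_rpow hqne hqtop
    simpa [hqto, Real.norm_eq_abs] using this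
  have hLp' : ∀ j, MemLp (X j) (ENNReal.ofReal p) μ :=
    fun j => (hident j).symm.memLp_snd hLp
  have hmean' : ∀ j, (∫ ω, X j ω ∂μ) = 0 := by
    intro j; rw [(hident j).integral_eq]; exact hmean
  set A : ℝ := ∫ ω, |X 0 ω| ^ p ∂μ with hA
  have hA0 : 0 ≤ A := integral_nonneg fun ω => Real.rpow_nonneg (abs_nonneg _) _
  have hAj : ∀ j, (∫ ω, |X j ω| ^ p ∂μ) = A := by
    intro j
    have hu : Measurable fun t : ℝ => |t| ^ p := by fun_prop
    exact ((hident j).comp hu).integral_eq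
  set L : ℕ → ℕ := fun n => ⌊(n : ℝ) ^ D⌋₊ with hL
  set f : ℕ → Ω → ℝ := fun n ω =>
    ((L n : ℝ))⁻¹ * ∑ k ∈ Finset.range (L n), X (v n + 1 + k) ω with hf
  -- moment bound for each block
  have block : ∀ n : ℕ,
      ∫ ω, |∑ k ∈ Finset.range (L n), X (v n + 1 + k) ω| ^ p ∂μ
        ≤ 2 * p * (L n : ℝ) * A := by
    intro n
    set s : Finset ℕ := (Finset.range (L n)).image (fun k => v n + 1 + k) with hs
    have hinj : Function.Injective (fun k => v n + 1 + k) := fun a b h => by exact Nat.add_left_cancel h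
    have hsum : ∀ ω, (∑ j ∈ s, X j ω) = ∑ k ∈ Finset.range (L n), X (v n + 1 + k) ω := by
      intro ω
      rw [hs, Finset.sum_image (fun a _ b _ h => hinj h)]
    have h1 := moment_bound μ X hmeas hindep hp1 hp2 hLp' hmean' s
    have h2 : (∑ j ∈ s, ∫ ω, |X j ω| ^ p ∂μ) = (L n : ℝ) * A := by
      rw [Finset.sum_congr rfl fun j _ => hAj j, Finset.sum_const, hs,
        Finset.card_image_of_injective _ hinj, Finset.card_range, nsmul_eq_mul]
    calc ∫ ω, |∑ k ∈ Finset.range (L n), X (v n + 1 + k) ω| ^ p ∂μ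
        = ∫ ω, |∑ j ∈ s, X j ω| ^ p ∂μ := by
          congr 1; ext ω; rw [hsum ω]
      _ ≤ 2 * p * ∑ j ∈ s, ∫ ω, |X j ω| ^ p ∂μ := h1
      _ = 2 * p * (L n : ℝ) * A := by rw [h2]; ring
  -- Markov bound
  have markov : ∀ ε : ℝ, 0 < ε → ∀ n : ℕ,
      μ {ω | ε ≤ |f n ω|} ≤
        ENNReal.ofReal ((2 * p * A / ε ^ p) * (L n : ℝ) ^ (1 - p)) := by
    intro ε hε n
    rcases Nat.eq_zero_or_pos (L n) with h0 | hpos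
    · have : {ω | ε ≤ |f n ω|} = ∅ := by
        ext ω
        simp [hf, h0, not_le, hε]
      rw [this]
      simp
    · have hLpos : (0:ℝ) < (L n : ℝ) := by exact_mod_cast hpos
      set Sn : Ω → ℝ := fun ω => ∑ k ∈ Finset.range (L n), X (v n + 1 + k) ω with hSn
      have memSn : MemLp Sn (ENNReal.ofReal p) μ :=
        memLp_finset_sum _ (fun k _ => hLp' _)
      have intSnp : Integrable (fun ω => |Sn ω| ^ p) μ := intPow Sn memSn
      have hsub : {ω | ε ≤ |f n ω|} ⊆ {ω | (ε * (L n : ℝ)) ^ p ≤ |Sn ω| ^ p} := by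
        intro ω hω
        simp only [Set.mem_setOf_eq] at hω ⊢
        have h1 : |f n ω| = |Sn ω| / (L n : ℝ) := by
          rw [hf]
          simp only [abs_mul, abs_inv, abs_of_pos hLpos]
          rw [div_eq_inv_mul]
        rw [h1, le_div_iff₀ hLpos] at hω
        exact Real.rpow_le_rpow (by positivity) hω hp0.le
      have hMar := mul_meas_ge_le_integral_of_nonneg
        (Filter.Eventually.of_forall fun ω => Real.rpow_nonneg (abs_nonneg (Sn ω)) p)
        intSnp ((ε * (L n : ℝ)) ^ p)
      have hεL : (0:ℝ) < (ε * (L n : ℝ)) ^ p := by positivity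
      have htoReal : (μ {ω | (ε * (L n : ℝ)) ^ p ≤ |Sn ω| ^ p}).toReal ≤
          2 * p * (L n : ℝ) * A / (ε * (L n : ℝ)) ^ p := by
        rw [le_div_iff₀ hεL]
        calc (μ {ω | (ε * (L n : ℝ)) ^ p ≤ |Sn ω| ^ p}).toReal * (ε * (L n : ℝ)) ^ p
            = (ε * (L n : ℝ)) ^ p * (μ {ω | (ε * (L n : ℝ)) ^ p ≤ |Sn ω| ^ p}).toReal := by ring
          _ ≤ ∫ ω, |Sn ω| ^ p ∂μ := hMar
          _ ≤ 2 * p * (L n : ℝ) * A := block n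
      have heq : 2 * p * (L n : ℝ) * A / (ε * (L n : ℝ)) ^ p
          = (2 * p * A / ε ^ p) * (L n : ℝ) ^ (1 - p) := by
        rw [Real.mul_rpow hε.le hLpos.le,
          show (1:ℝ) - p = 1 - p from rfl, Real.rpow_sub hLpos, Real.rpow_one]
        have h1 : (0:ℝ) < ε ^ p := by positivity
        have h2 : (0:ℝ) < (L n : ℝ) ^ p := by positivity
        field_simp
      calc μ {ω | ε ≤ |f n ω|} ≤ μ {ω | (ε * (L n : ℝ)) ^ p ≤ |Sn ω| ^ p} :=
            measure_mono hsub
        _ ≤ ENNReal.ofReal ((2 * p * A / ε ^ p) * (L n : ℝ) ^ (1 - p)) := by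
            rw [← heq]
            exact (ENNReal.le_ofReal_iff_toReal_le (measure_ne_top μ _)
              (by positivity)).mpr htoReal
  -- lower bound on L n and summability
  have hLlow : ∀ n : ℕ, 1 ≤ n → (n : ℝ) ^ D / 2 ≤ (L n : ℝ) := by
    intro n hn
    have hn1 : (1:ℝ) ≤ (n:ℝ) := by exact_mod_cast hn
    have hx1 : (1:ℝ) ≤ (n:ℝ) ^ D := Real.one_le_rpow hn1 hD0.le
    have hfl : (n:ℝ) ^ D - 1 < (L n : ℝ) := by
      have := Nat.sub_one_lt_floor ((n:ℝ) ^ D)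
      exact_mod_cast this
    have hfl1 : (1:ℝ) ≤ (L n : ℝ) := by
      have : 1 ≤ L n := Nat.le_floor (by exact_mod_cast hx1)
      exact_mod_cast this
    rcases le_total ((n:ℝ) ^ D) 2 with h | h
    · linarith
    · linarith
  have hsummable : Summable (fun n : ℕ => (L n : ℝ) ^ (1 - p)) := by
    have key : ∀ n : ℕ, (L n : ℝ) ^ (1 - p) ≤
        2 ^ (p - 1) * (((n:ℝ) ^ (D * (p - 1)))⁻¹) := by
      intro n
      rcases Nat.eq_zero_or_pos n with rfl | hn
      · have hL0 : L 0 = 0 := by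
          simp [hL, Real.zero_rpow hD0.ne']
        rw [hL0]
        simp [Real.zero_rpow (show (1:ℝ) - p ≠ 0 by intro h; linarith),
          Real.zero_rpow (show D * (p-1) ≠ 0 by positivity)]
      · have hn1 : (1:ℝ) ≤ (n:ℝ) := by exact_mod_cast hn
        have hx1 : (1:ℝ) ≤ (n:ℝ) ^ D := Real.one_le_rpow hn1 hD0.le
        have hhalf : (0:ℝ) < (n:ℝ) ^ D / 2 := by linarith
        have h1 : (L n : ℝ) ^ (1 - p) ≤ ((n:ℝ) ^ D / 2) ^ (1 - p) :=
          Real.rpow_le_rpow_of_nonpos hhalf (hLlow n hn) (by linarith)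
        have h2 : ((n:ℝ) ^ D / 2) ^ (1 - p)
            = 2 ^ (p - 1) * (((n:ℝ) ^ (D * (p - 1)))⁻¹) := by
          rw [Real.div_rpow (by linarith) (by norm_num),
            show (1:ℝ) - p = -(p - 1) by ring,
            Real.rpow_neg (by linarith : (0:ℝ) ≤ (n:ℝ) ^ D),
            Real.rpow_neg (by norm_num : (0:ℝ) ≤ 2),
            Real.rpow_mul (Nat.cast_nonneg n)]
          have h20 : (0:ℝ) < 2 ^ (p-1) := Real.rpow_pos_of_pos (by norm_num) _
          field_simp
        linarith
    apply Summable.of_nonneg_of_le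
      (fun n => Real.rpow_nonneg (Nat.cast_nonneg _) _) key
    apply Summable.mul_left
    exact (Real.summable_nat_rpow_inv).mpr hD
  -- Borel-Cantelli
  have bc : ∀ ε : ℝ, 0 < ε → ∀ᵐ ω ∂μ, ∀ᶠ n in atTop, ¬ (ε ≤ |f n ω|) := by
    intro ε hε
    have hsum2 : Summable (fun n : ℕ => (2 * p * A / ε ^ p) * (L n : ℝ) ^ (1 - p)) :=
      hsummable.mul_left _
    have hb : (∑' n, μ {ω | ε ≤ |f n ω|})
        ≤ ENNReal.ofReal (∑' n, (2 * p * A / ε ^ p) * (L n : ℝ) ^ (1 - p)) := by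
      calc (∑' n, μ {ω | ε ≤ |f n ω|})
          ≤ ∑' n, ENNReal.ofReal ((2 * p * A / ε ^ p) * (L n : ℝ) ^ (1 - p)) :=
            ENNReal.tsum_le_tsum (fun n => markov ε hε n)
        _ = ENNReal.ofReal (∑' n, (2 * p * A / ε ^ p) * (L n : ℝ) ^ (1 - p)) :=
            (ENNReal.ofReal_tsum_of_nonneg (fun n => by positivity) hsum2).symm
    exact ae_eventually_notMem (ne_top_of_le_ne_top ENNReal.ofReal_ne_top hb)
  have allm : ∀ᵐ ω ∂μ, ∀ m : ℕ, ∀ᶠ n in atTop, ¬ ((1/((m:ℝ)+1)) ≤ |f n ω|) :=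
    ae_all_iff.mpr fun m => bc (1/((m:ℝ)+1)) (by positivity)
  filter_upwards [allm] with ω hω
  rw [NormedAddCommGroup.tendsto_nhds_zero]
  intro ε hε
  obtain ⟨m, hm⟩ := exists_nat_one_div_lt hε
  filter_upwards [hω m] with n hn
  rw [Real.norm_eq_abs]
  push_neg at hn
  calc |f n ω| < 1/((m:ℝ)+1) := hn
    _ < ε := hm
end

section
/- Let (X,B,μ) be a standard probability space where (X,d) is a compact metric space and B contains the Borel sets. Let T be an invertible measure-preserving transformation admitting a finite measurable partition P such that the partitions (T^i P : i ∈ ℤ) are jointly independent (Bernoulli property with generator P) and such that diam(P_n) → 0 as n → ∞, where P_n = ⋁_{i=1-n}^{n-1} T^i P and diam(Q) = sup over elements q of Q of sup{d(x,y) : x,y ∈ q}. Then for every continuous function f : X → ℝ, every sequence of integers (v_n), and every strictly increasing sequence of positive integers (L_n), the moving averages M(v_n,L_n)^T f(x) = (1/L_n) Σ_{i=v_n+1}^{v_n+L_n} f(T^i x) converge to ∫_X f dμ for μ-almost every x ∈ X. -/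
open MeasureTheory Filter ProbabilityTheory

set_option linter.unusedSectionVars false
set_option linter.unreachableTactic false
set_option linter.unusedTactic false

lemma quad_two {α : Type*} {a b c d : α}
    (h1 : a = b ∨ a = c ∨ a = d) (h3 : c = a ∨ c = b ∨ c = d) (h4 : d = a ∨ d = b ∨ d = c) :
    ∃ x y : α, (x = a ∨ x = b ∨ x = c ∨ x = d) ∧ (y = a ∨ y = b ∨ y = c ∨ y = d) ∧
      (a = x ∨ a = y) ∧ (b = x ∨ b = y) ∧ (c = x ∨ c = y) ∧ (d = x ∨ d = y) := by
  classical
  by_cases hb : b = a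
  · subst hb
    by_cases hc : c = b
    · exact ⟨b, d, by tauto⟩
    · exact ⟨b, c, by tauto⟩
  · refine ⟨a, b, by tauto, by tauto, ?_, ?_, ?_, ?_⟩ <;> try tauto
    · rcases h1 with h|h|h
      · exact absurd h.symm hb
      · tauto
      · rcases h3 with h'|h'|h' <;> try tauto
        left; rw [h']; exact h.symm
    · rcases h1 with h|h|h
      · exact absurd h.symm hb
      · rcases h4 with h'|h'|h' <;> try tauto
        left; rw [h']; exact h.symm
      · tauto

/-- the set of "good" quadruples (each coordinate equal to some other coordinate)
has cardinality at most `16 |F|^2`. -/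
lemma good_card_le (F : Finset ℤ) :
    ((F ×ˢ F ×ˢ F ×ˢ F).filter (fun q : ℤ × ℤ × ℤ × ℤ =>
      (q.1 = q.2.1 ∨ q.1 = q.2.2.1 ∨ q.1 = q.2.2.2) ∧
      (q.2.1 = q.1 ∨ q.2.1 = q.2.2.1 ∨ q.2.1 = q.2.2.2) ∧
      (q.2.2.1 = q.1 ∨ q.2.2.1 = q.2.1 ∨ q.2.2.1 = q.2.2.2) ∧
      (q.2.2.2 = q.1 ∨ q.2.2.2 = q.2.1 ∨ q.2.2.2 = q.2.2.1))).card
      ≤ 16 * F.card ^ 2 := by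
  classical
  have hsub : ((F ×ˢ F ×ˢ F ×ˢ F).filter (fun q : ℤ × ℤ × ℤ × ℤ =>
      (q.1 = q.2.1 ∨ q.1 = q.2.2.1 ∨ q.1 = q.2.2.2) ∧
      (q.2.1 = q.1 ∨ q.2.1 = q.2.2.1 ∨ q.2.1 = q.2.2.2) ∧
      (q.2.2.1 = q.1 ∨ q.2.2.1 = q.2.1 ∨ q.2.2.1 = q.2.2.2) ∧
      (q.2.2.2 = q.1 ∨ q.2.2.2 = q.2.1 ∨ q.2.2.2 = q.2.2.1)))
      ⊆ (F ×ˢ F).biUnion (fun xy : ℤ × ℤ =>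
        ({xy.1, xy.2} ×ˢ {xy.1, xy.2} ×ˢ {xy.1, xy.2} ×ˢ ({xy.1, xy.2} : Finset ℤ))) := by
    intro q hq
    rw [Finset.mem_filter] at hq
    obtain ⟨hmem, h1, _h2, h3, h4⟩ := hq
    obtain ⟨a, b, c, d⟩ := q
    simp only [Finset.mem_product] at hmem
    obtain ⟨ha, hb, hc, hd⟩ := hmem
    obtain ⟨x, y, hx, hy, g1, g2, g3, g4⟩ := quad_two h1 h3 h4
    have hxF : x ∈ F := by rcases hx with rfl|rfl|rfl|rfl <;> assumption
    have hyF : y ∈ F := by rcases hy with rfl|rfl|rfl|rfl <;> assumption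
    rw [Finset.mem_biUnion]
    refine ⟨(x, y), by simp [Finset.mem_product, hxF, hyF], ?_⟩
    simp only [Finset.mem_product, Finset.mem_insert, Finset.mem_singleton]
    exact ⟨g1, g2, g3, g4⟩
  refine (Finset.card_le_card hsub).trans ?_
  refine (Finset.card_biUnion_le).trans ?_
  have : ∀ xy : ℤ × ℤ, (({xy.1, xy.2} ×ˢ {xy.1, xy.2} ×ˢ {xy.1, xy.2} ×ˢ ({xy.1, xy.2} : Finset ℤ)).card : ℕ) ≤ 16 := by
    intro xy
    have h2 : ({xy.1, xy.2} : Finset ℤ).card ≤ 2 :=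
      (Finset.card_insert_le _ _).trans (by simp)
    simp only [Finset.card_product]
    calc ({xy.1, xy.2} : Finset ℤ).card * (({xy.1, xy.2} : Finset ℤ).card * (({xy.1, xy.2} : Finset ℤ).card * ({xy.1, xy.2} : Finset ℤ).card)) ≤ 2*(2*(2*2)) := by
          exact Nat.mul_le_mul h2 (Nat.mul_le_mul h2 (Nat.mul_le_mul h2 h2))
      _ = 16 := by norm_num
  calc ∑ xy ∈ F ×ˢ F, (({xy.1, xy.2} ×ˢ {xy.1, xy.2} ×ˢ {xy.1, xy.2} ×ˢ ({xy.1, xy.2} : Finset ℤ)).card)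
      ≤ ∑ _xy ∈ F ×ˢ F, 16 := Finset.sum_le_sum (fun xy _ => this xy)
    _ = 16 * F.card ^ 2 := by
        rw [Finset.sum_const, Finset.card_product, smul_eq_mul]; ring


lemma integrable_of_bdd {Ω : Type*} [MeasurableSpace Ω] {μ : Measure Ω} [IsFiniteMeasure μ]
    {φ : Ω → ℝ} {C : ℝ} (hm : Measurable φ) (hb : ∀ ω, |φ ω| ≤ C) : Integrable φ μ :=
  Integrable.mono' (integrable_const C) hm.aestronglyMeasurable (ae_of_all _ hb)

section FM
variable {Ω : Type*} [MeasurableSpace Ω] (μ : Measure Ω) [IsProbabilityMeasure μ]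

lemma fourth_moment (F : Finset ℤ) (Z : ℤ → Ω → ℝ) (C : ℝ) (hC : 0 ≤ C)
    (hmeas : ∀ s, Measurable (Z s))
    (hbdd : ∀ s ω, |Z s ω| ≤ C)
    (hfact : ∀ a b c d : ℤ, a ∈ F → b ∈ F → c ∈ F → d ∈ F → a ≠ b → a ≠ c → a ≠ d →
      ∫ ω, Z a ω * Z b ω * Z c ω * Z d ω ∂μ = 0) :
    ∫ ω, (∑ s ∈ F, Z s ω) ^ 4 ∂μ ≤ 16 * C ^ 4 * (F.card : ℝ) ^ 2 := by
  classical
  set Q : Finset (ℤ × ℤ × ℤ × ℤ) := F ×ˢ F ×ˢ F ×ˢ F with hQ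
  set term : (ℤ × ℤ × ℤ × ℤ) → Ω → ℝ :=
    fun q ω => Z q.1 ω * Z q.2.1 ω * Z q.2.2.1 ω * Z q.2.2.2 ω with hterm
  have habs : ∀ q ω, |term q ω| ≤ C ^ 4 := by
    intro q ω
    have h4 : |term q ω| = |Z q.1 ω| * |Z q.2.1 ω| * |Z q.2.2.1 ω| * |Z q.2.2.2 ω| := by
      simp [hterm, abs_mul]
    rw [h4, show C^4 = C*C*C*C by ring]
    have h1 := hbdd q.1 ω; have h2 := hbdd q.2.1 ω
    have h3 := hbdd q.2.2.1 ω; have h4' := hbdd q.2.2.2 ω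
    have := abs_nonneg (Z q.1 ω)
    gcongr <;> first | exact abs_nonneg _ | assumption
  have hint : ∀ q, Integrable (term q) μ :=
    fun q => integrable_of_bdd (((((hmeas _).mul (hmeas _)).mul (hmeas _)).mul (hmeas _))) (habs q)
  have expand : ∀ ω, (∑ s ∈ F, Z s ω) ^ 4 = ∑ q ∈ Q, term q ω := by
    intro ω
    rw [hQ, Finset.sum_product, ]
    simp only [Finset.sum_product]
    rw [show (∑ s ∈ F, Z s ω)^4
      = (∑ s ∈ F, Z s ω)*(∑ s ∈ F, Z s ω)*(∑ s ∈ F, Z s ω)*(∑ s ∈ F, Z s ω) by ring]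
    simp only [Finset.sum_mul, Finset.mul_sum]
    exact Finset.sum_congr rfl fun a _ => Finset.sum_congr rfl fun b _ =>
      Finset.sum_congr rfl fun c _ => Finset.sum_congr rfl fun d _ => by ring
  have key : ∫ ω, (∑ s ∈ F, Z s ω) ^ 4 ∂μ = ∑ q ∈ Q, ∫ ω, term q ω ∂μ := by
    rw [show (fun ω => (∑ s ∈ F, Z s ω) ^ 4) = fun ω => ∑ q ∈ Q, term q ω from funext expand]
    exact integral_finset_sum Q fun q _ => hint q
  set Good : (ℤ × ℤ × ℤ × ℤ) → Prop := fun q =>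
      (q.1 = q.2.1 ∨ q.1 = q.2.2.1 ∨ q.1 = q.2.2.2) ∧
      (q.2.1 = q.1 ∨ q.2.1 = q.2.2.1 ∨ q.2.1 = q.2.2.2) ∧
      (q.2.2.1 = q.1 ∨ q.2.2.1 = q.2.1 ∨ q.2.2.1 = q.2.2.2) ∧
      (q.2.2.2 = q.1 ∨ q.2.2.2 = q.2.1 ∨ q.2.2.2 = q.2.2.1) with hGood
  have hterm_le : ∀ q ∈ Q, ∫ ω, term q ω ∂μ ≤ if Good q then C ^ 4 else 0 := by
    rintro ⟨a, b, c, d⟩ hq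
    simp only [hQ, Finset.mem_product] at hq
    obtain ⟨haF, hbF, hcF, hdF⟩ := hq
    by_cases hg : Good (a, b, c, d)
    · rw [if_pos hg]
      calc ∫ ω, term (a,b,c,d) ω ∂μ ≤ |∫ ω, term (a,b,c,d) ω ∂μ| := le_abs_self _
        _ ≤ C ^ 4 := by
            rw [← Real.norm_eq_abs]
            calc ‖∫ ω, term (a,b,c,d) ω ∂μ‖ ≤ C^4 * (μ Set.univ).toReal :=
              norm_integral_le_of_norm_le_const (ae_of_all _ fun ω => by
                rw [Real.norm_eq_abs]; exact habs _ ω)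
            _ = C ^ 4 := by simp
    · rw [if_neg hg]
      simp only [hGood, not_and_or, not_or] at hg
      have hre : ∀ a' b' c' d' : ℤ, a' ∈ F → b' ∈ F → c' ∈ F → d' ∈ F →
          a' ≠ b' → a' ≠ c' → a' ≠ d' →
          (∀ ω, term (a,b,c,d) ω = Z a' ω * Z b' ω * Z c' ω * Z d' ω) →
          ∫ ω, term (a,b,c,d) ω ∂μ = 0 := by
        intro a' b' c' d' h1 h2 h3 h4 n1 n2 n3 heq
        rw [show (fun ω => term (a,b,c,d) ω) = fun ω => Z a' ω * Z b' ω * Z c' ω * Z d' ω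
          from funext heq]
        exact hfact a' b' c' d' h1 h2 h3 h4 n1 n2 n3
      refine le_of_eq ?_
      rcases hg with ⟨n1, n2, n3⟩ | ⟨n1, n2, n3⟩ | ⟨n1, n2, n3⟩ | ⟨n1, n2, n3⟩
      · exact hre a b c d haF hbF hcF hdF n1 n2 n3 (fun ω => rfl)
      · exact hre b a c d hbF haF hcF hdF n1 n2 n3 (fun ω => by
          show Z a ω * Z b ω * Z c ω * Z d ω = _; ring)
      · exact hre c a b d hcF haF hbF hdF n1 n2 n3 (fun ω => by
          show Z a ω * Z b ω * Z c ω * Z d ω = _; ring)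
      · exact hre d a b c hdF haF hbF hcF n1 n2 n3 (fun ω => by
          show Z a ω * Z b ω * Z c ω * Z d ω = _; ring)
  rw [key]
  calc ∑ q ∈ Q, ∫ ω, term q ω ∂μ ≤ ∑ q ∈ Q, if Good q then C ^ 4 else 0 :=
        Finset.sum_le_sum hterm_le
    _ = ∑ q ∈ Q.filter Good, C ^ 4 := (Finset.sum_filter _ _).symm
    _ = ((Q.filter Good).card : ℝ) * C ^ 4 := by rw [Finset.sum_const]; simp [mul_comm]
    _ ≤ ((16 * F.card ^ 2 : ℕ) : ℝ) * C ^ 4 := by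
        apply mul_le_mul_of_nonneg_right _ (pow_nonneg hC 4)
        have hcard : (Q.filter Good).card ≤ 16 * F.card ^ 2 := good_card_le F
        exact_mod_cast hcard
    _ = 16 * C ^ 4 * (F.card : ℝ) ^ 2 := by push_cast; ring
end FM


section Perm
variable {X : Type*} [MeasurableSpace X] {T : Equiv.Perm X}

lemma measurable_perm_npow (hT : Measurable T) (n : ℕ) : Measurable ⇑(T ^ n) := by
  induction n with
  | zero => simpa using measurable_id
  | succ n ih =>
      rw [pow_succ, Equiv.Perm.coe_mul]
      exact ih.comp hT

lemma measurable_perm_zpow (hT : Measurable T) (hT' : Measurable T.symm) (i : ℤ) :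
    Measurable ⇑(T ^ i) := by
  cases i with
  | ofNat n => rw [Int.ofNat_eq_coe, zpow_natCast]; exact measurable_perm_npow hT n
  | negSucc n =>
      rw [zpow_negSucc, ← inv_pow]
      have : (T⁻¹ : Equiv.Perm X) = T.symm := rfl
      rw [this]
      exact measurable_perm_npow hT' (n+1)

lemma measurable_perm_zpow_symm (hT : Measurable T) (hT' : Measurable T.symm) (i : ℤ) :
    Measurable ⇑(T ^ i).symm := by
  have : ⇑(T ^ i).symm = ⇑(T ^ (-i)) := by
    rw [← Equiv.Perm.inv_def, ← zpow_neg]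
  rw [this]
  exact measurable_perm_zpow hT hT' (-i)

lemma pres_perm_zpow {μ : Measure X} (hT : Measurable T) (hT' : Measurable T.symm)
    (hTpres : MeasurePreserving (⇑T) μ μ) (i : ℤ) :
    MeasurePreserving ⇑(T ^ i) μ μ := by
  have hsymm : MeasurePreserving (⇑T.symm) μ μ := by
    refine ⟨hT', ?_⟩
    have : Measure.map T.symm (Measure.map T μ) = μ := by
      rw [Measure.map_map hT' hT]
      have : (⇑T.symm ∘ ⇑T) = id := by funext x; simp
      rw [this, Measure.map_id]
    rw [hTpres.map_eq] at this
    exact this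
  have hnat : ∀ (S : Equiv.Perm X), Measurable ⇑S → MeasurePreserving (⇑S) μ μ →
      ∀ n : ℕ, MeasurePreserving ⇑(S ^ n) μ μ := by
    intro S hS hSp n
    induction n with
    | zero => simpa using MeasurePreserving.id μ
    | succ n ih =>
        rw [pow_succ, Equiv.Perm.coe_mul]
        exact ih.comp hSp
  cases i with
  | ofNat n => rw [Int.ofNat_eq_coe, zpow_natCast]; exact hnat T hT hTpres n
  | negSucc n =>
      rw [zpow_negSucc, ← inv_pow]
      have : (T⁻¹ : Equiv.Perm X) = T.symm := rfl
      rw [this]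
      exact hnat _ hT' hsymm (n+1)

/-- `T^i` as a measurable equiv. -/
noncomputable def permZpowME (hT : Measurable T) (hT' : Measurable T.symm) (i : ℤ) : X ≃ᵐ X where
  toEquiv := (T ^ i : Equiv.Perm X)
  measurable_toFun := measurable_perm_zpow hT hT' i
  measurable_invFun := measurable_perm_zpow_symm hT hT' i

lemma integral_comp_perm_zpow {μ : Measure X} (hT : Measurable T) (hT' : Measurable T.symm)
    (hTpres : MeasurePreserving (⇑T) μ μ) (i : ℤ) (g : X → ℝ) :
    ∫ x, g ((T ^ i) x) ∂μ = ∫ x, g x ∂μ :=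
  (pres_perm_zpow hT hT' hTpres i).integral_comp
    (MeasurableEquiv.measurableEmbedding (permZpowME hT hT' i)) g

lemma preimage_zpow_image (j i : ℤ) (p : Set X) :
    ⇑(T ^ j) ⁻¹' (⇑(T ^ i) '' p) = ⇑(T ^ (i - j)) '' p := by
  have h1 : ⇑(T ^ i) '' p = ⇑(T ^ j) '' (⇑(T ^ (i - j)) '' p) := by
    rw [← Set.image_comp, ← Equiv.Perm.coe_mul, ← zpow_add]
    norm_num
  rw [h1, Equiv.preimage_image]
end Perm


lemma exists_good_g
    {X : Type*} [MetricSpace X] [CompactSpace X] [MeasurableSpace X] [Nonempty X]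
    (T : Equiv.Perm X)
    (P : Finset (Set X))
    (hPdisj : (↑P : Set (Set X)).PairwiseDisjoint id)
    (hPcover : ⋃ p ∈ P, p = Set.univ)
    (p₀ : Set X) (hp₀ : p₀ ∈ P)
    (f : X → ℝ) (ε δ : ℝ) (m : ℕ)
    (hdm : ∀ s : ℤ → Set X, (∀ i, s i ∈ P) →
      Metric.diam (⋂ i ∈ Finset.Icc (1 - (m:ℤ)) ((m:ℤ) - 1), ⇑(T ^ i) '' s i) ≤ δ)
    (hfd : ∀ x y : X, dist x y ≤ δ → |f x - f y| ≤ ε) :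
    ∃ g : X → ℝ,
      (∀ x, |f x - g x| ≤ ε) ∧
      (∀ x, ∃ y, g x = f y) ∧
      (∀ j : ℤ, ∀ B : Set ℝ,
        MeasurableSet[⨆ i ∈ Set.Icc (1-(m:ℤ)-j) ((m:ℤ)-1-j),
          MeasurableSpace.generateFrom ((fun p => ⇑(T ^ i) '' p) '' ↑P)]
          ((fun x => g ((T ^ j) x)) ⁻¹' B)) := by
  classical
  set J : Finset ℤ := Finset.Icc (1 - (m:ℤ)) ((m:ℤ) - 1) with hJ
  -- the element of P containing a point
  have hex : ∀ y : X, ∃ p, p ∈ P ∧ y ∈ p := by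
    intro y
    have : y ∈ ⋃ p ∈ P, p := by rw [hPcover]; trivial
    simpa using this
  set pt : X → Set X := fun y => (hex y).choose with hptdef
  have hpt1 : ∀ y, pt y ∈ P := fun y => (hex y).choose_spec.1
  have hpt2 : ∀ y, y ∈ pt y := fun y => (hex y).choose_spec.2
  have hpt3 : ∀ y, ∀ p ∈ P, y ∈ p → pt y = p := by
    intro y p hp hyp
    by_contra hne
    have hd := hPdisj (hpt1 y) hp hne
    exact Set.disjoint_left.mp hd (hpt2 y) hyp
  -- itinerary
  set It : X → ℤ → Set X := fun x i => pt ((T ^ i).symm x) with hItdef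
  have hIt_P : ∀ x i, It x i ∈ P := fun x i => hpt1 _
  have hIt_mem : ∀ x i, x ∈ ⇑(T ^ i) '' (It x i) := by
    intro x i
    rw [Equiv.image_eq_preimage_symm]
    exact hpt2 _
  have hIt_eq : ∀ (x : X) (i : ℤ) (p : Set X), p ∈ P → x ∈ ⇑(T ^ i) '' p → It x i = p := by
    intro x i p hp hxp
    rw [Equiv.image_eq_preimage_symm] at hxp
    exact hpt3 _ p hp hxp
  have hIt_shift : ∀ (x : X) (j i : ℤ), It ((T ^ j) x) i = It x (i - j) := by
    intro x j i
    apply hIt_eq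
    · exact hIt_P x (i - j)
    · rw [← Set.mem_preimage, preimage_zpow_image j i]
      exact hIt_mem x (i - j)
  -- padding and atoms
  set pad : (ℤ → Set X) → (ℤ → Set X) := fun s i => if i ∈ J then s i else p₀ with hpaddef
  set A : (ℤ → Set X) → Set X := fun s => ⋂ i ∈ J, ⇑(T ^ i) '' s i with hAdef
  have hpad_P : ∀ s : ℤ → Set X, (∀ i ∈ J, s i ∈ P) → ∀ i, pad s i ∈ P := by
    intro s hs i
    by_cases h : i ∈ J <;> simp [hpaddef, h]
    · exact hs i h
    · exact hp₀
  have hmemA : ∀ x : X, x ∈ A (pad (It x)) := by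
    intro x
    rw [hAdef]
    simp only [Set.mem_iInter]
    intro i hi
    rw [hpaddef]
    simp only [hi, if_pos]
    exact hIt_mem x i
  set rep : (ℤ → Set X) → X := fun s =>
    if h : (A s).Nonempty then h.choose else Classical.arbitrary X with hrepdef
  set g : X → ℝ := fun x => f (rep (pad (It x))) with hgdef
  refine ⟨g, ?_, ?_, ?_⟩
  · -- approximation
    intro x
    have hxA := hmemA x
    have hne : (A (pad (It x))).Nonempty := ⟨x, hxA⟩
    have hrepA : rep (pad (It x)) ∈ A (pad (It x)) := by
      rw [hrepdef]; simp only [hne, dif_pos]; exact hne.choose_spec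
    have hdiam : Metric.diam (A (pad (It x))) ≤ δ := by
      apply hdm
      exact hpad_P (It x) (fun i _ => hIt_P x i)
    have hdist : dist x (rep (pad (It x))) ≤ δ :=
      le_trans (Metric.dist_le_diam_of_mem Metric.isBounded_of_compactSpace hxA hrepA) hdiam
    exact hfd _ _ hdist
  · exact fun x => ⟨rep (pad (It x)), rfl⟩
  · -- measurability
    intro j B
    set N := ⨆ i ∈ Set.Icc (1-(m:ℤ)-j) ((m:ℤ)-1-j),
      MeasurableSpace.generateFrom ((fun p => ⇑(T ^ i) '' p) '' (↑P : Set (Set X))) with hN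
    set S : Set (ℤ → Set X) :=
      {c | (∀ i ∈ J, c i ∈ P) ∧ (∀ i ∉ J, c i = p₀) ∧ f (rep c) ∈ B} with hS
    set Cyl : (ℤ → Set X) → Set X := fun c => ⋂ i ∈ J, ⇑(T ^ (i - j)) '' c i with hCyl
    -- the preimage is the union of cylinders
    have hpre : (fun x => g ((T ^ j) x)) ⁻¹' B = ⋃ c ∈ S, Cyl c := by
      ext x
      constructor
      · intro hx
        simp only [Set.mem_preimage] at hx
        have hcx : pad (It ((T ^ j) x)) = pad (fun i => It x (i - j)) := by
          funext i
          rw [hpaddef]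
          by_cases h : i ∈ J <;> simp [h, hIt_shift]
        rw [hgdef] at hx
        simp only at hx
        rw [hcx] at hx
        refine Set.mem_biUnion (?_ : pad (fun i => It x (i-j)) ∈ S) ?_
        · refine ⟨?_, ?_, hx⟩
          · intro i hi; rw [hpaddef]; simp only [hi, if_pos]; exact hIt_P x _
          · intro i hi; rw [hpaddef]; simp only [hi, if_neg]; rfl
        · rw [hCyl]
          simp only [Set.mem_iInter]
          intro i hi
          rw [hpaddef]
          simp only [hi, if_pos]
          exact hIt_mem x (i - j)
      · intro hx
        simp only [Set.mem_iUnion] at hx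
        obtain ⟨c, hcS, hxc⟩ := hx
        obtain ⟨hc1, hc2, hc3⟩ := hcS
        have hceq : pad (It ((T ^ j) x)) = c := by
          funext i
          rw [hpaddef]
          by_cases h : i ∈ J
          · simp only [h, if_pos, hIt_shift]
            apply hIt_eq
            · exact hc1 i h
            · rw [hCyl] at hxc
              simp only [Set.mem_iInter] at hxc
              exact hxc i h
          · simp only [h, if_neg]
            exact (hc2 i h).symm
        simp only [Set.mem_preimage]
        rw [hgdef]
        simp only
        rw [hceq]
        exact hc3
    rw [hpre]
    -- S is finite
    have hSfin : S.Finite := by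
      have hsub : S ⊆ {c : ℤ → Set X | (∀ i ∈ J, c i ∈ P) ∧ (∀ i ∉ J, c i = p₀)} :=
        fun c hc => ⟨hc.1, hc.2.1⟩
      refine Set.Finite.subset ?_ hsub
      have hinj : Set.InjOn (fun (c : ℤ → Set X) (i : J) => c i)
          {c : ℤ → Set X | (∀ i ∈ J, c i ∈ P) ∧ (∀ i ∉ J, c i = p₀)} := by
        intro c hc c' hc' hcc
        funext i
        by_cases h : i ∈ J
        · exact congrFun hcc ⟨i, h⟩
        · rw [hc.2 i h, hc'.2 i h]
      apply Set.Finite.of_finite_image _ hinj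
      apply Set.Finite.subset (Set.Finite.pi (fun _ : J => P.finite_toSet))
      rintro _ ⟨c, hc, rfl⟩
      intro i _
      exact hc.1 i i.2
    -- each cylinder is N-measurable
    apply MeasurableSet.biUnion hSfin.countable
    intro c hc
    rw [hCyl]
    apply Finset.measurableSet_biInter
    intro i hi
    have hgen : MeasurableSet[MeasurableSpace.generateFrom
        ((fun p => ⇑(T ^ (i - j)) '' p) '' (↑P : Set (Set X)))] (⇑(T ^ (i - j)) '' c i) :=
      MeasurableSpace.measurableSet_generateFrom ⟨c i, hc.1 i hi, rfl⟩
    have hle : MeasurableSpace.generateFrom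
        ((fun p => ⇑(T ^ (i - j)) '' p) '' (↑P : Set (Set X))) ≤ N := by
      rw [hN]
      have hmem : i - j ∈ Set.Icc (1-(m:ℤ)-j) ((m:ℤ)-1-j) := by
        rw [hJ] at hi
        simp only [Finset.mem_Icc] at hi
        simp only [Set.mem_Icc]
        omega
      exact le_iSup₂ (f := fun k (_ : k ∈ Set.Icc (1-(m:ℤ)-j) ((m:ℤ)-1-j)) =>
        MeasurableSpace.generateFrom ((fun p => ⇑(T ^ k) '' p) '' (↑P : Set (Set X)))) (i - j) hmem
    exact hle _ hgen

set_option maxHeartbeats 1000000 in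
/-- Let `(X,d)` be a compact metric space with a Borel probability measure `μ` and `T` an
invertible measure-preserving transformation admitting a finite measurable partition `P`
whose iterates `T^i P`, `i ∈ ℤ`, are jointly independent (Bernoulli property), and such
that the diameters of the atoms of `P_n = ⋁_{i=1-n}^{n-1} T^i P` tend to `0`. Then for
every continuous `f : X → ℝ` all moving averages `M(v_n, L_n)^T f` (with `(L_n)` strictly
increasing positive) converge a.e. to `∫ f dμ`. -/
theorem stmt10
    {X : Type*} [MetricSpace X] [CompactSpace X]
    [MeasurableSpace X] [OpensMeasurableSpace X]
    (μ : Measure X) [IsProbabilityMeasure μ]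
    (T : Equiv.Perm X) (hT : Measurable (⇑T)) (hT' : Measurable (⇑T.symm))
    (hTpres : MeasurePreserving (⇑T) μ μ)
    (P : Finset (Set X))
    (hPmeas : ∀ p ∈ P, MeasurableSet p)
    (hPdisj : (↑P : Set (Set X)).PairwiseDisjoint id)
    (hPcover : ⋃ p ∈ P, p = Set.univ)
    (hindep : ProbabilityTheory.iIndep
      (fun i : ℤ => MeasurableSpace.generateFrom ((fun p => (⇑(T ^ i)) '' p) '' ↑P)) μ)
    (hdiam : ∀ ε : ℝ, 0 < ε → ∃ N : ℕ, ∀ n ≥ N, ∀ s : ℤ → Set X, (∀ i, s i ∈ P) →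
      Metric.diam (⋂ i ∈ Finset.Icc (1 - (n : ℤ)) ((n : ℤ) - 1), (⇑(T ^ i)) '' s i) ≤ ε)
    (f : X → ℝ) (hf : Continuous f)
    (v : ℕ → ℤ) (L : ℕ → ℕ) (hLpos : ∀ n, 0 < L n) (hLmono : StrictMono L) :
    ∀ᵐ x ∂μ, Tendsto (fun n => movAvg T f (v n) (L n) x) atTop
      (nhds (∫ x, f x ∂μ)) := by
  haveI hXne : Nonempty X := by
    by_contra h
    rw [not_nonempty_iff] at h
    have h1 : μ Set.univ = 1 := measure_univ
    rw [Set.univ_eq_empty_iff.mpr h] at h1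
    simp at h1
  set 𝔪 : ℤ → MeasurableSpace X :=
    fun i : ℤ => MeasurableSpace.generateFrom ((fun p => (⇑(T ^ i)) '' p) '' ↑P) with h𝔪
  have hindep' : ProbabilityTheory.iIndep 𝔪 μ := hindep
  have h_le : ∀ i, 𝔪 i ≤ ‹MeasurableSpace X› := by
    intro i
    apply MeasurableSpace.generateFrom_le
    rintro _ ⟨p, hp, rfl⟩
    show MeasurableSet (⇑(T ^ i) '' p)
    rw [Equiv.image_eq_preimage_symm]
    exact measurable_perm_zpow_symm hT hT' i (hPmeas p hp)
  obtain ⟨Cf, hCf0, hCf⟩ : ∃ C : ℝ, 0 ≤ C ∧ ∀ y, |f y| ≤ C := by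
    obtain ⟨y₀, -, hy₀⟩ := isCompact_univ.exists_isMaxOn Set.univ_nonempty hf.abs.continuousOn
    exact ⟨|f y₀|, abs_nonneg _, fun y => hy₀ (Set.mem_univ y)⟩
  have hfint : Integrable f μ := integrable_of_bdd hf.measurable hCf
  obtain ⟨p₀, hp₀⟩ : ∃ p, p ∈ P := by
    have : (Classical.arbitrary X) ∈ ⋃ p ∈ P, p := by rw [hPcover]; trivial
    obtain ⟨p, hp, -⟩ := Set.mem_iUnion₂.mp this
    exact ⟨p, hp⟩
  -- main per-ε statement
  have main : ∀ ε : ℝ, 0 < ε → ∀ᵐ x ∂μ, ∀ᶠ n in atTop,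
      |movAvg T f (v n) (L n) x - ∫ y, f y ∂μ| ≤ 3 * ε := by
    intro ε hε
    obtain ⟨δ, hδpos, hδ⟩ : ∃ δ > 0, ∀ x y : X, dist x y ≤ δ → |f x - f y| ≤ ε := by
      have huc : UniformContinuous f := CompactSpace.uniformContinuous_of_continuous hf
      rw [Metric.uniformContinuous_iff] at huc
      obtain ⟨δ', hδ'pos, hδ'⟩ := huc ε hε
      refine ⟨δ'/2, by linarith, fun x y hxy => ?_⟩
      have h1 : dist x y < δ' := lt_of_le_of_lt hxy (by linarith)
      have h2 := hδ' h1
      rw [Real.dist_eq] at h2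
      exact le_of_lt h2
    obtain ⟨N₀, hN₀⟩ := hdiam δ hδpos
    set m : ℕ := max N₀ 1 with hm
    have hm1 : 1 ≤ m := le_max_right _ _
    obtain ⟨g, hg_approx, hg_val, hg_meas⟩ :=
      exists_good_g T P hPdisj hPcover p₀ hp₀ f ε δ m
        (fun s hs => hN₀ m (le_max_left _ _) s hs) hδ
    have hgbdd : ∀ x, |g x| ≤ Cf := by
      intro x
      obtain ⟨y, hy⟩ := hg_val x
      rw [hy]; exact hCf y
    set Ic : ℤ → Set ℤ := fun s => Set.Icc (1-(m:ℤ)-s) ((m:ℤ)-1-s) with hIc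
    have hsup_le : ∀ (S : Set ℤ), (⨆ i ∈ S, 𝔪 i) ≤ ‹MeasurableSpace X› :=
      fun S => iSup₂_le fun i _ => h_le i
    have hgTmeas : ∀ s : ℤ, Measurable[⨆ i ∈ Ic s, 𝔪 i] (fun x => g ((T ^ s) x)) :=
      fun s B _ => hg_meas s B
    have hgmeas : Measurable g := by
      have h0 := hgTmeas 0
      have he : (fun x => g ((T ^ (0:ℤ)) x)) = g := by
        funext x; rw [zpow_zero]; rfl
      rw [he] at h0
      exact h0.mono (hsup_le _) le_rfl
    have hgint : Integrable g μ := integrable_of_bdd hgmeas hgbdd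
    set I : ℝ := ∫ y, g y ∂μ with hI
    have hIabs : |I| ≤ Cf := by
      rw [← Real.norm_eq_abs]
      calc ‖∫ y, g y ∂μ‖ ≤ Cf * (μ Set.univ).toReal :=
            norm_integral_le_of_norm_le_const (ae_of_all _ fun y => by
              rw [Real.norm_eq_abs]; exact hgbdd y)
        _ = Cf := by simp
    have hIf : |I - ∫ y, f y ∂μ| ≤ ε := by
      have h1 : I - ∫ y, f y ∂μ = ∫ y, (g y - f y) ∂μ := (integral_sub hgint hfint).symm
      rw [h1, ← Real.norm_eq_abs]
      calc ‖∫ y, (g y - f y) ∂μ‖ ≤ ε * (μ Set.univ).toReal :=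
            norm_integral_le_of_norm_le_const (ae_of_all _ fun y => by
              rw [Real.norm_eq_abs, abs_sub_comm]; exact hg_approx y)
        _ = ε := by simp
    set C2 : ℝ := 2 * Cf with hC2
    have hC2nn : 0 ≤ C2 := by positivity
    set Z : ℤ → X → ℝ := fun s x => g ((T ^ s) x) - I with hZ
    have hZmeas : ∀ s, Measurable (Z s) :=
      fun s => (hgmeas.comp (measurable_perm_zpow hT hT' s)).sub measurable_const
    have hZbdd : ∀ s x, |Z s x| ≤ C2 := by
      intro s x
      calc |g ((T ^ s) x) - I| ≤ |g ((T ^ s) x)| + |I| := abs_sub _ _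
        _ ≤ Cf + Cf := add_le_add (hgbdd _) hIabs
        _ = C2 := by rw [hC2]; ring
    have hZN : ∀ s, Measurable[⨆ i ∈ Ic s, 𝔪 i] (Z s) :=
      fun s => (hgTmeas s).sub measurable_const
    have hZint : ∀ s, Integrable (Z s) μ :=
      fun s => integrable_of_bdd (hZmeas s) (hZbdd s)
    have hZzero : ∀ s, ∫ x, Z s x ∂μ = 0 := by
      intro s
      have hint1 : Integrable (fun x => g ((T ^ s) x)) μ :=
        integrable_of_bdd (hgmeas.comp (measurable_perm_zpow hT hT' s)) (fun x => hgbdd _)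
      have heq : ∫ x, Z s x ∂μ = ∫ x, (g ((T ^ s) x) - I) ∂μ := rfl
      rw [heq, integral_sub hint1 (integrable_const I)]
      rw [integral_comp_perm_zpow hT hT' hTpres s g, integral_const]
      simp [hI]
    -- factorization of separated quadruples
    have hfact0 : ∀ a b c d : ℤ, 2*(m:ℤ)-1 ≤ |a-b| → 2*(m:ℤ)-1 ≤ |a-c| → 2*(m:ℤ)-1 ≤ |a-d| →
        ∫ x, Z a x * Z b x * Z c x * Z d x ∂μ = 0 := by
      intro a b c d hab hac had
      set ψ : X → ℝ := fun x => Z b x * Z c x * Z d x with hψ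
      have hψmeas : Measurable[⨆ i ∈ (Ic b ∪ Ic c ∪ Ic d), 𝔪 i] ψ := by
        have hble : (⨆ i ∈ Ic b, 𝔪 i) ≤ ⨆ i ∈ (Ic b ∪ Ic c ∪ Ic d), 𝔪 i :=
          biSup_mono (fun i hi => Or.inl (Or.inl hi))
        have hcle : (⨆ i ∈ Ic c, 𝔪 i) ≤ ⨆ i ∈ (Ic b ∪ Ic c ∪ Ic d), 𝔪 i :=
          biSup_mono (fun i hi => Or.inl (Or.inr hi))
        have hdle : (⨆ i ∈ Ic d, 𝔪 i) ≤ ⨆ i ∈ (Ic b ∪ Ic c ∪ Ic d), 𝔪 i :=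
          biSup_mono (fun i hi => Or.inr hi)
        exact (((hZN b).mono hble le_rfl).mul ((hZN c).mono hcle le_rfl)).mul
          ((hZN d).mono hdle le_rfl)
      have hdisj : Disjoint (Ic a) (Ic b ∪ Ic c ∪ Ic d) := by
        rw [Set.disjoint_left]
        intro i hia hibcd
        simp only [hIc, Set.mem_union, Set.mem_Icc] at hia hibcd
        rcases le_abs.mp hab with h1 | h1 <;> rcases le_abs.mp hac with h2 | h2 <;>
          rcases le_abs.mp had with h3 | h3 <;> rcases hibcd with (h|h)|h <;> omega
      have hIndep : Indep (⨆ i ∈ Ic a, 𝔪 i) (⨆ i ∈ (Ic b ∪ Ic c ∪ Ic d), 𝔪 i) μ :=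
        indep_iSup_of_disjoint h_le hindep' hdisj
      have hIF : IndepFun (Z a) ψ μ := by
        rw [IndepFun_iff_Indep]
        exact indep_of_indep_of_le_left
          (indep_of_indep_of_le_right hIndep hψmeas.comap_le) (hZN a).comap_le
      have hψint : Integrable ψ μ := by
        apply integrable_of_bdd (μ := μ) (((hZmeas b).mul (hZmeas c)).mul (hZmeas d))
        intro x
        show |Z b x * Z c x * Z d x| ≤ C2^3
        rw [abs_mul, abs_mul, show C2^3 = C2*C2*C2 by ring]
        have h1 := hZbdd b x; have h2 := hZbdd c x; have h3 := hZbdd d x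
        gcongr <;> first | exact abs_nonneg _ | exact mul_nonneg (abs_nonneg _) (abs_nonneg _) | assumption
      have hmul := IndepFun.integral_fun_mul_eq_mul_integral hIF (hZint a).aestronglyMeasurable hψint.aestronglyMeasurable
      have hre : (fun x => Z a x * Z b x * Z c x * Z d x) = fun x => Z a x * ψ x := by
        funext x; rw [hψ]; ring
      calc ∫ x, Z a x * Z b x * Z c x * Z d x ∂μ
          = ∫ x, Z a x * ψ x ∂μ := by rw [hre]
        _ = (∫ x, Z a x ∂μ) * ∫ x, ψ x ∂μ := hmul
        _ = 0 := by rw [hZzero a, zero_mul]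
    set r : ℕ := 2*m-1 with hr
    have hrpos : 0 < r := by omega
    have hrz : (r:ℤ) = 2*(m:ℤ)-1 := by
      have : 1 ≤ m := hm1
      omega
    -- the centered sums
    set S : ℕ → X → ℝ := fun n x => ∑ j ∈ Finset.range (L n), Z (v n + 1 + (j:ℤ)) x with hS
    have hSmeas : ∀ n, Measurable (S n) := by
      intro n
      apply Finset.measurable_sum
      intro j _
      exact hZmeas _
    have hS4int : ∀ n, Integrable (fun x => (S n x)^4) μ := by
      intro n
      apply integrable_of_bdd ((hSmeas n).pow_const 4)
      intro x
      have h1 : |S n x| ≤ (L n : ℝ) * C2 := by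
        calc |S n x| ≤ ∑ j ∈ Finset.range (L n), |Z (v n + 1 + (j:ℤ)) x| :=
              Finset.abs_sum_le_sum_abs _ _
          _ ≤ ∑ _j ∈ Finset.range (L n), C2 := Finset.sum_le_sum fun j _ => hZbdd _ x
          _ = (L n : ℝ) * C2 := by rw [Finset.sum_const, Finset.card_range]; simp
      calc |(S n x)^4| = |S n x|^4 := by rw [abs_pow]
        _ ≤ ((L n : ℝ) * C2)^4 := by
            apply pow_le_pow_left₀ (abs_nonneg _) h1
      -- bound is ((L n) * C2)^4, matches `integrable_of_bdd` C
    -- fourth moment bound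
    have hmom : ∀ n, ∫ x, (S n x)^4 ∂μ ≤ (16 * C2^4 * (r:ℝ)^4) * (L n : ℝ)^2 := by
      intro n
      set W : ℕ := L n with hW
      set Sc : ℕ → X → ℝ := fun c x =>
        ∑ j ∈ (Finset.range W).filter (fun j => j % r = c), Z (v n + 1 + (j:ℤ)) x with hSc
      have hsplit : ∀ x, S n x = ∑ c ∈ Finset.range r, Sc c x := by
        intro x
        rw [hS]
        exact (Finset.sum_fiberwise_of_maps_to
          (fun j _ => Finset.mem_range.mpr (Nat.mod_lt j hrpos)) _).symm
      have hScmeas : ∀ c, Measurable (Sc c) := by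
        intro c
        apply Finset.measurable_sum
        intro j _
        exact hZmeas _
      have hScbdd : ∀ c x, |Sc c x| ≤ (W:ℝ) * C2 := by
        intro c x
        calc |Sc c x| ≤ ∑ j ∈ (Finset.range W).filter (fun j => j % r = c),
              |Z (v n + 1 + (j:ℤ)) x| := Finset.abs_sum_le_sum_abs _ _
          _ ≤ ∑ _j ∈ (Finset.range W).filter (fun j => j % r = c), C2 :=
              Finset.sum_le_sum fun j _ => hZbdd _ x
          _ = (((Finset.range W).filter (fun j => j % r = c)).card : ℝ) * C2 := by
              rw [Finset.sum_const]; simp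
          _ ≤ (W:ℝ) * C2 := by
              apply mul_le_mul_of_nonneg_right _ hC2nn
              exact_mod_cast (Finset.card_filter_le _ _).trans (le_of_eq (Finset.card_range W))
      have hSc4int : ∀ c, Integrable (fun x => (Sc c x)^4) μ := by
        intro c
        apply integrable_of_bdd ((hScmeas c).pow_const 4)
        intro x
        calc |(Sc c x)^4| = |Sc c x|^4 := by rw [abs_pow]
          _ ≤ ((W:ℝ) * C2)^4 := pow_le_pow_left₀ (abs_nonneg _) (hScbdd c x) 4
      have hSc4 : ∀ c ∈ Finset.range r, ∫ x, (Sc c x)^4 ∂μ ≤ 16*C2^4*(W:ℝ)^2 := by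
        intro c _
        set F : Finset ℤ :=
          ((Finset.range W).filter (fun j => j % r = c)).image
            (fun j : ℕ => v n + 1 + (j:ℤ)) with hF
        have hinj : ∀ j ∈ (Finset.range W).filter (fun j => j % r = c),
            ∀ j' ∈ (Finset.range W).filter (fun j => j % r = c),
            v n + 1 + (j:ℤ) = v n + 1 + (j':ℤ) → j = j' := by
          intro j _ j' _ h
          omega
        have hSceq : ∀ x, Sc c x = ∑ s ∈ F, Z s x := by
          intro x
          rw [hF, Finset.sum_image hinj]
        have hcard : (F.card : ℝ) ≤ (W:ℝ) := by
          have h1 : F.card ≤ W := by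
            calc F.card ≤ ((Finset.range W).filter (fun j => j % r = c)).card :=
                  Finset.card_image_le
              _ ≤ (Finset.range W).card := Finset.card_filter_le _ _
              _ = W := Finset.card_range W
          exact_mod_cast h1
        have hsep : ∀ {s t : ℤ}, s ∈ F → t ∈ F → s ≠ t → 2*(m:ℤ)-1 ≤ |s - t| := by
          intro s t hs ht hst
          rw [hF, Finset.mem_image] at hs ht
          obtain ⟨js, hjs, rfl⟩ := hs
          obtain ⟨jt, hjt, rfl⟩ := ht
          rw [Finset.mem_filter] at hjs hjt
          have hmod : (js:ℤ) % (r:ℤ) = (jt:ℤ) % (r:ℤ) := by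
            have h1 : js % r = jt % r := by rw [hjs.2, hjt.2]
            exact_mod_cast h1
          have hdvd : (r:ℤ) ∣ (js:ℤ) - (jt:ℤ) :=
            Int.ModEq.dvd (hmod.symm : Int.ModEq (r:ℤ) (jt:ℤ) (js:ℤ))
          have hne : (js:ℤ) ≠ (jt:ℤ) := by
            intro h
            exact hst (by rw [show (js:ℤ) = jt from h])
          have habs : (r:ℤ) ≤ |(js:ℤ) - jt| :=
            Int.le_of_dvd (abs_pos.mpr (sub_ne_zero.mpr hne)) ((dvd_abs _ _).mpr hdvd)
          calc 2*(m:ℤ)-1 = (r:ℤ) := hrz.symm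
            _ ≤ |(js:ℤ) - jt| := habs
            _ = |(v n + 1 + (js:ℤ)) - (v n + 1 + (jt:ℤ))| := by ring_nf
        have hFM := fourth_moment μ F Z C2 hC2nn hZmeas hZbdd ?_
        · calc ∫ x, (Sc c x)^4 ∂μ = ∫ x, (∑ s ∈ F, Z s x)^4 ∂μ := by
                apply integral_congr_ae
                apply ae_of_all
                intro x
                show (Sc c x)^4 = (∑ s ∈ F, Z s x)^4
                rw [hSceq x]
            _ ≤ 16 * C2^4 * (F.card : ℝ)^2 := hFM
            _ ≤ 16 * C2^4 * (W:ℝ)^2 := by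
                apply mul_le_mul_of_nonneg_left _ (by positivity)
                exact pow_le_pow_left₀ (by positivity) hcard 2
        · intro a b c' d' haF hbF hcF hdF nab nac nad
          apply hfact0
          · exact hsep haF hbF nab
          · exact hsep haF hcF nac
          · exact hsep haF hdF nad
      -- combine
      have hptwise : ∀ x, (S n x)^4 ≤ (r:ℝ)^3 * ∑ c ∈ Finset.range r, (Sc c x)^4 := by
        intro x
        have h1 : |S n x| ≤ ∑ c ∈ Finset.range r, |Sc c x| := by
          rw [hsplit x]
          exact Finset.abs_sum_le_sum_abs _ _
        have h2 : (∑ c ∈ Finset.range r, |Sc c x|)^4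
            ≤ (r:ℝ)^3 * ∑ c ∈ Finset.range r, |Sc c x|^4 := by
          have h3 := pow_sum_div_card_le_sum_pow (s := Finset.range r)
            (f := fun c => |Sc c x|) (fun _ _ => abs_nonneg _) 3
          rw [Finset.card_range] at h3
          rw [div_le_iff₀ (by positivity)] at h3
          calc (∑ c ∈ Finset.range r, |Sc c x|)^4
              ≤ (∑ c ∈ Finset.range r, |Sc c x|^4) * (r:ℝ)^3 := h3
            _ = (r:ℝ)^3 * ∑ c ∈ Finset.range r, |Sc c x|^4 := by ring
        calc (S n x)^4 = |S n x|^4 := by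
              rw [← abs_pow, abs_of_nonneg (by positivity)]
          _ ≤ (∑ c ∈ Finset.range r, |Sc c x|)^4 := pow_le_pow_left₀ (abs_nonneg _) h1 4
          _ ≤ (r:ℝ)^3 * ∑ c ∈ Finset.range r, |Sc c x|^4 := h2
          _ = (r:ℝ)^3 * ∑ c ∈ Finset.range r, (Sc c x)^4 := by
              congr 1
              apply Finset.sum_congr rfl
              intro c _
              rw [← abs_pow, abs_of_nonneg (by positivity)]
      have hintR : Integrable (fun x => (r:ℝ)^3 * ∑ c ∈ Finset.range r, (Sc c x)^4) μ := by
        apply Integrable.const_mul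
        exact integrable_finset_sum _ (fun c _ => hSc4int c)
      calc ∫ x, (S n x)^4 ∂μ
          ≤ ∫ x, (r:ℝ)^3 * ∑ c ∈ Finset.range r, (Sc c x)^4 ∂μ :=
            integral_mono (hS4int n) hintR hptwise
        _ = (r:ℝ)^3 * ∑ c ∈ Finset.range r, ∫ x, (Sc c x)^4 ∂μ := by
            rw [integral_const_mul, integral_finset_sum _ (fun c _ => hSc4int c)]
        _ ≤ (r:ℝ)^3 * ((r:ℕ) • (16*C2^4*(W:ℝ)^2)) := by
            apply mul_le_mul_of_nonneg_left _ (by positivity)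
            calc ∑ c ∈ Finset.range r, ∫ x, (Sc c x)^4 ∂μ
                ≤ ∑ _c ∈ Finset.range r, 16*C2^4*(W:ℝ)^2 := Finset.sum_le_sum hSc4
              _ = (r:ℕ) • (16*C2^4*(W:ℝ)^2) := by rw [Finset.sum_const, Finset.card_range]
        _ = (16 * C2^4 * (r:ℝ)^4) * (W:ℝ)^2 := by
            rw [nsmul_eq_mul]
            ring
    -- the events and Borel-Cantelli
    set E : ℕ → Set X := fun n => {x | ε^4 * (L n:ℝ)^4 ≤ (S n x)^4} with hE
    set K : ℝ := 16 * C2^4 * (r:ℝ)^4 with hK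
    have hKnn : 0 ≤ K := by positivity
    have hEbound : ∀ n, μ (E n) ≤ ENNReal.ofReal ((K/ε^4) * (1/(L n:ℝ)^2)) := by
      intro n
      have hWpos : (0:ℝ) < (L n : ℝ) := by exact_mod_cast hLpos n
      have hmarkov := mul_meas_ge_le_integral_of_nonneg (μ := μ)
        (f := fun x => (S n x)^4) (ae_of_all _ (fun x => by positivity)) (hS4int n)
        (ε^4 * (L n:ℝ)^4)
      have hEq : {x | ε^4 * (L n:ℝ)^4 ≤ (S n x)^4} = E n := by rw [hE]
      rw [hEq] at hmarkov
      have h2 : (μ (E n)).toReal ≤ (K/ε^4) * (1/(L n:ℝ)^2) := by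
        have h3 : ε^4 * (L n:ℝ)^4 * (μ (E n)).toReal ≤ K * (L n:ℝ)^2 :=
          le_trans hmarkov (hmom n)
        have h4 : (0:ℝ) < ε^4 * (L n:ℝ)^4 := by positivity
        rw [← le_div_iff₀' h4] at h3
        calc (μ (E n)).toReal ≤ K * (L n:ℝ)^2 / (ε^4 * (L n:ℝ)^4) := h3
          _ = (K/ε^4) * (1/(L n:ℝ)^2) := by field_simp
      rw [← ENNReal.le_ofReal_iff_toReal_le (measure_ne_top μ _)] at h2
      · exact h2
      · positivity
    have hsum : (∑' n, μ (E n)) ≠ ⊤ := by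
      have hsummable : Summable (fun n : ℕ => (K/ε^4) * (1/(L n:ℝ)^2)) := by
        apply Summable.mul_left
        have hcomp : ∀ n : ℕ, 1/((L n:ℝ))^2 ≤ 4 * (1/((n:ℝ)+1)^2) := by
          intro n
          have h2 : n ≤ L n := hLmono.le_apply
          have h3 : 1 ≤ L n := hLpos n
          have h4 : (n:ℝ) + 1 ≤ 2 * (L n:ℝ) := by
            have : n + 1 ≤ 2 * L n := by omega
            exact_mod_cast this
          have h5 : (0:ℝ) < (n:ℝ)+1 := by positivity
          have h6 : (0:ℝ) < (L n:ℝ) := by exact_mod_cast h3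
          have hsq : ((n:ℝ)+1)^2 ≤ 4 * (L n:ℝ)^2 := by nlinarith
          rw [show (4:ℝ) * (1/((n:ℝ)+1)^2) = 4/((n:ℝ)+1)^2 by ring,
            div_le_div_iff₀ (by positivity) (by positivity)]
          nlinarith
        apply Summable.of_nonneg_of_le (fun n => by positivity) hcomp
        apply Summable.mul_left
        have hbase : Summable (fun n : ℕ => 1/((n:ℝ)+1)^2) := by
          have h7 := (summable_nat_add_iff 1).mpr
            (Real.summable_one_div_nat_pow.mpr (by norm_num : 1 < 2))
          convert h7 using 2 with n
          · rfl
          push_cast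
          ring
        exact hbase
      have hle : (∑' n, μ (E n)) ≤ ENNReal.ofReal (∑' n, (K/ε^4) * (1/(L n:ℝ)^2)) := by
        calc (∑' n, μ (E n)) ≤ ∑' n, ENNReal.ofReal ((K/ε^4) * (1/(L n:ℝ)^2)) :=
              ENNReal.tsum_le_tsum hEbound
          _ = ENNReal.ofReal (∑' n, (K/ε^4) * (1/(L n:ℝ)^2)) :=
              (ENNReal.ofReal_tsum_of_nonneg (fun n => by positivity) hsummable).symm
      exact ne_top_of_le_ne_top ENNReal.ofReal_ne_top hle
    have hBC := MeasureTheory.ae_eventually_notMem hsum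
    -- pointwise conclusion
    filter_upwards [hBC] with x hx
    rw [eventually_atTop] at hx ⊢
    obtain ⟨N, hN⟩ := hx
    refine ⟨N, fun n hn => ?_⟩
    have hxE := hN n hn
    have hWpos : (0:ℝ) < (L n : ℝ) := by exact_mod_cast hLpos n
    -- |S n x| ≤ ε W
    have hSle : |S n x| ≤ ε * (L n : ℝ) := by
      by_contra hcon
      push_neg at hcon
      apply hxE
      rw [hE]
      show ε^4 * (L n:ℝ)^4 ≤ (S n x)^4
      have h1 : (ε * (L n:ℝ))^4 ≤ |S n x|^4 :=
        pow_le_pow_left₀ (by positivity) (le_of_lt hcon) 4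
      calc ε^4 * (L n:ℝ)^4 = (ε * (L n:ℝ))^4 := by ring
        _ ≤ |S n x|^4 := h1
        _ = (S n x)^4 := by rw [← abs_pow, abs_of_nonneg (by positivity)]
    -- |movAvg g - I| ≤ ε
    have hlink : movAvg T g (v n) (L n) x - I = ((L n:ℝ))⁻¹ * S n x := by
      rw [hS]
      simp only [movAvg, hZ]
      rw [Finset.sum_sub_distrib, Finset.sum_const, Finset.card_range]
      rw [nsmul_eq_mul, mul_sub]
      congr 1
      rw [← mul_assoc, inv_mul_cancel₀ (ne_of_gt hWpos), one_mul]
    have hg_avg : |movAvg T g (v n) (L n) x - I| ≤ ε := by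
      rw [hlink, abs_mul, abs_inv, abs_of_nonneg (le_of_lt hWpos)]
      rw [inv_mul_le_iff₀ hWpos]
      calc |S n x| ≤ ε * (L n:ℝ) := hSle
        _ = (L n:ℝ) * ε := by ring
    -- |movAvg f - movAvg g| ≤ ε
    have hfg_avg : |movAvg T f (v n) (L n) x - movAvg T g (v n) (L n) x| ≤ ε := by
      have h1 : movAvg T f (v n) (L n) x - movAvg T g (v n) (L n) x
          = (L n:ℝ)⁻¹ * ∑ i ∈ Finset.range (L n),
            (f ((T ^ (v n + 1 + (i:ℤ))) x) - g ((T ^ (v n + 1 + (i:ℤ))) x)) := by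
        simp only [movAvg]
        rw [Finset.sum_sub_distrib, mul_sub]
      rw [h1, abs_mul, abs_inv, abs_of_nonneg (le_of_lt hWpos), inv_mul_le_iff₀ hWpos]
      calc |∑ i ∈ Finset.range (L n),
            (f ((T ^ (v n + 1 + (i:ℤ))) x) - g ((T ^ (v n + 1 + (i:ℤ))) x))|
          ≤ ∑ i ∈ Finset.range (L n),
            |f ((T ^ (v n + 1 + (i:ℤ))) x) - g ((T ^ (v n + 1 + (i:ℤ))) x)| :=
            Finset.abs_sum_le_sum_abs _ _
        _ ≤ ∑ _i ∈ Finset.range (L n), ε := Finset.sum_le_sum fun i _ => hg_approx _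
        _ = (L n:ℝ) * ε := by rw [Finset.sum_const, Finset.card_range, nsmul_eq_mul]
    calc |movAvg T f (v n) (L n) x - ∫ y, f y ∂μ|
        ≤ |movAvg T f (v n) (L n) x - movAvg T g (v n) (L n) x|
          + |movAvg T g (v n) (L n) x - ∫ y, f y ∂μ| := abs_sub_le _ _ _
      _ ≤ |movAvg T f (v n) (L n) x - movAvg T g (v n) (L n) x|
          + (|movAvg T g (v n) (L n) x - I| + |I - ∫ y, f y ∂μ|) := by
          apply add_le_add_right
          exact abs_sub_le _ _ _
      _ ≤ ε + (ε + ε) := by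
          apply add_le_add hfg_avg
          exact add_le_add hg_avg hIf
      _ = 3 * ε := by ring
  -- assemble over a countable family of ε's
  have hmain := fun k : ℕ => main (1/((k:ℝ)+1)) (by positivity)
  rw [← ae_all_iff] at hmain
  filter_upwards [hmain] with x hx
  rw [Metric.tendsto_atTop]
  intro ε hε
  obtain ⟨k, hk⟩ : ∃ k : ℕ, 3/ε < (k:ℝ)+1 := by
    obtain ⟨k, hk⟩ := exists_nat_gt (3/ε)
    exact ⟨k, by linarith⟩
  have hk2 : 3 * (1/((k:ℝ)+1)) < ε := by
    have hkpos : (0:ℝ) < (k:ℝ)+1 := by positivity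
    rw [div_lt_iff₀ hε] at hk
    rw [mul_one_div, div_lt_iff₀ hkpos]
    nlinarith
  obtain ⟨N, hN⟩ := eventually_atTop.mp (hx k)
  refine ⟨N, fun n hn => ?_⟩
  rw [Real.dist_eq]
  calc |movAvg T f (v n) (L n) x - ∫ y, f y ∂μ| ≤ 3 * (1/((k:ℝ)+1)) := hN n hn
    _ < ε := hk2
end

section
/- Let (X,B,μ) be a probability space, T a measure-preserving transformation, and f ∈ L¹(μ) a nonzero mean-zero function. Then Σ_{n=1}^∞ ‖M(0,n)^T f‖₁ = ∞, where M(0,n)^T f = (1/n) Σ_{k=1}^n f∘T^k. In fact, for every N ≥ 1, Σ_{n=1}^N ‖f‖₁/(n+1) ≤ 3 Σ_{n=1}^{N+1} ‖M(0,n)^T f‖₁. -/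
open MeasureTheory Filter

/-- Ergodic average `M(0,n)^T f (x) = (1/n) ∑_{k=1}^{n} f(T^k x)` for a (not necessarily
invertible) transformation `T`. -/
noncomputable def ergAvg {X : Type*} (T : X → X) (f : X → ℝ) (n : ℕ) (x : X) : ℝ :=
  (n : ℝ)⁻¹ * ∑ k ∈ Finset.range n, f (T^[k + 1] x)

/-- For a measure-preserving `T` on a probability space and a nonzero mean-zero
`f ∈ L¹(μ)`, the series `∑_n ‖M(0,n)^T f‖₁` diverges; in fact for every `N ≥ 1`,
`∑_{n=1}^N ‖f‖₁/(n+1) ≤ 3 ∑_{n=1}^{N+1} ‖M(0,n)^T f‖₁`. -/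
theorem stmt12
    {X : Type*} [MeasurableSpace X] (μ : Measure X) [IsProbabilityMeasure μ]
    (T : X → X) (hT : MeasurePreserving T μ μ)
    (f : X → ℝ) (hf : Integrable f μ) (hf0 : ∫ x, f x ∂μ = 0)
    (hfne : ¬ f =ᵐ[μ] 0) :
    (¬ Summable (fun n : ℕ => ∫ x, |ergAvg T f (n + 1) x| ∂μ)) ∧
    (∀ N : ℕ, 1 ≤ N →
      ∑ n ∈ Finset.Icc 1 N, (∫ x, |f x| ∂μ) / ((n : ℝ) + 1)
        ≤ 3 * ∑ n ∈ Finset.Icc 1 (N + 1), ∫ x, |ergAvg T f n x| ∂μ) := by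
  set c : ℝ := ∫ x, |f x| ∂μ with hc
  set a : ℕ → ℝ := fun n => ∫ x, |ergAvg T f n x| ∂μ with ha
  have ha0 : ∀ n, 0 ≤ a n := fun n => integral_nonneg fun x => abs_nonneg _
  have hc0 : 0 ≤ c := integral_nonneg fun x => abs_nonneg _
  have hcpos : 0 < c := by
    rcases hc0.lt_or_eq with h | h
    · exact h
    · exfalso
      apply hfne
      have h2 := (integral_eq_zero_iff_of_nonneg (fun x => abs_nonneg (f x)) hf.abs).mp h.symm
      filter_upwards [h2] with x hx
      simpa [abs_eq_zero] using hx
  -- integrability of composed functions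
  have hInt : ∀ k : ℕ, Integrable (fun x => f (T^[k] x)) μ :=
    fun k => ((hT.iterate k).integrable_comp hf.1).mpr hf
  have hA : ∀ n : ℕ, Integrable (ergAvg T f n) μ := by
    intro n
    have : Integrable (fun x => ∑ k ∈ Finset.range n, f (T^[k+1] x)) μ :=
      integrable_finset_sum _ fun k _ => hInt (k+1)
    exact this.const_mul ((n:ℝ)⁻¹)
  -- integral of |f ∘ T^[k]| equals c
  have hcomp : ∀ k : ℕ, ∫ x, |f (T^[k] x)| ∂μ = c := by
    intro k
    have hmap := (hT.iterate k).map_eq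
    have hmeas : AEMeasurable (T^[k]) μ := (hT.iterate k).measurable.aemeasurable
    have habs : AEStronglyMeasurable (fun y => |f y|) (Measure.map (T^[k]) μ) := by
      rw [hmap]; exact hf.abs.1
    calc ∫ x, |f (T^[k] x)| ∂μ = ∫ y, |f y| ∂(Measure.map (T^[k]) μ) :=
          (integral_map hmeas habs).symm
      _ = c := by rw [hmap]
  -- pointwise identity
  have hmul : ∀ (n : ℕ) (x : X), (n : ℝ) * ergAvg T f n x
      = ∑ k ∈ Finset.range n, f (T^[k+1] x) := by
    intro n x
    rcases Nat.eq_zero_or_pos n with rfl | hn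
    · simp [ergAvg]
    · have : (n : ℝ) ≠ 0 := Nat.cast_ne_zero.mpr hn.ne'
      rw [ergAvg, ← mul_assoc, mul_inv_cancel₀ this, one_mul]
  have hpt : ∀ (n : ℕ) (x : X),
      f (T^[n+1] x) = ((n:ℝ)+1) * ergAvg T f (n+1) x - (n:ℝ) * ergAvg T f n x := by
    intro n x
    rw [hmul n x]
    have := hmul (n+1) x
    push_cast at this
    rw [this, Finset.sum_range_succ]
    ring
  -- key inequality
  have hkey : ∀ n : ℕ, c ≤ ((n:ℝ)+1) * a (n+1) + (n:ℝ) * a n := by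
    intro n
    have h1 : ∫ x, |f (T^[n+1] x)| ∂μ
        ≤ ∫ x, (((n:ℝ)+1) * |ergAvg T f (n+1) x| + (n:ℝ) * |ergAvg T f n x|) ∂μ := by
      apply integral_mono (hInt (n+1)).abs
      · exact (((hA (n+1)).abs.const_mul _).add ((hA n).abs.const_mul _))
      · intro x
        show |f (T^[n+1] x)| ≤ _
        rw [hpt n x]
        calc |((n:ℝ)+1) * ergAvg T f (n+1) x - (n:ℝ) * ergAvg T f n x|
            ≤ |((n:ℝ)+1) * ergAvg T f (n+1) x| + |(n:ℝ) * ergAvg T f n x| := abs_sub _ _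
          _ = ((n:ℝ)+1) * |ergAvg T f (n+1) x| + (n:ℝ) * |ergAvg T f n x| := by
              rw [abs_mul, abs_mul, abs_of_nonneg (by positivity : (0:ℝ) ≤ (n:ℝ)+1),
                abs_of_nonneg (show (0:ℝ) ≤ (n:ℝ) from n.cast_nonneg)]
    rw [hcomp (n+1)] at h1
    rwa [integral_add ((hA (n+1)).abs.const_mul _) ((hA n).abs.const_mul _),
      integral_const_mul, integral_const_mul] at h1
  have hkey2 : ∀ n : ℕ, c / ((n:ℝ)+1) ≤ a (n+1) + a n := by
    intro n
    have hn1 : (0:ℝ) < (n:ℝ)+1 := by positivity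
    rw [div_le_iff₀ hn1]
    calc c ≤ ((n:ℝ)+1) * a (n+1) + (n:ℝ) * a n := hkey n
      _ ≤ ((n:ℝ)+1) * a (n+1) + ((n:ℝ)+1) * a n := by
          have := ha0 n; nlinarith
      _ = (a (n+1) + a n) * ((n:ℝ)+1) := by ring
  -- converting Icc sums to range sums
  have hIcc : ∀ (M : ℕ) (g : ℕ → ℝ),
      ∑ n ∈ Finset.Icc 1 M, g n = ∑ i ∈ Finset.range M, g (i+1) := by
    intro M g
    induction M with
    | zero => simp
    | succ m ih =>
        rw [Finset.sum_Icc_succ_top (Nat.one_le_iff_ne_zero.mpr (Nat.succ_ne_zero m)), ih,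
          Finset.sum_range_succ]
  -- part 2
  have part2 : ∀ N : ℕ, 1 ≤ N →
      ∑ n ∈ Finset.Icc 1 N, c / ((n : ℝ) + 1)
        ≤ 3 * ∑ n ∈ Finset.Icc 1 (N + 1), a n := by
    intro N _
    rw [hIcc N (fun n => c / ((n:ℝ)+1)), hIcc (N+1) a]
    set S : ℝ := ∑ i ∈ Finset.range (N+1), a (i+1) with hS
    have hS2 : ∑ i ∈ Finset.range N, a (i+2) ≤ S := by
      have := Finset.sum_range_succ' (fun i => a (i+1)) N
      have h01 := ha0 1
      simp only [hS, this]
      have : ∀ i, a (i + 1 + 1) = a (i+2) := fun i => rfl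
      simp only [this]
      linarith
    have hS1 : ∑ i ∈ Finset.range N, a (i+1) ≤ S := by
      apply Finset.sum_le_sum_of_subset_of_nonneg
      · exact Finset.range_subset_range.mpr (Nat.le_succ N)
      · exact fun i _ _ => ha0 _
    have h1 : ∑ i ∈ Finset.range N, c / (((i+1 : ℕ):ℝ) + 1)
        ≤ ∑ i ∈ Finset.range N, (a (i+2) + a (i+1)) := by
      apply Finset.sum_le_sum
      intro i _
      have := hkey2 (i+1)
      push_cast at this ⊢
      convert this using 2 <;> ring
    calc ∑ i ∈ Finset.range N, c / (((i+1:ℕ):ℝ) + 1)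
        ≤ ∑ i ∈ Finset.range N, (a (i+2) + a (i+1)) := h1
      _ = ∑ i ∈ Finset.range N, a (i+2) + ∑ i ∈ Finset.range N, a (i+1) :=
          Finset.sum_add_distrib
      _ ≤ S + S := by linarith
      _ ≤ 3 * S := by
          have : 0 ≤ S := Finset.sum_nonneg fun i _ => ha0 _
          linarith
  refine ⟨?_, part2⟩
  -- part 1
  intro hsum
  set C : ℝ := ∑' n : ℕ, a (n+1) with hC
  have hbd : ∀ N : ℕ, ∑ n ∈ Finset.Icc 1 (N+1), a n ≤ C := by
    intro N
    rw [hIcc (N+1) a]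
    exact Summable.sum_le_tsum _ (fun i _ => ha0 _) hsum
  -- harmonic bound
  have hbnd : ∀ N : ℕ, ∑ i ∈ Finset.range N, c / ((i:ℝ)+2) ≤ 3 * C := by
    intro N
    have hCnn : 0 ≤ C := tsum_nonneg fun n => ha0 _
    rcases Nat.eq_zero_or_pos N with rfl | hN
    · simpa using by linarith
    have heq : ∑ i ∈ Finset.range N, c / ((i:ℝ)+2)
        = ∑ n ∈ Finset.Icc 1 N, c / ((n:ℝ)+1) := by
      rw [hIcc N (fun n => c / ((n:ℝ)+1))]
      apply Finset.sum_congr rfl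
      intro i _
      push_cast
      ring_nf
    rw [heq]
    exact (part2 N hN).trans (by nlinarith [hbd N])
  have hsum2 : Summable (fun i : ℕ => c / ((i:ℝ)+2)) :=
    summable_of_sum_range_le (fun i => by positivity) hbnd
  have hsum3 : Summable (fun i : ℕ => ((i:ℝ)+2)⁻¹) := by
    have h := hsum2.mul_left c⁻¹
    have heq : (fun i : ℕ => c⁻¹ * (c / ((i:ℝ)+2))) = fun i : ℕ => ((i:ℝ)+2)⁻¹ := by
      funext i
      field_simp
    rwa [heq] at h
  have hbad : Summable (fun n : ℕ => ((n:ℝ))⁻¹) := by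
    apply (summable_nat_add_iff 2).mp
    have heq2 : ∀ n : ℕ, (((n + 2 : ℕ)):ℝ)⁻¹ = ((n:ℝ)+2)⁻¹ := by
      intro n; push_cast; ring_nf
    simpa [heq2] using hsum3
  exact Real.not_summable_natCast_inv hbad
end

section
/- Let (X,B,μ) be a probability space and T an invertible ergodic measure-preserving transformation. Suppose f is measurable and f = g - g∘T μ-almost everywhere, where g is a measurable function with ∫_X |g|^p dμ < ∞ for some real p > 0. Then for every sequence of positive integers (L_n) with L_n ≥ n^{1/p} for all n and every sequence of integers (v_n), there exists a μ-null set E such that for every x ∉ E, lim_{n→∞} (1/L_n) Σ_{i=1}^{L_n} f(T^{v_n+i} x) = 0. -/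
open MeasureTheory Filter

open scoped ENNReal

lemma aux_count (y c : ℝ≥0∞) (hc : c ≠ 0) (hct : c ≠ ⊤) (N : ℕ) :
    ∑ n ∈ Finset.range N, (if c * ((n : ℝ≥0∞) + 1) ≤ y then (1:ℝ≥0∞) else 0) ≤ y / c := by
  classical
  rw [Finset.sum_boole]
  set S := (Finset.range N).filter (fun n : ℕ => c * ((n : ℝ≥0∞) + 1) ≤ y) with hS
  rcases S.eq_empty_or_nonempty with h | hne
  · simp [h]
  · have hmax := S.max'_mem hne
    set n₀ := S.max' hne with hn₀
    have hy : c * ((n₀ : ℝ≥0∞) + 1) ≤ y := (Finset.mem_filter.1 hmax).2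
    have hsub : S ⊆ Finset.range (n₀ + 1) := fun n hn =>
      Finset.mem_range.2 (Nat.lt_succ_of_le (S.le_max' n hn))
    have hcard : S.card ≤ n₀ + 1 := by
      simpa using Finset.card_le_card hsub
    have h1 : (S.card : ℝ≥0∞) ≤ (n₀ : ℝ≥0∞) + 1 := by
      exact_mod_cast (by exact_mod_cast hcard : (S.card : ℕ) ≤ n₀ + 1)
    refine h1.trans ?_
    rw [ENNReal.le_div_iff_mul_le (Or.inl hc) (Or.inl hct)]
    rwa [mul_comm]

lemma aux_sum_meas {X : Type*} [MeasurableSpace X] (μ : Measure X)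
    (h : X → ℝ≥0∞) (hm : Measurable h) (c : ℝ≥0∞) (hc : c ≠ 0) (hct : c ≠ ⊤) :
    ∑' n : ℕ, μ {x | c * ((n : ℝ≥0∞) + 1) ≤ h x} ≤ (∫⁻ x, h x ∂μ) / c := by
  classical
  have hs : ∀ n : ℕ, MeasurableSet {x | c * ((n : ℝ≥0∞) + 1) ≤ h x} := fun n =>
    measurableSet_le measurable_const hm
  refine ENNReal.tsum_le_of_sum_range_le (fun N => ?_)
  calc ∑ n ∈ Finset.range N, μ {x | c * ((n : ℝ≥0∞) + 1) ≤ h x}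
      = ∑ n ∈ Finset.range N, ∫⁻ x, Set.indicator {x | c * ((n : ℝ≥0∞) + 1) ≤ h x} 1 x ∂μ := by
        refine Finset.sum_congr rfl fun n _ => ?_
        rw [lintegral_indicator_one (hs n)]
    _ = ∫⁻ x, ∑ n ∈ Finset.range N, Set.indicator {x | c * ((n : ℝ≥0∞) + 1) ≤ h x} 1 x ∂μ := by
        rw [lintegral_finset_sum]
        exact fun n _ => measurable_const.indicator (hs n)
    _ ≤ ∫⁻ x, h x / c ∂μ := by
        refine lintegral_mono fun x => ?_
        have := aux_count (h x) c hc hct N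
        refine le_trans (le_of_eq ?_) this
        refine Finset.sum_congr rfl fun n _ => ?_
        by_cases hx : c * ((n : ℝ≥0∞) + 1) ≤ h x <;>
          simp [Set.indicator_apply, Set.mem_setOf_eq, hx]
    _ = (∫⁻ x, h x ∂μ) / c := by
        simp_rw [div_eq_mul_inv]
        exact lintegral_mul_const' c⁻¹ h (by simpa using hc)


lemma aux_tsum {X : Type*} [MeasurableSpace X] (μ : Measure X) [IsProbabilityMeasure μ]
    (h : X → ℝ≥0∞) (hhm : Measurable h) (hint : ∫⁻ x, h x ∂μ < ⊤)
    (c : ℝ≥0∞) (hc : c ≠ 0) (hct : c ≠ ⊤)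
    (B : ℕ → Set X) (hB : ∀ n : ℕ, μ (B n) ≤ μ {x | c * (n : ℝ≥0∞) ≤ h x}) :
    ∑' n : ℕ, μ (B n) ≠ ⊤ := by
  have key : ∑' n : ℕ, μ (B n) ≤ 1 + (∫⁻ x, h x ∂μ) / c := by
    rw [tsum_eq_zero_add' ENNReal.summable]
    refine add_le_add ?_ ?_
    · simpa using measure_mono (μ := μ) (Set.subset_univ (B 0))
    · refine le_trans (ENNReal.tsum_le_tsum fun n => le_trans (hB (n + 1)) ?_)
        (aux_sum_meas μ h hhm c hc hct)
      apply measure_mono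
      intro x hx
      simp only [Set.mem_setOf_eq] at hx ⊢
      convert hx using 2
      push_cast
      ring
  refine ne_top_of_le_ne_top ?_ key
  refine ENNReal.add_ne_top.2 ⟨ENNReal.one_ne_top, ?_⟩
  exact (ENNReal.div_lt_top hint.ne hc).ne

lemma aux_bc {X : Type*} [MeasurableSpace X] (μ : Measure X) [IsProbabilityMeasure μ]
    (S : ℕ → X → X) (hS : ∀ n, MeasurePreserving (S n) μ μ)
    (g : X → ℝ) (hgm : Measurable g) (p : ℝ) (hp : 0 < p)
    (hgp : Integrable (fun x => |g x| ^ p) μ)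
    (L : ℕ → ℕ) (hL : ∀ n, 0 < L n) (hLn : ∀ n : ℕ, (n : ℝ) ^ (1 / p) ≤ (L n : ℝ)) :
    ∃ E : Set X, μ E = 0 ∧ ∀ x ∉ E,
      Tendsto (fun n : ℕ => ((L n : ℝ))⁻¹ * |g (S n x)|) atTop (nhds 0) := by
  classical
  have hhm : Measurable (fun x => ENNReal.ofReal (|g x| ^ p)) := by fun_prop
  have hint : ∫⁻ x, ENNReal.ofReal (|g x| ^ p) ∂μ < ⊤ := by
    have h2 := hgp.2
    rw [HasFiniteIntegral] at h2
    refine lt_of_eq_of_lt ?_ h2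
    refine lintegral_congr fun x => ?_
    rw [Real.enorm_eq_ofReal (Real.rpow_nonneg (abs_nonneg _) p)]
  have hBmeas : ∀ m n : ℕ, MeasurableSet {y | ((m : ℝ) + 1)⁻¹ * (L n : ℝ) < |g y|} :=
    fun m n => measurableSet_lt measurable_const hgm.abs
  have hLpow : ∀ n : ℕ, (n : ℝ) ≤ (L n : ℝ) ^ p := by
    intro n
    have h1 : ((n : ℝ) ^ (1 / p)) ^ p ≤ (L n : ℝ) ^ p :=
      Real.rpow_le_rpow (Real.rpow_nonneg n.cast_nonneg _) (hLn n) hp.le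
    rwa [← Real.rpow_mul n.cast_nonneg, one_div_mul_cancel hp.ne', Real.rpow_one] at h1
  have hsum : ∀ m : ℕ,
      ∑' n : ℕ, μ ((S n) ⁻¹' {y | ((m : ℝ) + 1)⁻¹ * (L n : ℝ) < |g y|}) ≠ ⊤ := by
    intro m
    have hεpos : (0:ℝ) < ((m : ℝ) + 1)⁻¹ := by positivity
    have hc0 : ENNReal.ofReal (((m : ℝ) + 1)⁻¹ ^ p) ≠ 0 := by
      simp [ENNReal.ofReal_eq_zero, not_le, Real.rpow_pos_of_pos hεpos]
    refine aux_tsum μ _ hhm hint (ENNReal.ofReal (((m : ℝ) + 1)⁻¹ ^ p)) hc0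
      ENNReal.ofReal_ne_top _ (fun n => ?_)
    rw [(hS n).measure_preimage (hBmeas m n).nullMeasurableSet]
    refine measure_mono (fun y hy => ?_)
    simp only [Set.mem_setOf_eq] at hy ⊢
    have h0 : (0:ℝ) ≤ ((m : ℝ) + 1)⁻¹ * (L n : ℝ) := by positivity
    have h2 : ((m : ℝ) + 1)⁻¹ ^ p * (n : ℝ) ≤ |g y| ^ p := by
      calc ((m : ℝ) + 1)⁻¹ ^ p * (n : ℝ)
          ≤ ((m : ℝ) + 1)⁻¹ ^ p * (L n : ℝ) ^ p :=
            mul_le_mul_of_nonneg_left (hLpow n) (Real.rpow_nonneg hεpos.le _)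
        _ = (((m : ℝ) + 1)⁻¹ * (L n : ℝ)) ^ p :=
            (Real.mul_rpow hεpos.le (L n).cast_nonneg).symm
        _ ≤ |g y| ^ p := Real.rpow_le_rpow h0 hy.le hp.le
    calc ENNReal.ofReal (((m : ℝ) + 1)⁻¹ ^ p) * (n : ℝ≥0∞)
        = ENNReal.ofReal (((m : ℝ) + 1)⁻¹ ^ p * (n : ℝ)) := by
          rw [ENNReal.ofReal_mul (Real.rpow_nonneg hεpos.le _)]; simp
      _ ≤ ENNReal.ofReal (|g y| ^ p) := ENNReal.ofReal_le_ofReal h2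
  refine ⟨⋃ m : ℕ, limsup (fun n => (S n) ⁻¹' {y | ((m : ℝ) + 1)⁻¹ * (L n : ℝ) < |g y|}) atTop,
    measure_iUnion_null fun m => measure_limsup_atTop_eq_zero (hsum m), ?_⟩
  intro x hx
  rw [NormedAddCommGroup.tendsto_nhds_zero]
  intro δ hδ
  obtain ⟨m, hm⟩ := exists_nat_one_div_lt hδ
  have hxm : x ∉ limsup (fun n => (S n) ⁻¹' {y | ((m : ℝ) + 1)⁻¹ * (L n : ℝ) < |g y|}) atTop :=
    fun hmem => hx (Set.mem_iUnion.2 ⟨m, hmem⟩)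
  rw [mem_limsup_iff_frequently_mem, Filter.not_frequently] at hxm
  filter_upwards [hxm] with n hn
  simp only [Set.mem_preimage, Set.mem_setOf_eq, not_lt] at hn
  have hLpos : (0:ℝ) < (L n : ℝ) := by exact_mod_cast hL n
  have hle : ((L n : ℝ))⁻¹ * |g (S n x)| ≤ ((m : ℝ) + 1)⁻¹ := by
    rw [inv_mul_le_iff₀ hLpos]
    rwa [mul_comm] at hn
  rw [Real.norm_eq_abs, abs_of_nonneg (by positivity)]
  calc ((L n : ℝ))⁻¹ * |g (S n x)| ≤ ((m : ℝ) + 1)⁻¹ := hle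
    _ = 1 / ((m : ℝ) + 1) := (one_div _).symm
    _ < δ := hm

lemma aux_mp {X : Type*} [MeasurableSpace X] {μ : Measure X}
    (T : Equiv.Perm X) (hT : Measurable (⇑T)) (hT' : Measurable (⇑T.symm))
    (hMPT : MeasurePreserving (⇑T) μ μ) (k : ℤ) :
    MeasurePreserving (⇑(T ^ k)) μ μ := by
  have hsymm : MeasurePreserving (⇑T.symm) μ μ :=
    MeasurePreserving.symm (⟨T, hT, hT'⟩ : X ≃ᵐ X) hMPT
  induction k using Int.induction_on with
  | zero => simpa using MeasurePreserving.id μ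
  | succ n ih =>
      have : ⇑(T ^ ((n : ℤ) + 1)) = ⇑(T ^ (n : ℤ)) ∘ ⇑T := by
        ext x; simp [zpow_add_one, Equiv.Perm.mul_apply]
      rw [this]; exact ih.comp hMPT
  | pred n ih =>
      have : ⇑(T ^ (-(n : ℤ) - 1)) = ⇑(T ^ (-(n : ℤ))) ∘ ⇑T.symm := by
        ext x; simp [zpow_sub_one, Equiv.Perm.mul_apply, Equiv.Perm.inv_def]
      rw [this]; exact ih.comp hsymm

/-- If `f = g - g∘T` a.e. with `∫ |g|^p dμ < ∞` for some real `p > 0`, `T` invertible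
ergodic measure-preserving, then for every sequence of positive integers `(L_n)` with
`L_n ≥ n^{1/p}` and every sequence of integers `(v_n)`, there is a null set `E` off of
which `(1/L_n) ∑_{i=1}^{L_n} f(T^{v_n+i} x) → 0`. -/
theorem stmt15
    {X : Type*} [MeasurableSpace X] (μ : Measure X) [IsProbabilityMeasure μ]
    (T : Equiv.Perm X) (hT : Measurable (⇑T)) (hT' : Measurable (⇑T.symm))
    (hTerg : Ergodic (⇑T) μ)
    (f g : X → ℝ) (hfm : Measurable f) (hgm : Measurable g)
    (p : ℝ) (hp : 0 < p)
    (hgp : Integrable (fun x => |g x| ^ p) μ)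
    (hcob : f =ᵐ[μ] fun x => g x - g (T x))
    (L : ℕ → ℕ) (hL : ∀ n, 0 < L n) (hLn : ∀ n : ℕ, (n : ℝ) ^ (1 / p) ≤ (L n : ℝ))
    (v : ℕ → ℤ) :
    ∃ E : Set X, μ E = 0 ∧ ∀ x ∉ E,
      Tendsto (fun n : ℕ =>
          ((L n : ℝ))⁻¹ * ∑ i ∈ Finset.range (L n), f ((T ^ (v n + 1 + (i : ℤ))) x))
        atTop (nhds 0) := by
  have hMP : ∀ k : ℤ, MeasurePreserving (⇑(T ^ k)) μ μ :=
    aux_mp T hT hT' hTerg.toMeasurePreserving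
  set N₀ : Set X := {x | ¬ f x = g x - g (T x)} with hN₀def
  have hN₀meas : MeasurableSet N₀ :=
    (measurableSet_eq_fun hfm (hgm.sub (hgm.comp hT))).compl
  have hN₀ : μ N₀ = 0 := ae_iff.1 hcob
  have hE₁null : μ (⋃ k : ℤ, ⇑(T ^ k) ⁻¹' N₀) = 0 := by
    refine measure_iUnion_null fun k => ?_
    rw [(hMP k).measure_preimage hN₀meas.nullMeasurableSet]
    exact hN₀
  obtain ⟨E₂, hE₂, hx₂⟩ := aux_bc μ (fun n => ⇑(T ^ (v n + 1))) (fun n => hMP _)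
    g hgm p hp hgp L hL hLn
  obtain ⟨E₃, hE₃, hx₃⟩ := aux_bc μ (fun n => ⇑(T ^ (v n + 1 + (L n : ℤ)))) (fun n => hMP _)
    g hgm p hp hgp L hL hLn
  refine ⟨(⋃ k : ℤ, ⇑(T ^ k) ⁻¹' N₀) ∪ E₂ ∪ E₃, ?_, ?_⟩
  · rw [measure_union_null_iff, measure_union_null_iff]
    exact ⟨⟨hE₁null, hE₂⟩, hE₃⟩
  intro x hx
  simp only [Set.mem_union, not_or] at hx
  obtain ⟨⟨hx1, hx2⟩, hx3⟩ := hx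
  have hstep : ∀ k : ℤ, f ((T ^ k) x) = g ((T ^ k) x) - g ((T ^ (k + 1)) x) := by
    intro k
    have hk : (T ^ k) x ∉ N₀ := fun hmem => hx1 (Set.mem_iUnion.2 ⟨k, hmem⟩)
    have heq : f ((T ^ k) x) = g ((T ^ k) x) - g (T ((T ^ k) x)) := not_not.1 hk
    have hT1 : T ((T ^ k) x) = (T ^ (k + 1)) x := by
      rw [show k + 1 = 1 + k by ring, zpow_one_add]
      rfl
    rw [heq, hT1]
  have htel : ∀ n : ℕ, ∑ i ∈ Finset.range (L n), f ((T ^ (v n + 1 + (i : ℤ))) x)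
      = g ((T ^ (v n + 1)) x) - g ((T ^ (v n + 1 + (L n : ℤ))) x) := by
    intro n
    have hsum := Finset.sum_range_sub' (f := fun i : ℕ => g ((T ^ (v n + 1 + (i : ℤ))) x))
      (n := L n)
    calc ∑ i ∈ Finset.range (L n), f ((T ^ (v n + 1 + (i : ℤ))) x)
        = ∑ i ∈ Finset.range (L n),
            (g ((T ^ (v n + 1 + (i : ℤ))) x) - g ((T ^ (v n + 1 + ((i + 1 : ℕ) : ℤ))) x)) := by
          refine Finset.sum_congr rfl fun i _ => ?_
          rw [hstep (v n + 1 + (i : ℤ))]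
          congr 2
          push_cast
          ring_nf
      _ = g ((T ^ (v n + 1 + ((0 : ℕ) : ℤ))) x) - g ((T ^ (v n + 1 + (L n : ℤ))) x) := hsum
      _ = g ((T ^ (v n + 1)) x) - g ((T ^ (v n + 1 + (L n : ℤ))) x) := by norm_num
  have h2 := hx₂ x hx2
  have h3 := hx₃ x hx3
  refine squeeze_zero_norm (fun n => ?_) (by simpa using h2.add h3)
  rw [htel n, Real.norm_eq_abs, abs_mul, abs_of_nonneg (inv_nonneg.2 (L n).cast_nonneg'),
    ← mul_add]
  exact mul_le_mul_of_nonneg_left (abs_sub _ _) (inv_nonneg.2 (L n).cast_nonneg')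
end

section
/- Let p > 1 be real, (X,B,μ) a standard non-atomic probability space, and T an invertible ergodic measure-preserving transformation. Let f ∈ F_p: that is, there are reals a_n > 2 with superpolynomial growth (a_n/n^d → ∞ for every d > 0) and a_n^p μ(A_n) → ∞, pairwise disjoint measurable sets A_n of positive measure with Σ_n a_n μ(A_n) ≤ 1/2, and a measurable set B disjoint from ∪_n A_n with μ(B) = Σ_n a_n μ(A_n), such that f = a_n on A_n, f = -1 on B, and f = 0 elsewhere. Suppose there exists η with 0 < η < 1 such that for each n ∈ ℤ⁺ there is a measurable set B_n with μ(B_n) > η a_n μ(A_n) and for each x ∈ B_n there is an integer ℓ_x > η a_n with Σ_{i=0}^{ℓ_x-1} f(T^i x) > η ℓ_x. Then there exist a sequence of integers (v_n) and a sequence of positive integers (L_n) with L_n ≥ n^{1/(p-1)} for all n such that for μ-almost every x ∈ X, limsup_{n→∞} (1/L_n) Σ_{i=v_n+1}^{v_n+L_n} f(T^i x) > 0. -/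
open MeasureTheory Filter
open Topology


set_option maxHeartbeats 1600000
set_option synthInstance.maxHeartbeats 400000

lemma cover_step {X : Type*} [MeasurableSpace X] (μ : Measure X) [IsProbabilityMeasure μ]
    {T : X → X} (hTerg : Ergodic T μ)
    {H E : Set X} (hH : MeasurableSet H) (hE : MeasurableSet E) :
    ∃ u : ℕ, (μ H).toReal * (μ E).toReal / 2 ≤ (μ (E ∩ (T^[u]) ⁻¹' H)).toReal := by
  classical
  by_cases hpos : 0 < (μ H).toReal * (μ E).toReal
  swap
  · exact ⟨0, le_trans (by linarith [not_lt.mp hpos]) ENNReal.toReal_nonneg⟩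
  have hmp : MeasurePreserving T μ μ := hTerg.toMeasurePreserving
  set U : Lp ℝ 2 μ →L[ℝ] Lp ℝ 2 μ :=
    (Lp.compMeasurePreservingₗᵢ (E := ℝ) ℝ T hmp).toContinuousLinearMap with hUdef
  have hU : ‖U‖ ≤ 1 := LinearIsometry.norm_toContinuousLinearMap_le _
  set φ : Lp ℝ 2 μ := indicatorConstLp 2 hH (measure_ne_top μ H) (1:ℝ) with hφdef
  have hSmeas : ∀ k : ℕ, MeasurableSet ((T^[k]) ⁻¹' H) :=
    fun k => hH.preimage (hmp.iterate k).measurable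
  -- iterates of the Koopman operator on the indicator
  have hiter : ∀ k : ℕ, (⇑U)^[k] φ
      = indicatorConstLp 2 (hSmeas k) (measure_ne_top _ _) (1:ℝ) := by
    intro k
    induction k with
    | zero => simp [φ]
    | succ k ih =>
      rw [Function.iterate_succ_apply', ih]
      have : U (indicatorConstLp 2 (hSmeas k) (measure_ne_top _ _) (1:ℝ))
          = indicatorConstLp 2 ((hSmeas k).preimage hmp.measurable)
            (by rw [hmp.measure_preimage (hSmeas k).nullMeasurableSet]; exact measure_ne_top _ _) (1:ℝ) := by
        apply Lp.indicatorConstLp_compMeasurePreserving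
      rw [this]; rfl
  -- the L² limit : a fixed point of U
  obtain ⟨Q, hQfix, hQlim⟩ : ∃ Q : Lp ℝ 2 μ, U Q = Q ∧
      Tendsto (fun N => birkhoffAverage ℝ (⇑U) id N φ) atTop (𝓝 Q) := by
    refine ⟨_, ?_, U.tendsto_birkhoffAverage_orthogonalProjection hU φ⟩
    have h := ((Submodule.orthogonalProjectionOnto (LinearMap.eqLocus (U : Lp ℝ 2 μ →ₗ[ℝ] Lp ℝ 2 μ) ((1 : Lp ℝ 2 μ →L[ℝ] Lp ℝ 2 μ) : Lp ℝ 2 μ →ₗ[ℝ] Lp ℝ 2 μ))) φ).2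
    rw [LinearMap.mem_eqLocus] at h
    simpa using h
  -- Q is a.e. constant
  have hQinv : (⇑Q) ∘ T =ᵐ[μ] ⇑Q := by
    have h1 : ⇑(U Q) =ᵐ[μ] (⇑Q) ∘ T := Lp.coeFn_compMeasurePreserving Q hmp
    calc (⇑Q) ∘ T =ᵐ[μ] ⇑(U Q) := h1.symm
    _ = ⇑Q := by rw [hQfix]
  obtain ⟨c, hc⟩ := hTerg.ae_eq_const_of_ae_eq_comp₀
    (Lp.aestronglyMeasurable Q).aemeasurable.nullMeasurable hQinv
  -- the Cesàro averages of intersection measures converge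
  have hces : ∀ (E' : Set X), MeasurableSet E' →
      Tendsto (fun N : ℕ => (N:ℝ)⁻¹ * ∑ k ∈ Finset.range N, (μ ((T^[k]) ⁻¹' H ∩ E')).toReal)
        atTop (𝓝 (c * (μ E').toReal)) := by
    intro E' hE'
    have hlim : Tendsto (fun N : ℕ =>
        (inner ℝ (indicatorConstLp 2 hE' (measure_ne_top μ E') (1:ℝ)) (birkhoffAverage ℝ (⇑U) id N φ) : ℝ))
        atTop (𝓝 (inner ℝ (indicatorConstLp 2 hE' (measure_ne_top μ E') (1:ℝ)) Q)) :=
      Tendsto.inner tendsto_const_nhds hQlim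
    have hQval : (inner ℝ (indicatorConstLp 2 hE' (measure_ne_top μ E') (1:ℝ)) Q : ℝ)
        = c * (μ E').toReal := by
      rw [MeasureTheory.L2.inner_indicatorConstLp_eq_inner_setIntegral ℝ hE' (measure_ne_top μ E') (1:ℝ) Q]
      have h2 : ∫ x in E', Q x ∂μ = ∫ x in E', c ∂μ := by
        apply setIntegral_congr_ae hE'
        filter_upwards [hc] with x hx _ using hx
      simp [h2, mul_comm, measureReal_def]
    have hterm : ∀ N : ℕ,
        (inner ℝ (indicatorConstLp 2 hE' (measure_ne_top μ E') (1:ℝ)) (birkhoffAverage ℝ (⇑U) id N φ) : ℝ)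
        = (N:ℝ)⁻¹ * ∑ k ∈ Finset.range N, (μ ((T^[k]) ⁻¹' H ∩ E')).toReal := by
      intro N
      rw [birkhoffAverage, birkhoffSum, inner_smul_right, inner_sum]
      congr 1
      apply Finset.sum_congr rfl
      intro k _
      simp only [id_eq, hiter k]
      rw [MeasureTheory.L2.inner_indicatorConstLp_eq_inner_setIntegral ℝ hE' (measure_ne_top μ E') (1:ℝ)]
      rw [setIntegral_indicatorConstLp hE' (hSmeas k) (measure_ne_top _ _) (1:ℝ)]
      simp [measureReal_def]
    rw [hQval] at hlim
    exact hlim.congr (fun N => hterm N)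
  -- identify c with μ H
  have hcval : c = (μ H).toReal := by
    have h1 := hces Set.univ MeasurableSet.univ
    have h2 : Tendsto (fun N : ℕ => (N:ℝ)⁻¹ * ∑ k ∈ Finset.range N, (μ ((T^[k]) ⁻¹' H ∩ Set.univ)).toReal)
        atTop (𝓝 ((μ H).toReal)) := by
      have heq : ∀ᶠ N : ℕ in atTop, (μ H).toReal
          = (N:ℝ)⁻¹ * ∑ k ∈ Finset.range N, (μ ((T^[k]) ⁻¹' H ∩ Set.univ)).toReal := by
        filter_upwards [eventually_ge_atTop 1] with N hN
        have h3 : ∀ k ∈ Finset.range N, (μ ((T^[k]) ⁻¹' H ∩ Set.univ)).toReal = (μ H).toReal := by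
          intro k _
          rw [Set.inter_univ, (hmp.iterate k).measure_preimage hH.nullMeasurableSet]
        rw [Finset.sum_congr rfl h3, Finset.sum_const, Finset.card_range, nsmul_eq_mul]
        field_simp
      exact tendsto_const_nhds.congr' heq
    have := tendsto_nhds_unique h1 h2
    simpa using this
  -- conclude
  by_contra hcon
  push_neg at hcon
  have hlt : ∀ N : ℕ, 1 ≤ N → (N:ℝ)⁻¹ * ∑ k ∈ Finset.range N, (μ ((T^[k]) ⁻¹' H ∩ E)).toReal
      ≤ (μ H).toReal * (μ E).toReal / 2 := by
    intro N hN
    have hsum : ∑ k ∈ Finset.range N, (μ ((T^[k]) ⁻¹' H ∩ E)).toReal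
        ≤ N * ((μ H).toReal * (μ E).toReal / 2) := by
      calc ∑ k ∈ Finset.range N, (μ ((T^[k]) ⁻¹' H ∩ E)).toReal
          ≤ ∑ _k ∈ Finset.range N, (μ H).toReal * (μ E).toReal / 2 := by
            apply Finset.sum_le_sum
            intro k _
            rw [Set.inter_comm]
            exact (hcon k).le
        _ = N * ((μ H).toReal * (μ E).toReal / 2) := by
            rw [Finset.sum_const, Finset.card_range, nsmul_eq_mul]
    rw [inv_mul_le_iff₀ (by positivity : (0:ℝ) < N)]
    exact hsum.trans_eq (by ring)
  have hlim := hces E hE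
  rw [hcval] at hlim
  have : (μ H).toReal * (μ E).toReal ≤ (μ H).toReal * (μ E).toReal / 2 := by
    apply le_of_tendsto hlim
    filter_upwards [eventually_ge_atTop 1] with N hN using hlt N hN
  linarith

lemma cover_iter {X : Type*} [MeasurableSpace X] (μ : Measure X) [IsProbabilityMeasure μ]
    {T : X → X} (hTerg : Ergodic T μ) {H : Set X} (hH : MeasurableSet H) (N : ℕ) :
    ∃ u : ℕ → ℕ, (μ ((⋃ i ∈ Finset.range N, (T^[u i]) ⁻¹' H))ᶜ).toReal
      ≤ (1 - (μ H).toReal / 2) ^ N := by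
  have hmp : MeasurePreserving T μ μ := hTerg.toMeasurePreserving
  have hpre : ∀ k : ℕ, MeasurableSet ((T^[k]) ⁻¹' H) :=
    fun k => hH.preimage (hmp.iterate k).measurable
  have hδ1 : (μ H).toReal ≤ 1 := by
    have := prob_le_one (μ := μ) (s := H)
    simpa using ENNReal.toReal_le_of_le_ofReal one_pos.le (by simpa using this)
  have hfac : 0 ≤ 1 - (μ H).toReal / 2 := by linarith
  induction N with
  | zero => refine ⟨fun _ => 0, ?_⟩; simp
  | succ N ih =>
    obtain ⟨u, hu⟩ := ih
    have hEmeas : MeasurableSet ((⋃ i ∈ Finset.range N, (T^[u i]) ⁻¹' H))ᶜ :=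
      (MeasurableSet.biUnion (Finset.range N).countable_toSet (fun i _ => hpre (u i))).compl
    obtain ⟨w, hw⟩ := cover_step μ hTerg hH hEmeas
    refine ⟨fun i => if i = N then w else u i, ?_⟩
    set E := ((⋃ i ∈ Finset.range N, (T^[u i]) ⁻¹' H))ᶜ with hEdef
    have hset : ((⋃ i ∈ Finset.range (N+1), (T^[if i = N then w else u i]) ⁻¹' H))ᶜ
        = E \ ((T^[w]) ⁻¹' H) := by
      rw [Finset.range_add_one, Finset.set_biUnion_insert]
      have : (⋃ i ∈ Finset.range N, (T^[if i = N then w else u i]) ⁻¹' H)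
          = ⋃ i ∈ Finset.range N, (T^[u i]) ⁻¹' H := by
        apply Set.iUnion₂_congr
        intro i hi
        rw [if_neg (Nat.ne_of_lt (Finset.mem_range.mp (by simpa using hi)))]
      rw [this, Set.compl_union, Set.inter_comm, Set.diff_eq, ← hEdef]
      simp
    rw [hset]
    have hsplit : μ (E ∩ (T^[w]) ⁻¹' H) + μ (E \ (T^[w]) ⁻¹' H) = μ E :=
      measure_inter_add_diff E (hpre w)
    have h1 : (μ (E \ (T^[w]) ⁻¹' H)).toReal
        = (μ E).toReal - (μ (E ∩ (T^[w]) ⁻¹' H)).toReal := by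
      have := congrArg ENNReal.toReal hsplit
      rw [ENNReal.toReal_add (measure_ne_top _ _) (measure_ne_top _ _)] at this
      linarith
    rw [h1]
    have h2 : (μ E).toReal - (μ (E ∩ (T^[w]) ⁻¹' H)).toReal
        ≤ (μ E).toReal * (1 - (μ H).toReal / 2) := by
      have := hw
      nlinarith [ENNReal.toReal_nonneg (a := μ E)]
    calc (μ E).toReal - (μ (E ∩ (T^[w]) ⁻¹' H)).toReal
        ≤ (μ E).toReal * (1 - (μ H).toReal / 2) := h2
      _ ≤ (1 - (μ H).toReal / 2) ^ N * (1 - (μ H).toReal / 2) :=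
          mul_le_mul_of_nonneg_right hu hfac
      _ = (1 - (μ H).toReal / 2) ^ (N+1) := by rw [pow_succ]

lemma aux_blocks (g : ℕ → ℝ) (hg : ∀ i, -1 ≤ g i) {η : ℝ} (hη0 : 0 < η) (hη1 : η < 1)
    (ℓ L : ℕ) (hL : 1 ≤ L) (hℓ : 1 ≤ ℓ)
    (hsum : η * ℓ < ∑ i ∈ Finset.range ℓ, g i) (h3L : 3 * (L:ℝ) ≤ η * ℓ) :
    ∃ k : ℕ, (k * L : ℝ) ≤ (ℓ:ℝ) ∧ (η/2) * L ≤ ∑ i ∈ Finset.range L, g (k*L + i) := by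
  by_contra hcon
  push_neg at hcon
  set q := ℓ / L + 1 with hqdef
  have hLpos : 0 < L := hL
  have hql : ℓ < q * L := by
    have h1 := Nat.div_add_mod ℓ L
    have h2 := Nat.mod_lt ℓ hLpos
    have h3 : q * L = L * (ℓ / L) + L := by rw [hqdef]; ring
    omega
  have hqu : q * L ≤ ℓ + L := by
    have h1 := Nat.div_add_mod ℓ L
    have h3 : q * L = L * (ℓ / L) + L := by rw [hqdef]; ring
    omega
  -- every block is bad
  have hbad : ∀ k, k < q → ∑ i ∈ Finset.range L, g (k*L + i) < (η/2) * L := by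
    intro k hk
    apply lt_of_not_ge
    intro h
    have hkL : ((k:ℝ) * L) ≤ ℓ := by
      have : k * L ≤ ℓ := by
        have hk' : k ≤ ℓ / L := by omega
        calc k * L ≤ (ℓ / L) * L := Nat.mul_le_mul_right L hk'
          _ ≤ ℓ := Nat.div_mul_le_self ℓ L
      exact_mod_cast this
    exact absurd h (not_le.mpr (hcon k hkL))
  -- sum over q*L splits into blocks
  have hsplit : ∑ i ∈ Finset.range (q*L), g i
      = ∑ k ∈ Finset.range q, ∑ i ∈ Finset.range L, g (k*L + i) := by
    induction q with
    | zero => simp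
    | succ q ihq =>
      rw [Finset.sum_range_succ, ← ihq]
      have h4 : (q+1) * L = q*L + L := by ring
      rw [h4, Finset.sum_range_add]
  -- lower bound for the total sum
  have hlow : η * ℓ - ((q*L - ℓ : ℕ) : ℝ) < ∑ i ∈ Finset.range (q*L), g i := by
    obtain ⟨M, hM⟩ : ∃ M, q*L = ℓ + M := ⟨q*L - ℓ, by omega⟩
    have hM2 : q*L - ℓ = M := by omega
    rw [hM2, hM, Finset.sum_range_add]
    have htail : -((M : ℕ) : ℝ) ≤ ∑ i ∈ Finset.range M, g (ℓ + i) := by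
      have := Finset.card_nsmul_le_sum (Finset.range M) (fun i => g (ℓ + i)) (-1)
        (fun i _ => hg (ℓ + i))
      simpa using this
    have := add_lt_add_of_lt_of_le hsum htail
    linarith
  -- upper bound
  have hup : ∑ i ∈ Finset.range (q*L), g i < q * ((η/2) * L) := by
    rw [hsplit]
    have hne : (Finset.range q).Nonempty := ⟨0, by simp [hqdef]⟩
    calc ∑ k ∈ Finset.range q, ∑ i ∈ Finset.range L, g (k*L + i)
        < ∑ k ∈ Finset.range q, (η/2) * L :=
          Finset.sum_lt_sum_of_nonempty hne (fun k hk => hbad k (Finset.mem_range.mp hk))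
      _ = q * ((η/2) * L) := by rw [Finset.sum_const, Finset.card_range, nsmul_eq_mul]
  -- now derive the contradiction
  have hc1 : ((q*L - ℓ : ℕ) : ℝ) ≤ (L:ℝ) := by
    have : q*L - ℓ ≤ L := by omega
    exact_mod_cast this
  have hc2 : (q:ℝ) * L ≤ (ℓ:ℝ) + L := by exact_mod_cast hqu
  have hc3 : (1:ℝ) ≤ L := by exact_mod_cast hL
  have hq1 : (1:ℝ) ≤ q := by
    have h6 : 1 ≤ q := by rw [hqdef]; exact Nat.le_add_left 1 _
    exact_mod_cast h6
  have hkey : (q:ℝ) * ((η/2) * L) = (η/2) * ((q:ℝ)*L) := by ring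
  nlinarith [hlow, hup, hc1, hc2, hc3, h3L, hη1.le, hη0.le]

lemma key_lemma {X : Type*} [MeasurableSpace X] (μ : Measure X) [IsProbabilityMeasure μ]
    (T : Equiv.Perm X) (hT : Measurable (⇑T)) (hmp : MeasurePreserving (⇑T) μ μ)
    (f : X → ℝ) (hfmeas : Measurable f) (hfge : ∀ x, -1 ≤ f x)
    (p : ℝ) (hp : 1 < p) (η : ℝ) (hη0 : 0 < η) (hη1 : η < 1)
    (α : ℝ) (hα : 12 / η^2 ≤ α)
    (mA : ℝ) (hmA : 0 < mA)
    (Bn : Set X) (hBnm : η * (α * mA) < (μ Bn).toReal)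
    (hpts : ∀ x ∈ Bn, ∃ ℓ : ℕ, η * α < (ℓ : ℝ) ∧
      η * (ℓ : ℝ) < ∑ i ∈ Finset.range ℓ, f ((T ^ i) x)) :
    ∃ L : ℕ, 1 ≤ L ∧ η^2 * α / 12 ≤ (L:ℝ) ∧
      (η^2/12)^(p-1) * (1 - ((2:ℝ)^(p-1))⁻¹) * η / ((⌊24/η⌋₊ : ℝ) + 1) * (α ^ p * mA)
        ≤ (L:ℝ)^(p-1) * (μ {y | η/2 * (L:ℝ) ≤ ∑ i ∈ Finset.range L, f ((T ^ i) y)}).toReal := by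
  classical
  have hmpp : ∀ m : ℕ, MeasurePreserving (⇑(T ^ m)) μ μ := by
    intro m; rw [Equiv.Perm.coe_pow]; exact hmp.iterate m
  have hTm : ∀ m : ℕ, Measurable (⇑(T ^ m)) := fun m => (hmpp m).measurable
  have hFmeas : ∀ L : ℕ, Measurable (fun x => ∑ i ∈ Finset.range L, f ((T ^ i) x)) := by
    intro L
    apply Finset.measurable_sum
    intro i _
    exact hfmeas.comp (hTm i)
  have hHmeas : ∀ L : ℕ, MeasurableSet {y | η/2 * (L:ℝ) ≤ ∑ i ∈ Finset.range L, f ((T ^ i) y)} :=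
    fun L => measurableSet_le measurable_const (hFmeas L)
  -- basic positivity
  have hα0 : 0 < α := lt_of_lt_of_le (by positivity) hα
  have h12 : 12 ≤ η^2 * α := by
    have h := (div_le_iff₀ (by positivity : (0:ℝ) < η^2)).mp hα
    linarith
  have hηα1 : 1 < η * α := by nlinarith [hη1, hη0]
  -- the dyadic classes
  set r : ℝ := η * α with hrdef
  set Bs : ℕ → Set X := fun j => {x | ∃ ℓ : ℕ, (2:ℝ)^j * r < (ℓ:ℝ) ∧ (ℓ:ℝ) ≤ (2:ℝ)^(j+1) * r ∧
    η * (ℓ:ℝ) < ∑ i ∈ Finset.range ℓ, f ((T ^ i) x)} with hBsdef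
  have hBsmeas : ∀ j, MeasurableSet (Bs j) := by
    intro j
    have : Bs j = ⋃ ℓ : ℕ, (if ((2:ℝ)^j * r < (ℓ:ℝ) ∧ (ℓ:ℝ) ≤ (2:ℝ)^(j+1) * r) then
        {x | η * (ℓ:ℝ) < ∑ i ∈ Finset.range ℓ, f ((T ^ i) x)} else ∅) := by
      ext x
      simp only [hBsdef, Set.mem_setOf_eq, Set.mem_iUnion]
      constructor
      · rintro ⟨ℓ, h1, h2, h3⟩
        exact ⟨ℓ, by rw [if_pos ⟨h1, h2⟩]; exact h3⟩
      · rintro ⟨ℓ, hx⟩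
        by_cases hc : ((2:ℝ)^j * r < (ℓ:ℝ) ∧ (ℓ:ℝ) ≤ (2:ℝ)^(j+1) * r)
        · rw [if_pos hc] at hx; exact ⟨ℓ, hc.1, hc.2, hx⟩
        · rw [if_neg hc] at hx; exact absurd hx (Set.notMem_empty x)
    rw [this]
    apply MeasurableSet.iUnion
    intro ℓ
    split_ifs
    · exact measurableSet_lt measurable_const (hFmeas ℓ)
    · exact MeasurableSet.empty
  -- Bn is covered by the classes
  have hcover : Bn ⊆ ⋃ j, Bs j := by
    intro x hx
    obtain ⟨ℓ, hℓ1, hℓsum⟩ := hpts x hx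
    have hr1 : 1 < r := hηα1
    have hℓpos : (0:ℝ) < ℓ := lt_trans (by positivity) hℓ1
    set P : ℕ → Prop := fun j => (2:ℝ)^j * r < (ℓ:ℝ) with hPdef
    have hP0 : P 0 := by simpa [hPdef] using hℓ1
    have hjle : Nat.findGreatest P ℓ ≤ ℓ := Nat.findGreatest_le ℓ
    set j := Nat.findGreatest P ℓ with hjdef
    have hPj : P j := Nat.findGreatest_spec (Nat.zero_le ℓ) hP0
    have hnPj : ¬ P (j+1) := by
      by_cases hc : j + 1 ≤ ℓ
      · exact Nat.findGreatest_is_greatest (Nat.lt_succ_self _) hc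
      · -- j = ℓ; but P ℓ fails since 2^ℓ ≥ ℓ + 1 > ℓ/r
        intro hP
        have hjeq : j = ℓ := le_antisymm hjle (by omega)
        rw [hjeq] at hP
        have h2ℓ : (ℓ:ℝ) < (2:ℝ)^(ℓ+1) := by
          have h1 := Nat.lt_two_pow_self (n := ℓ)
          have h2 : (ℓ:ℝ) < (2:ℝ)^ℓ := by exact_mod_cast h1
          have h3 : (2:ℝ)^(ℓ+1) = 2^ℓ * 2 := pow_succ 2 ℓ
          nlinarith [pow_pos (by norm_num : (0:ℝ) < 2) ℓ]
        have hge : (2:ℝ)^(ℓ+1) ≤ (2:ℝ)^(ℓ+1) * r := by nlinarith [pow_pos (by norm_num : (0:ℝ) < 2) (ℓ+1)]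
        linarith [hP]
    simp only [Set.mem_iUnion]
    refine ⟨j, ⟨ℓ, hPj, ?_, hℓsum⟩⟩
    simpa [hPdef, not_lt] using hnPj
  -- dyadic mass selection
  set θ : ℝ := ((2:ℝ)^(p-1))⁻¹ with hθdef
  have h2p : 1 < (2:ℝ)^(p-1) := by
    rw [Real.one_lt_rpow_iff_of_pos (by norm_num : (0:ℝ) < 2)]
    exact Or.inl ⟨one_lt_two, by linarith⟩
  have hθ0 : 0 < θ := by positivity
  have hθ1 : θ < 1 := by
    rw [hθdef, inv_lt_one_iff₀]
    right; exact h2p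
  set cp : ℝ := 1 - θ with hcpdef
  have hcp0 : 0 < cp := by simp [hcpdef]; linarith
  set s : ℝ := η * (α * mA) with hsdef
  have hs0 : 0 < s := by positivity
  obtain ⟨j, hjmass⟩ : ∃ j, cp * s * θ^j ≤ (μ (Bs j)).toReal := by
    by_contra hcon
    push_neg at hcon
    have h1 : μ Bn ≤ ∑' j, μ (Bs j) := (measure_mono hcover).trans (measure_iUnion_le _)
    have h2 : ∀ j, μ (Bs j) ≤ ENNReal.ofReal (cp * s * θ^j) := by
      intro j
      rw [ENNReal.le_ofReal_iff_toReal_le (measure_ne_top _ _) (by positivity)]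
      exact (hcon j).le
    have h3 : (∑' j, μ (Bs j)) ≤ ENNReal.ofReal s := by
      calc (∑' j, μ (Bs j)) ≤ ∑' j, ENNReal.ofReal (cp * s * θ^j) := ENNReal.tsum_le_tsum h2
        _ = ENNReal.ofReal (∑' j : ℕ, cp * s * θ^j) := by
            rw [← ENNReal.ofReal_tsum_of_nonneg (fun j => by positivity)]
            exact (summable_geometric_of_lt_one hθ0.le hθ1).mul_left _
        _ = ENNReal.ofReal s := by
            rw [tsum_mul_left, tsum_geometric_of_lt_one hθ0.le hθ1]
            congr 1
            field_simp [hcpdef]; rw [hcpdef, div_self (sub_pos.mpr hθ1).ne']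
    have h4 : (μ Bn).toReal ≤ s := by
      have := h1.trans h3
      rw [ENNReal.le_ofReal_iff_toReal_le (measure_ne_top _ _) hs0.le] at this
      exact this
    rw [hsdef] at h4
    linarith
  -- define the window length
  set L : ℕ := ⌊(2:ℝ)^j * (η^2 * α) / 6⌋₊ with hLdef
  have hx2 : (2:ℝ) ≤ (2:ℝ)^j * (η^2 * α) / 6 := by
    have h2j : (1:ℝ) ≤ (2:ℝ)^j := one_le_pow₀ one_le_two
    nlinarith
  have hL1 : 1 ≤ L := by
    rw [hLdef]
    exact Nat.le_floor (by linarith)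
  have hLle : (L:ℝ) ≤ (2:ℝ)^j * (η^2 * α) / 6 := Nat.floor_le (by linarith)
  have hLge : (2:ℝ)^j * (η^2 * α) / 12 ≤ (L:ℝ) := by
    have := Nat.sub_one_lt_floor ((2:ℝ)^j * (η^2 * α) / 6)
    rw [← hLdef] at this
    linarith
  have hLpos : (0:ℝ) < L := by linarith
  -- each point of Bs j lands in a shifted window set
  set K : ℕ := ⌊24/η⌋₊ with hKdef
  set HH : Set X := {y | η/2 * (L:ℝ) ≤ ∑ i ∈ Finset.range L, f ((T ^ i) y)} with hHHdef
  have hinc : Bs j ⊆ ⋃ k ∈ Finset.range (K+1), (⇑(T ^ (k*L)))⁻¹' HH := by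
    intro x hx
    obtain ⟨ℓ, hℓ1, hℓ2, hℓsum⟩ := hx
    have hℓpos : (1:ℕ) ≤ ℓ := by
      by_contra hc
      push_neg at hc
      interval_cases ℓ
      · have hr0 : (0:ℝ) < r := by rw [hrdef]; positivity
        simp only [Nat.cast_zero] at hℓ1
        nlinarith [pow_pos (by norm_num : (0:ℝ) < 2) j, hr0]
    obtain ⟨k, hk1, hk2⟩ := aux_blocks (fun i => f ((T ^ i) x)) (fun i => hfge _) hη0 hη1 ℓ L hL1 hℓpos
      hℓsum (by nlinarith [hℓ1])
    have hkK : k ∈ Finset.range (K+1) := by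
      rw [Finset.mem_range]
      have hk24 : (k:ℝ) ≤ 24/η := by
        have hh1 : (k:ℝ) * L ≤ (2:ℝ)^(j+1) * r := le_trans hk1 hℓ2
        have hh2 : (2:ℝ)^(j+1) * r = 2 * ((2:ℝ)^j * (η * α)) := by
          rw [hrdef, pow_succ]; ring
        rw [hh2] at hh1
        rw [le_div_iff₀ hη0]
        have hkL : (k:ℝ) * ((2:ℝ)^j * (η^2*α)/12) ≤ 2 * ((2:ℝ)^j * (η * α)) :=
          le_trans (mul_le_mul_of_nonneg_left hLge (Nat.cast_nonneg k)) hh1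
        have hX : (0:ℝ) < (2:ℝ)^j := pow_pos (by norm_num) j
        nlinarith [hkL, hX, hα0, hη0, Nat.cast_nonneg (α := ℝ) k]
      have : k ≤ K := by
        rw [hKdef]
        exact Nat.le_floor hk24
      omega
    rw [Set.mem_iUnion]
    refine ⟨k, ?_⟩
    rw [Set.mem_iUnion]
    refine ⟨hkK, ?_⟩
    rw [Set.mem_preimage, hHHdef, Set.mem_setOf_eq]
    calc η/2 * (L:ℝ) ≤ ∑ i ∈ Finset.range L, f ((T ^ (k*L + i)) x) := hk2
      _ = ∑ i ∈ Finset.range L, f ((T ^ i) ((T ^ (k*L)) x)) := by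
          apply Finset.sum_congr rfl
          intro i _
          rw [add_comm, pow_add, Equiv.Perm.mul_apply]
  -- measure bound
  have hmass : (μ (Bs j)).toReal ≤ ((K:ℝ)+1) * (μ HH).toReal := by
    have h1 : μ (Bs j) ≤ ∑ k ∈ Finset.range (K+1), μ ((⇑(T ^ (k*L)))⁻¹' HH) :=
      (measure_mono hinc).trans (measure_biUnion_finset_le _ _)
    have h2 : ∀ k ∈ Finset.range (K+1), μ ((⇑(T ^ (k*L)))⁻¹' HH) = μ HH := by
      intro k _
      exact (hmpp (k*L)).measure_preimage (hHmeas L).nullMeasurableSet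
    rw [Finset.sum_congr rfl h2, Finset.sum_const, Finset.card_range, nsmul_eq_mul] at h1
    have h3 := ENNReal.toReal_mono (ENNReal.mul_ne_top (by simp) (measure_ne_top _ _)) h1
    rw [ENNReal.toReal_mul, ENNReal.toReal_natCast] at h3
    calc (μ (Bs j)).toReal ≤ ((K+1 : ℕ):ℝ) * (μ HH).toReal := h3
      _ = ((K:ℝ)+1) * (μ HH).toReal := by push_cast; ring
  -- final algebra
  refine ⟨L, hL1, ?_, ?_⟩
  · have h2j : (1:ℝ) ≤ (2:ℝ)^j := one_le_pow₀ one_le_two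
    nlinarith
  · -- final algebra
    have hμHH : cp * s * θ^j / ((K:ℝ)+1) ≤ (μ HH).toReal := by
      have hK0 : (0:ℝ) < (K:ℝ)+1 := by positivity
      rw [div_le_iff₀ hK0]
      calc cp*s*θ^j ≤ (μ (Bs j)).toReal := hjmass
        _ ≤ ((K:ℝ)+1) * (μ HH).toReal := hmass
        _ = (μ HH).toReal * ((K:ℝ)+1) := by ring
    have hLrp : ((2:ℝ)^j * (η^2*α) / 12)^(p-1) ≤ (L:ℝ)^(p-1) :=
      Real.rpow_le_rpow (by positivity) hLge (by linarith)
    have h2pow : ((2:ℝ)^j : ℝ)^(p-1) = ((2:ℝ)^(p-1))^j := by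
      rw [← Real.rpow_natCast (2:ℝ) j, ← Real.rpow_mul (by norm_num : (0:ℝ) ≤ 2),
        mul_comm, Real.rpow_mul (by norm_num : (0:ℝ) ≤ 2), Real.rpow_natCast]
    have hid1 : ((2:ℝ)^j * (η^2*α) / 12)^(p-1)
        = ((2:ℝ)^(p-1))^j * ((η^2/12)^(p-1) * α^(p-1)) := by
      rw [show (2:ℝ)^j * (η^2*α)/12 = (2:ℝ)^j * ((η^2/12) * α) by ring]
      rw [Real.mul_rpow (by positivity) (by positivity),
        Real.mul_rpow (by positivity) hα0.le, h2pow]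
    have e1 : ((2:ℝ)^(p-1))^j * θ^j = 1 := by
      rw [hθdef, ← mul_pow, mul_inv_cancel₀ (ne_of_gt (Real.rpow_pos_of_pos (by norm_num) _)),
        one_pow]
    have e2 : α^(p-1) * α = α^p := by
      rw [show p = (p-1)+1 by ring, Real.rpow_add_one hα0.ne']
      ring_nf
    have hDmu : ((2:ℝ)^j * (η^2*α) / 12)^(p-1) * (cp * s * θ^j / ((K:ℝ)+1))
        = (η^2/12)^(p-1) * cp * η / ((K:ℝ)+1) * (α^p * mA) := by
      rw [hid1, hsdef, ← e2]
      linear_combination ((η^2/12)^(p-1) * α^(p-1) * cp * η * α * mA / ((K:ℝ)+1)) * e1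
    calc (η^2/12)^(p-1) * cp * η / ((K:ℝ)+1) * (α^p * mA)
        = ((2:ℝ)^j * (η^2*α) / 12)^(p-1) * (cp * s * θ^j / ((K:ℝ)+1)) := hDmu.symm
      _ ≤ ((2:ℝ)^j * (η^2*α) / 12)^(p-1) * (μ HH).toReal :=
          mul_le_mul_of_nonneg_left hμHH (by positivity)
      _ ≤ (L:ℝ)^(p-1) * (μ HH).toReal :=
          mul_le_mul_of_nonneg_right hLrp ENNReal.toReal_nonneg

lemma f_meas {X : Type*} [MeasurableSpace X]
    (a : ℕ → ℝ) (A : ℕ → Set X) (B : Set X) (f : X → ℝ)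
    (hAmeas : ∀ n, MeasurableSet (A n))
    (hAdisj : Pairwise (fun m n => Disjoint (A m) (A n)))
    (hBmeas : MeasurableSet B)
    (hBdisj : Disjoint B (⋃ n, A n))
    (hfA : ∀ n, ∀ x ∈ A n, f x = a n)
    (hfB : ∀ x ∈ B, f x = -1)
    (hfzero : ∀ x, x ∉ B → x ∉ ⋃ n, A n → f x = 0) :
    Measurable f := by
  classical
  have key : ∀ x, Tendsto (fun N => ∑ n ∈ Finset.range N, (A n).indicator (fun _ => a n) x)
      atTop (𝓝 (f x + B.indicator (fun _ => (1:ℝ)) x)) := by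
    intro x
    by_cases hxB : x ∈ B
    · have hxA : ∀ n, x ∉ A n := by
        intro n hn
        exact Set.disjoint_left.mp hBdisj hxB (Set.mem_iUnion.mpr ⟨n, hn⟩)
      have : ∀ N, ∑ n ∈ Finset.range N, (A n).indicator (fun _ => a n) x = 0 := by
        intro N
        apply Finset.sum_eq_zero
        intro n _
        exact Set.indicator_of_notMem (hxA n) _
      rw [hfB x hxB, Set.indicator_of_mem hxB]
      simp only [this]
      norm_num
    · by_cases hxU : x ∈ ⋃ n, A n
      · obtain ⟨m, hm⟩ := Set.mem_iUnion.mp hxU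
        have hxA : ∀ n, n ≠ m → x ∉ A n := by
          intro n hn hx
          exact Set.disjoint_left.mp (hAdisj hn) hx hm
        rw [hfA m x hm, Set.indicator_of_notMem hxB]
        rw [add_zero]
        apply tendsto_atTop_of_eventually_const (i₀ := m+1)
        intro N hN
        rw [Finset.sum_eq_single m]
        · exact Set.indicator_of_mem hm _
        · intro n _ hn
          exact Set.indicator_of_notMem (hxA n hn) _
        · intro h
          exact absurd (Finset.mem_range.mpr (by omega)) h
      · have hxA : ∀ n, x ∉ A n := fun n hn => hxU (Set.mem_iUnion.mpr ⟨n, hn⟩)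
        have : ∀ N, ∑ n ∈ Finset.range N, (A n).indicator (fun _ => a n) x = 0 := by
          intro N
          apply Finset.sum_eq_zero
          intro n _
          exact Set.indicator_of_notMem (hxA n) _
        rw [hfzero x hxB hxU, Set.indicator_of_notMem hxB]
        simp only [this]
        norm_num
  have hg : Measurable (fun x => f x + B.indicator (fun _ => (1:ℝ)) x) := by
    apply measurable_of_tendsto_metrizable
      (f := fun N x => ∑ n ∈ Finset.range N, (A n).indicator (fun _ => a n) x)
    · intro N
      apply Finset.measurable_sum
      intro n _
      exact Measurable.indicator measurable_const (hAmeas n)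
    · rw [tendsto_pi_nhds]
      exact key
  have : f = fun x => (f x + B.indicator (fun _ => (1:ℝ)) x) - B.indicator (fun _ => (1:ℝ)) x := by
    funext x; ring
  rw [this]
  exact hg.sub (Measurable.indicator measurable_const hBmeas)


/-- Main lemma for bad moving averages of functions in the class `F_p`: if `f ∈ F_p`
(given by data `(a_n, A_n, B)`) and there is `0 < η < 1` such that for every `n` there is
a set `B_n` with `μ(B_n) > η a_n μ(A_n)` on which ergodic sums of length some
`ℓ_x > η a_n` exceed `η ℓ_x`, then there is a moving average `(v_n, L_n)` with
`L_n ≥ n^{1/(p-1)}` whose averages of `f` have strictly positive limsup almost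
everywhere. -/
theorem stmt16
    {X : Type*} [MeasurableSpace X] [StandardBorelSpace X]
    (μ : Measure X) [IsProbabilityMeasure μ] [NullSingletonClass μ]
    (T : Equiv.Perm X) (hT : Measurable (⇑T)) (hT' : Measurable (⇑T.symm))
    (hTerg : Ergodic (⇑T) μ)
    (p : ℝ) (hp : 1 < p)
    -- the data defining a function `f` of class `F_p`
    (a : ℕ → ℝ) (A : ℕ → Set X) (B : Set X) (f : X → ℝ)
    (ha2 : ∀ n, 2 < a n)
    (hasuper : ∀ d : ℝ, 0 < d → Tendsto (fun n : ℕ => a n / (n : ℝ) ^ d) atTop atTop)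
    (hAmeas : ∀ n, MeasurableSet (A n))
    (hApos : ∀ n, 0 < μ (A n))
    (hAdisj : Pairwise (fun m n => Disjoint (A m) (A n)))
    (hasummable : Summable (fun n : ℕ => a n * (μ (A n)).toReal))
    (hhalf : (∑' n : ℕ, a n * (μ (A n)).toReal) ≤ 1 / 2)
    (hBmeas : MeasurableSet B)
    (hBdisj : Disjoint B (⋃ n, A n))
    (hBmass : (μ B).toReal = ∑' n : ℕ, a n * (μ (A n)).toReal)
    (hfA : ∀ n, ∀ x ∈ A n, f x = a n)
    (hfB : ∀ x ∈ B, f x = -1)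
    (hfzero : ∀ x, x ∉ B → x ∉ ⋃ n, A n → f x = 0)
    (hFp : Tendsto (fun n : ℕ => a n ^ p * (μ (A n)).toReal) atTop atTop)
    -- the hypothesis of the lemma
    (η : ℝ) (hη0 : 0 < η) (hη1 : η < 1)
    (hBn : ∀ n : ℕ, ∃ Bn : Set X, MeasurableSet Bn ∧
      η * (a n * (μ (A n)).toReal) < (μ Bn).toReal ∧
      ∀ x ∈ Bn, ∃ ℓ : ℕ, η * a n < (ℓ : ℝ) ∧
        η * (ℓ : ℝ) < ∑ i ∈ Finset.range ℓ, f ((T ^ i) x)) :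
    ∃ (v : ℕ → ℤ) (L : ℕ → ℕ), (∀ n, 0 < L n) ∧
      (∀ n : ℕ, (n : ℝ) ^ (1 / (p - 1)) ≤ (L n : ℝ)) ∧
      ∀ᵐ x ∂μ, ∃ c : ℝ, 0 < c ∧ ∃ᶠ n in atTop,
        c ≤ ((L n : ℝ))⁻¹ * ∑ i ∈ Finset.range (L n), f ((T ^ (v n + 1 + (i : ℤ))) x) := by
  classical
  have hmp : MeasurePreserving (⇑T) μ μ := hTerg.toMeasurePreserving
  have hfmeas : Measurable f := f_meas a A B f hAmeas hAdisj hBmeas hBdisj hfA hfB hfzero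
  have hfge : ∀ x, -1 ≤ f x := by
    intro x
    by_cases hxB : x ∈ B
    · rw [hfB x hxB]
    · by_cases hxU : x ∈ ⋃ n, A n
      · obtain ⟨m, hm⟩ := Set.mem_iUnion.mp hxU
        rw [hfA m x hm]; linarith [ha2 m]
      · rw [hfzero x hxB hxU]; norm_num
  have hmpp : ∀ m : ℕ, MeasurePreserving (⇑(T ^ m)) μ μ := by
    intro m; rw [Equiv.Perm.coe_pow]; exact hmp.iterate m
  have hFmeas : ∀ L : ℕ, Measurable (fun x => ∑ i ∈ Finset.range L, f ((T ^ i) x)) := by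
    intro L
    apply Finset.measurable_sum
    intro i _
    exact hfmeas.comp (hmpp i).measurable
  have hHmeas : ∀ L : ℕ, MeasurableSet {y | η/2 * (L:ℝ) ≤ ∑ i ∈ Finset.range L, f ((T ^ i) y)} :=
    fun L => measurableSet_le measurable_const (hFmeas L)
  have hpexp : (0:ℝ) < 1/(p-1) := div_pos one_pos (by linarith)
  -- a n → ∞
  have haTop : Tendsto a atTop atTop := by
    rw [tendsto_atTop]
    intro C
    filter_upwards [tendsto_atTop.mp (hasuper 1 one_pos) (max C 1), eventually_ge_atTop 1]
      with n hn hn1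
    have hnpos : (0:ℝ) < (n:ℝ) := by exact_mod_cast hn1
    have h1 : (1:ℝ) ≤ (n:ℝ) := by exact_mod_cast hn1
    have h2 : max C 1 * (n:ℝ)^(1:ℝ) ≤ a n := (le_div_iff₀ (by positivity)).mp hn
    rw [Real.rpow_one] at h2
    have h3 : max C 1 ≤ max C 1 * (n:ℝ) := by nlinarith [le_max_right C 1]
    calc C ≤ max C 1 := le_max_left C 1
      _ ≤ max C 1 * (n:ℝ) := h3
      _ ≤ a n := h2
  -- the constant C₂ and the potential
  set C₂ : ℝ := (η^2/12)^(p-1) * (1 - ((2:ℝ)^(p-1))⁻¹) * η / ((⌊24/η⌋₊ : ℝ)+1) with hC2def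
  have h2p : 1 < (2:ℝ)^(p-1) := by
    rw [Real.one_lt_rpow_iff_of_pos (by norm_num : (0:ℝ) < 2)]
    exact Or.inl ⟨one_lt_two, by linarith⟩
  have hC2pos : 0 < C₂ := by
    rw [hC2def]
    have h1 : (0:ℝ) < (η^2/12)^(p-1) := Real.rpow_pos_of_pos (by positivity) _
    have h2 : (0:ℝ) < 1 - ((2:ℝ)^(p-1))⁻¹ := by
      have : ((2:ℝ)^(p-1))⁻¹ < 1 := by
        rw [inv_lt_one_iff₀]; right; exact h2p
      linarith
    positivity
  have hPot : Tendsto (fun n => C₂ * (a n ^ p * (μ (A n)).toReal)) atTop atTop :=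
    hFp.const_mul_atTop hC2pos
  -- segment construction
  have SEG : ∀ r m₀ : ℕ, ∃ (N L : ℕ) (u : ℕ → ℕ), 1 ≤ N ∧ 1 ≤ L ∧
      ((m₀ + N : ℕ) : ℝ) ^ (1/(p-1)) ≤ (L:ℝ) ∧
      (μ ((⋃ i ∈ Finset.range N, (⇑(T ^ (u i)))⁻¹'
        {y | η/2 * (L:ℝ) ≤ ∑ i' ∈ Finset.range L, f ((T ^ i') y)})ᶜ)).toReal ≤ (1/2:ℝ)^r := by
    intro r m₀
    obtain ⟨n, hn1, hn2⟩ : ∃ n, 12/η^2 ≤ a n ∧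
        (m₀ : ℝ) + 2*r + 3 ≤ C₂ * (a n ^ p * (μ (A n)).toReal) := by
      have e1 := haTop.eventually_ge_atTop (12/η^2)
      have e2 := hPot.eventually_ge_atTop ((m₀:ℝ) + 2*r + 3)
      exact (e1.and e2).exists
    obtain ⟨Bn, hBnmeas, hBnm, hpts⟩ := hBn n
    have hmA : 0 < (μ (A n)).toReal := ENNReal.toReal_pos (hApos n).ne' (measure_ne_top _ _)
    obtain ⟨L, hL1, hLge, hKey⟩ := key_lemma μ T hT hmp f hfmeas hfge p hp η hη0 hη1
      (a n) hn1 _ hmA Bn hBnm hpts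
    set HH := {y | η/2 * (L:ℝ) ≤ ∑ i' ∈ Finset.range L, f ((T ^ i') y)} with hHHdef
    set δ : ℝ := (μ HH).toReal with hδdef
    have hLpos : (0:ℝ) < L := by
      have : (1:ℝ) ≤ (L:ℝ) := by exact_mod_cast hL1
      linarith
    have hLrpos : (0:ℝ) < (L:ℝ)^(p-1) := Real.rpow_pos_of_pos hLpos _
    have hPotpos : (0:ℝ) < C₂ * (a n ^ p * (μ (A n)).toReal) := by
      have : (0:ℝ) < a n ^ p := Real.rpow_pos_of_pos (by linarith [ha2 n]) _
      positivity
    have hδpos : 0 < δ := by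
      by_contra hc
      push_neg at hc
      have : (L:ℝ)^(p-1) * δ ≤ 0 := mul_nonpos_of_nonneg_of_nonpos hLrpos.le hc
      nlinarith [hKey]
    have hδ1 : δ ≤ 1 := by
      rw [hδdef]
      exact ENNReal.toReal_le_of_le_ofReal one_pos.le (by simpa using prob_le_one (μ := μ) (s := HH))
    set N : ℕ := ⌈(2*(r:ℝ)+2)/δ⌉₊ with hNdef
    have hN1 : 1 ≤ N := by
      rw [hNdef]
      exact Nat.one_le_iff_ne_zero.mpr (by
        simp only [ne_eq, Nat.ceil_eq_zero, not_le]
        positivity)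
    obtain ⟨u, hu⟩ := cover_iter μ hTerg (hHmeas L) N
    refine ⟨N, L, u, hN1, hL1, ?_, ?_⟩
    · -- budget
      have hNδ : (N:ℝ) * δ ≤ 2*(r:ℝ)+2+δ := by
        have h := (Nat.ceil_lt_add_one (by positivity : (0:ℝ) ≤ (2*(r:ℝ)+2)/δ))
        calc (N:ℝ) * δ ≤ ((2*(r:ℝ)+2)/δ + 1) * δ :=
              mul_le_mul_of_nonneg_right h.le hδpos.le
          _ = 2*(r:ℝ)+2+δ := by field_simp
      have hLp : (m₀:ℝ) + 2*r + 3 ≤ (L:ℝ)^(p-1) * δ := le_trans hn2 hKey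
      have hmN : ((m₀ + N : ℕ):ℝ) ≤ (L:ℝ)^(p-1) := by
        push_cast
        nlinarith [hNδ, hLp, hδpos, hδ1, Nat.cast_nonneg (α := ℝ) m₀]
      calc ((m₀ + N : ℕ):ℝ) ^ (1/(p-1)) ≤ ((L:ℝ)^(p-1)) ^ (1/(p-1)) :=
            Real.rpow_le_rpow (by positivity) hmN hpexp.le
        _ = (L:ℝ) := by
            rw [one_div, Real.rpow_rpow_inv hLpos.le (by linarith : p - 1 ≠ 0)]
    · -- covering estimate
      have hcov2 : (1 - δ/2)^N ≤ (1/2:ℝ)^r := by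
        have hδ2 : (0:ℝ) ≤ 1 - δ/2 := by linarith
        have hstep : (1 - δ/2) ≤ Real.exp (-(δ/2)) := by
          have := Real.add_one_le_exp (-(δ/2))
          linarith
        have h1 : (1 - δ/2)^N ≤ Real.exp (-(δ/2))^N := pow_le_pow_left₀ hδ2 hstep N
        have h2 : Real.exp (-(δ/2))^N = Real.exp ((N:ℝ) * (-(δ/2))) :=
          (Real.exp_nat_mul _ N).symm
        have hNd : 2*(r:ℝ)+2 ≤ (N:ℝ)*δ := by
          have h := Nat.le_ceil ((2*(r:ℝ)+2)/δ)
          rw [← hNdef] at h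
          rw [div_le_iff₀ hδpos] at h
          linarith
        have h3 : (N:ℝ) * (-(δ/2)) ≤ -((r:ℝ)+1) := by nlinarith
        have h4 : Real.exp ((N:ℝ) * (-(δ/2))) ≤ Real.exp (-((r:ℝ)+1)) :=
          Real.exp_le_exp.mpr h3
        have h5 : Real.exp (-((r:ℝ)+1)) ≤ (1/2:ℝ)^(r+1) := by
          have ha : (2:ℝ)^(r+1) ≤ Real.exp ((r:ℝ)+1) := by
            have hb : Real.exp ((r:ℝ)+1) = Real.exp 1 ^ (r+1) := by
              rw [← Real.exp_nat_mul]
              norm_num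
            rw [hb]
            exact pow_le_pow_left₀ (by norm_num) (by linarith [Real.add_one_le_exp 1]) _
          rw [Real.exp_neg, show ((1:ℝ)/2)^(r+1) = ((2:ℝ)^(r+1))⁻¹ by rw [one_div, inv_pow]]
          exact inv_anti₀ (by positivity) ha
        have h6 : ((1:ℝ)/2)^(r+1) ≤ (1/2:ℝ)^r :=
          pow_le_pow_of_le_one (by norm_num) (by norm_num) (by omega)
        calc (1 - δ/2)^N ≤ Real.exp (-(δ/2))^N := h1
          _ = Real.exp ((N:ℝ) * (-(δ/2))) := h2
          _ ≤ Real.exp (-((r:ℝ)+1)) := h4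
          _ ≤ (1/2:ℝ)^(r+1) := h5
          _ ≤ (1/2:ℝ)^r := h6
      refine le_trans ?_ hcov2
      have hconv : (⋃ i ∈ Finset.range N, (⇑(T ^ (u i)))⁻¹' HH)
          = ⋃ i ∈ Finset.range N, ((⇑T)^[u i])⁻¹' HH := by
        apply Set.iUnion₂_congr
        intro i _
        rw [Equiv.Perm.coe_pow]
      rw [hconv]
      exact hu
  -- global assembly
  choose Ns Ls us hN1seg hL1seg hbud hcovseg using SEG
  set mseq : ℕ → ℕ := fun r => Nat.rec 0 (fun r' mr => mr + Ns r' mr) r with hmseqdef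
  have hmseq0 : mseq 0 = 0 := rfl
  have hmseqS : ∀ r, mseq (r+1) = mseq r + Ns r (mseq r) := fun r => rfl
  have hrle : ∀ r, r ≤ mseq r := by
    intro r
    induction r with
    | zero => simp
    | succ r ih =>
      have := hN1seg r (mseq r)
      rw [hmseqS]
      omega
  have hmono : Monotone mseq := monotone_nat_of_le_succ (fun r => by
    rw [hmseqS]; omega)
  set rnd : ℕ → ℕ := fun m => Nat.findGreatest (fun r => mseq r ≤ m) m with hrnddef
  have hrnd1 : ∀ m, mseq (rnd m) ≤ m := by
    intro m
    have h := Nat.findGreatest_spec (P := fun r => mseq r ≤ m) (Nat.zero_le m)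
      (by simpa [hmseq0] using Nat.zero_le m)
    simpa using h
  have hrnd2 : ∀ m, m < mseq (rnd m + 1) := by
    intro m
    by_cases h : rnd m + 1 ≤ m
    · have h3 : ¬ mseq (rnd m + 1) ≤ m := by
        have h4 := Nat.findGreatest_is_greatest (P := fun r => mseq r ≤ m)
          (n := m) (k := rnd m + 1) (Nat.lt_succ_self _) h
        simpa using h4
      omega
    · have h2 := hrle (rnd m + 1)
      omega
  have hrndeq : ∀ r i, i < Ns r (mseq r) → rnd (mseq r + i) = r := by
    intro r i hi
    apply le_antisymm
    · by_contra hc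
      push_neg at hc
      have h1 : mseq (r+1) ≤ mseq (rnd (mseq r + i)) := hmono hc
      have h2 := hrnd1 (mseq r + i)
      rw [hmseqS] at h1
      omega
    · have h5 := Nat.le_findGreatest (P := fun r' => mseq r' ≤ mseq r + i)
        (m := r) (n := mseq r + i)
        (le_trans (hrle r) (Nat.le_add_right _ _)) (Nat.le_add_right _ _)
      simpa using h5
  refine ⟨fun m => (us (rnd m) (mseq (rnd m)) (m - mseq (rnd m)) : ℤ) - 1,
    fun m => Ls (rnd m) (mseq (rnd m)), fun m => hL1seg _ _, ?_, ?_⟩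
  · -- budget
    intro m
    have h1 : m < mseq (rnd m) + Ns (rnd m) (mseq (rnd m)) := by
      have h := hrnd2 m; rw [hmseqS] at h; exact h
    have h2 : (m:ℝ) ≤ ((mseq (rnd m) + Ns (rnd m) (mseq (rnd m)) : ℕ):ℝ) := by
      exact_mod_cast h1.le
    calc (m:ℝ)^(1/(p-1)) ≤ ((mseq (rnd m) + Ns (rnd m) (mseq (rnd m)) : ℕ):ℝ)^(1/(p-1)) :=
          Real.rpow_le_rpow (Nat.cast_nonneg m) h2 hpexp.le
      _ ≤ _ := hbud _ _
  · -- a.e. statement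
    set W : ℕ → Set X := fun r => ⋃ i ∈ Finset.range (Ns r (mseq r)),
      (⇑(T ^ (us r (mseq r) i)))⁻¹'
        {y | η/2 * ((Ls r (mseq r) : ℕ):ℝ) ≤ ∑ i' ∈ Finset.range (Ls r (mseq r)), f ((T ^ i') y)}
      with hWdef
    have hWm : ∀ r, μ ((W r)ᶜ) ≤ ENNReal.ofReal ((1/2:ℝ)^r) := by
      intro r
      rw [ENNReal.le_ofReal_iff_toReal_le (measure_ne_top _ _) (by positivity)]
      exact hcovseg r (mseq r)
    have hsumfin : (∑' r, μ ((W r)ᶜ)) ≠ ⊤ := by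
      have h1 : (∑' r, μ ((W r)ᶜ)) ≤ ∑' r : ℕ, ENNReal.ofReal ((1/2:ℝ)^r) :=
        ENNReal.tsum_le_tsum hWm
      have h2 : (∑' r : ℕ, ENNReal.ofReal ((1/2:ℝ)^r)) = ENNReal.ofReal (∑' r : ℕ, (1/2:ℝ)^r) := by
        rw [← ENNReal.ofReal_tsum_of_nonneg (fun r => by positivity)]
        exact summable_geometric_of_lt_one (by norm_num) (by norm_num)
      exact ne_top_of_le_ne_top (by rw [h2]; exact ENNReal.ofReal_ne_top) h1
    have hBC := measure_limsup_atTop_eq_zero (μ := μ) (s := fun r => (W r)ᶜ) hsumfin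
    have hae : ∀ᵐ x ∂μ, x ∉ limsup (fun r => (W r)ᶜ) atTop := by
      rw [← compl_mem_ae_iff] at hBC
      exact hBC
    filter_upwards [hae] with x hx
    refine ⟨η/2, by positivity, ?_⟩
    have hev : ∀ᶠ r in atTop, x ∈ W r := by
      rw [mem_limsup_iff_frequently_mem, Filter.not_frequently] at hx
      filter_upwards [hx] with r hr
      simpa using hr
    rw [frequently_atTop]
    intro M
    obtain ⟨r, hrge, hxr⟩ := ((eventually_ge_atTop M).and hev).exists
    rw [hWdef] at hxr
    simp only [Set.mem_iUnion] at hxr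
    obtain ⟨i, hiN, hxi⟩ := hxr
    rw [Finset.mem_range] at hiN
    refine ⟨mseq r + i, le_trans hrge (le_trans (hrle r) (Nat.le_add_right _ _)), ?_⟩
    have hre : rnd (mseq r + i) = r := hrndeq r i hiN
    simp only [hre, Nat.add_sub_cancel_left]
    set L' : ℕ := Ls r (mseq r) with hL'def
    set u' : ℕ := us r (mseq r) i with hu'def
    have hL'pos : (0:ℝ) < (L':ℝ) := by
      have := hL1seg r (mseq r)
      rw [← hL'def] at this
      exact_mod_cast this
    have hxi2 : η/2 * (L':ℝ) ≤ ∑ i' ∈ Finset.range L', f ((T ^ i') ((T ^ u') x)) := by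
      rw [Set.mem_preimage, Set.mem_setOf_eq] at hxi
      exact hxi
    have hterm : ∀ i' : ℕ, f ((T ^ ((u' : ℤ) - 1 + 1 + (i' : ℤ))) x)
        = f ((T ^ i') ((T ^ u') x)) := by
      intro i'
      have h1 : ((u' : ℤ) - 1 + 1 + (i' : ℤ)) = ((u' + i' : ℕ) : ℤ) := by push_cast; ring
      rw [h1, zpow_natCast, add_comm u' i', pow_add, Equiv.Perm.mul_apply]
    have hsumeq : ∑ i' ∈ Finset.range L', f ((T ^ ((u' : ℤ) - 1 + 1 + (i' : ℤ))) x)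
        = ∑ i' ∈ Finset.range L', f ((T ^ i') ((T ^ u') x)) :=
      Finset.sum_congr rfl (fun i' _ => hterm i')
    rw [hsumeq]
    rw [le_inv_mul_iff₀ hL'pos]
    calc (L':ℝ) * (η/2) = η/2 * (L':ℝ) := by ring
      _ ≤ _ := hxi2
end
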